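/- arXiv:1311.7167 — 12 statements merged into one kernel-verified Lean document; each statement's English description precedes it below -/
import Mathlib

section
/- Let n ≥ 1 and let T : ℝⁿ → ℝⁿ be a linear map such that ‖T x‖₁ = ‖x‖₁ for every x ∈ ℝⁿ. Then there exist a permutation σ of {1,…,n} and signs ε₁,…,εₙ ∈ {−1,+1} such that T eₖ = εₖ e_{σ(k)} for every k, where e₁,…,eₙ denotes the standard basis of ℝⁿ. In other words, every linear isometry of ℝⁿ with respect to the one-norm is a composition of a coordinate permutation and sign changes of coordinates. -/
/-- Every linear isometry of `ℝⁿ` with respect to the one-norm is a composition of a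
coordinate permutation and sign changes of coordinates. -/
theorem one_norm_isometry_is_signed_permutation (n : ℕ) (hn : 1 ≤ n)
    (T : (Fin n → ℝ) →ₗ[ℝ] (Fin n → ℝ))
    (hT : ∀ x : Fin n → ℝ, ∑ j, |T x j| = ∑ j, |x j|) :
    ∃ (σ : Equiv.Perm (Fin n)) (ε : Fin n → ℝ),
      (∀ k, ε k = 1 ∨ ε k = -1) ∧
      ∀ k, T (Pi.single k 1) = ε k • (Pi.single (σ k) 1 : Fin n → ℝ) := by
  set a : Fin n → Fin n → ℝ := fun k j => T (Pi.single k 1) j with ha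
  -- each column has one-norm 1
  have hsum1 : ∀ k, ∑ j, |a k j| = 1 := by
    intro k
    have := hT (Pi.single k 1)
    simpa [Pi.single_apply, apply_ite abs] using this
  -- disjoint supports
  have hdisj : ∀ k l, k ≠ l → ∀ j, a k j = 0 ∨ a l j = 0 := by
    intro k l hkl
    have hplus : ∑ j, |a k j + a l j| = 2 := by
      have h1 := hT (Pi.single k 1 + Pi.single l 1)
      have h2 : ∑ j, |(Pi.single k 1 + Pi.single l 1 : Fin n → ℝ) j| = 2 := by
        have : ∀ j, |(Pi.single k 1 + Pi.single l 1 : Fin n → ℝ) j|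
            = (Pi.single k 1 : Fin n → ℝ) j + (Pi.single l 1 : Fin n → ℝ) j := by
          intro j
          simp only [Pi.add_apply, Pi.single_apply]
          split_ifs with h h' h' <;> simp_all <;> norm_num
        rw [Finset.sum_congr rfl fun j _ => this j, Finset.sum_add_distrib]
        simp
        norm_num
      rw [h2] at h1
      simpa [map_add] using h1
    have hminus : ∑ j, |a k j - a l j| = 2 := by
      have h1 := hT (Pi.single k 1 - Pi.single l 1)
      have h2 : ∑ j, |(Pi.single k 1 - Pi.single l 1 : Fin n → ℝ) j| = 2 := by
        have : ∀ j, |(Pi.single k 1 - Pi.single l 1 : Fin n → ℝ) j|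
            = (Pi.single k 1 : Fin n → ℝ) j + (Pi.single l 1 : Fin n → ℝ) j := by
          intro j
          simp only [Pi.sub_apply, Pi.single_apply]
          split_ifs with h h' h' <;> simp_all <;> norm_num
        rw [Finset.sum_congr rfl fun j _ => this j, Finset.sum_add_distrib]
        simp
        norm_num
      rw [h2] at h1
      simpa [map_sub] using h1
    have hle : ∀ j ∈ Finset.univ, |a k j + a l j| + |a k j - a l j|
        ≤ 2 * |a k j| + 2 * |a l j| := by
      intro j _
      have := abs_add_le (a k j) (a l j)
      have := abs_sub (a k j) (a l j)
      linarith
    have hsumeq : ∑ j, (|a k j + a l j| + |a k j - a l j|)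
        = ∑ j, (2 * |a k j| + 2 * |a l j|) := by
      rw [Finset.sum_add_distrib, hplus, hminus, Finset.sum_add_distrib,
        ← Finset.mul_sum, ← Finset.mul_sum, hsum1, hsum1]
      norm_num
    have heq := (Finset.sum_eq_sum_iff_of_le hle).mp hsumeq
    intro j
    have h := heq j (Finset.mem_univ j)
    set A := a k j; set B := a l j
    have h1 : |A + B| = |A| + |B| := by
      have := abs_add_le A B
      have := abs_sub A B
      linarith
    have h2 : |A - B| = |A| + |B| := by
      have := abs_add_le A B
      have := abs_sub A B
      linarith
    have e1 : (A + B)^2 = (|A| + |B|)^2 := by rw [← h1, sq_abs]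
    have e2 : (A - B)^2 = (|A| + |B|)^2 := by rw [← h2, sq_abs]
    have hAB : |A| * |B| = 0 := by nlinarith [sq_abs A, sq_abs B]
    rcases mul_eq_zero.mp hAB with h | h
    · exact Or.inl (abs_eq_zero.mp h)
    · exact Or.inr (abs_eq_zero.mp h)
  -- supports
  set s : Fin n → Finset (Fin n) := fun k => Finset.univ.filter (fun j => a k j ≠ 0) with hs
  have hne : ∀ k, (s k).Nonempty := by
    intro k
    rw [Finset.filter_nonempty_iff]
    by_contra h
    push_neg at h
    have : ∑ j, |a k j| = 0 := by
      apply Finset.sum_eq_zero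
      intro j hj
      simp [h j hj]
    rw [hsum1 k] at this; norm_num at this
  have hdisj' : ∀ k l, k ≠ l → Disjoint (s k) (s l) := by
    intro k l hkl
    rw [Finset.disjoint_left]
    intro j hjk hjl
    simp only [hs, Finset.mem_filter] at hjk hjl
    rcases hdisj k l hkl j with h | h
    · exact hjk.2 h
    · exact hjl.2 h
  have hcard : ∀ k, (s k).card = 1 := by
    have hsum_le : ∑ k, (s k).card ≤ n := by
      rw [← Finset.card_biUnion (fun k _ => fun l _ hkl => hdisj' k l hkl)]
      have h2 := Finset.card_le_univ (Finset.univ.biUnion s)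
      simpa using h2
    have hone_le : ∀ k ∈ Finset.univ, 1 ≤ (s k).card :=
      fun k _ => Finset.card_pos.mpr (hne k)
    have hn' : ∑ _k : Fin n, 1 = n := by simp
    have hsum_eq : ∑ _k : Fin n, 1 = ∑ k, (s k).card :=
      le_antisymm (Finset.sum_le_sum hone_le) (by rw [hn']; exact hsum_le)
    intro k
    have := (Finset.sum_eq_sum_iff_of_le hone_le).mp hsum_eq k (Finset.mem_univ k)
    omega
  choose j hj using fun k => Finset.card_eq_one.mp (hcard k)
  have hmem : ∀ k, a k (j k) ≠ 0 := by
    intro k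
    have : j k ∈ s k := by rw [hj k]; exact Finset.mem_singleton_self _
    simpa [hs] using this
  have hzero : ∀ k, ∀ i, i ≠ j k → a k i = 0 := by
    intro k i hi
    by_contra h
    have : i ∈ s k := by simp [hs, h]
    rw [hj k, Finset.mem_singleton] at this
    exact hi this
  have hinj : Function.Injective j := by
    intro k l h
    by_contra hkl
    rcases hdisj k l hkl (j k) with h' | h'
    · exact hmem k h'
    · rw [h] at h'; exact hmem l h'
  let σ : Equiv.Perm (Fin n) := Equiv.ofBijective j (Finite.injective_iff_bijective.mp hinj)
  refine ⟨σ, fun k => a k (j k), ?_, ?_⟩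
  · intro k
    have habs : |a k (j k)| = 1 := by
      have := hsum1 k
      rw [Finset.sum_eq_single (j k)] at this
      · exact this
      · intro i _ hi; rw [hzero k i hi]; simp
      · intro h; exact absurd (Finset.mem_univ _) h
    rcases abs_eq (by norm_num : (0:ℝ) ≤ 1) |>.mp habs with h | h
    · exact Or.inl h
    · exact Or.inr h
  · intro k
    funext i
    show a k i = _
    simp only [Pi.smul_apply, Pi.single_apply, smul_eq_mul]
    have : σ k = j k := rfl
    rw [this]
    by_cases hi : i = j k
    · subst hi; simp
    · rw [hzero k i hi]
      rw [if_neg hi]; ring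
end

section
/- Let q, m ≥ 1 and let s = (s₁,…,s_m) ∈ ℤ^m and s' = (s'₁,…,s'_m) ∈ ℤ^m with every sⱼ and every s'ⱼ coprime to q. Then the congruence lattices 𝓛(q;s₁,…,s_m) and 𝓛(q;s'₁,…,s'_m) are ‖·‖₁-isometric if and only if there exist a permutation σ of {1,…,m}, signs ε₁,…,ε_m ∈ {−1,+1}, and an integer t coprime to q such that s'_{σ(j)} ≡ t εⱼ sⱼ (mod q) for all 1 ≤ j ≤ m. -/
/-- The congruence lattice `𝓛(q; s₁, …, s_m) = {a ∈ ℤ^m : ∑ aⱼsⱼ ≡ 0 (mod q)}`. -/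
def congLat (q m : ℕ) (s : Fin m → ℤ) : Set (Fin m → ℤ) :=
  {a | (q : ℤ) ∣ ∑ j, a j * s j}

/-- The image of a subset of `ℤ^m` inside `ℝ^m`. -/
def intCastImg {m : ℕ} (L : Set (Fin m → ℤ)) : Set (Fin m → ℝ) :=
  (fun (a : Fin m → ℤ) (j : Fin m) => (a j : ℝ)) '' L

/-- Two subsets of `ℤ^m` are `‖·‖₁`-isometric if some linear bijection of `ℝ^m`
preserving the one-norm maps one onto the other. -/
def OneNormIsometric {m : ℕ} (L L' : Set (Fin m → ℤ)) : Prop :=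
  ∃ T : (Fin m → ℝ) ≃ₗ[ℝ] (Fin m → ℝ),
    (∀ x : Fin m → ℝ, ∑ j, |T x j| = ∑ j, |x j|) ∧
    T '' (intCastImg L) = intCastImg L'

/-! ### Auxiliary lemmas -/

lemma aux_abs_add_add_abs_sub (a b : ℝ) :
    |a + b| + |a - b| = |a| + |b| + |(|a| - |b|)| := by
  rcases abs_cases (a+b) with ⟨h1,h1'⟩|⟨h1,h1'⟩ <;>
  rcases abs_cases (a-b) with ⟨h2,h2'⟩|⟨h2,h2'⟩ <;>
  rcases abs_cases a with ⟨h3,h3'⟩|⟨h3,h3'⟩ <;>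
  rcases abs_cases b with ⟨h4,h4'⟩|⟨h4,h4'⟩ <;>
  rcases abs_cases (|a|-|b|) with ⟨h5,h5'⟩|⟨h5,h5'⟩ <;> linarith

lemma aux_zero_of_abs_eq (a b : ℝ) (h : |(|a| - |b|)| = |a| + |b|) : a = 0 ∨ b = 0 := by
  rcases le_total |a| |b| with hle|hle
  · left
    have : |a| = 0 := by rw [abs_of_nonpos (by linarith)] at h; linarith
    exact abs_eq_zero.mp this
  · right
    have : |b| = 0 := by rw [abs_of_nonneg (by linarith)] at h; linarith
    exact abs_eq_zero.mp this

lemma aux_single_abs_sum {m : ℕ} (j : Fin m) : ∑ i, |(Pi.single j (1:ℝ) : Fin m → ℝ) i| = 1 := by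
  rw [Finset.sum_eq_single j] <;> simp [Pi.single_apply]

lemma aux_two_abs_sum {m : ℕ} (j k : Fin m) (h : j ≠ k) (c : ℝ) :
    ∑ i, |(Pi.single j (1:ℝ) : Fin m → ℝ) i + c * (Pi.single k (1:ℝ) : Fin m → ℝ) i| = 1 + |c| := by
  have e : ∀ i, |(Pi.single j (1:ℝ) : Fin m → ℝ) i + c * (Pi.single k (1:ℝ) : Fin m → ℝ) i|
      = |(Pi.single j (1:ℝ) : Fin m → ℝ) i| + |c| * |(Pi.single k (1:ℝ) : Fin m → ℝ) i| := by
    intro i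
    by_cases hij : i = j
    · subst hij; simp [Pi.single_apply, h]
    · by_cases hik : i = k
      · subst hik; simp [Pi.single_apply, hij, abs_mul]
      · simp [Pi.single_apply, hij, hik]
  simp only [e, Finset.sum_add_distrib, ← Finset.mul_sum, aux_single_abs_sum]
  ring

lemma aux_sum_single_mul {m : ℕ} (u : Fin m → ℤ) (j : Fin m) (c : ℤ) :
    ∑ k, (Pi.single j c : Fin m → ℤ) k * u k = c * u j := by
  rw [Finset.sum_eq_single j]
  · simp
  · intro k _ hk; simp [Pi.single_apply, hk]
  · simp

lemma aux_mod_unit_of_dvd_iff (q m : ℕ) (hm : 1 ≤ m)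
    (u v : Fin m → ℤ) (hu : ∀ j, IsCoprime (u j) (q:ℤ)) (hv : ∀ j, IsCoprime (v j) (q:ℤ))
    (H : ∀ a : Fin m → ℤ, ((q:ℤ) ∣ ∑ j, a j * u j ↔ (q:ℤ) ∣ ∑ j, a j * v j)) :
    ∃ t : ℤ, IsCoprime t (q:ℤ) ∧ ∀ j, v j ≡ t * u j [ZMOD (q:ℤ)] := by
  set j₀ : Fin m := ⟨0, hm⟩
  obtain ⟨A, B, hAB⟩ := hu j₀
  refine ⟨A * v j₀, ?_, ?_⟩
  · exact (IsCoprime.mul_left ⟨u j₀, B, by linarith⟩ (hv j₀))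
  · intro j
    have key : (q:ℤ) ∣ A * u j * v j₀ - v j := by
      by_cases hj : j = j₀
      · subst hj
        exact ⟨-(B * v j₀), by linear_combination (v j₀) * hAB⟩
      · have h1 : (q:ℤ) ∣ ∑ k, ((Pi.single j₀ (A * u j) - Pi.single j 1 : Fin m → ℤ)) k * u k := by
          have e : ∑ k, ((Pi.single j₀ (A * u j) - Pi.single j 1 : Fin m → ℤ)) k * u k
              = (A * u j) * u j₀ - 1 * u j := by
            simp only [Pi.sub_apply, sub_mul, Finset.sum_sub_distrib, aux_sum_single_mul]
          rw [e]
          exact ⟨-(B * u j), by linear_combination (u j) * hAB⟩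
        have h2 := (H _).mp h1
        have e : ∑ k, ((Pi.single j₀ (A * u j) - Pi.single j 1 : Fin m → ℤ)) k * v k
            = (A * u j) * v j₀ - 1 * v j := by
          simp only [Pi.sub_apply, sub_mul, Finset.sum_sub_distrib, aux_sum_single_mul]
        rw [e] at h2
        convert h2 using 1; ring
    calc v j ≡ A * u j * v j₀ [ZMOD (q:ℤ)] := Int.modEq_iff_dvd.mpr key
      _ = A * v j₀ * u j := by ring

lemma aux_dvd_iff_of_modEq (q m : ℕ) (s s' : Fin m → ℤ) (σ : Equiv.Perm (Fin m))
    (ε : Fin m → ℤ) (t : ℤ) (hε : ∀ j, ε j = 1 ∨ ε j = -1) (ht : IsCoprime t (q:ℤ))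
    (hrel : ∀ j, s' (σ j) ≡ t * ε j * s j [ZMOD (q:ℤ)]) (a : Fin m → ℤ) :
    ((q:ℤ) ∣ ∑ j, a j * s j) ↔ (q:ℤ) ∣ ∑ j, (ε j * a j) * s' (σ j) := by
  have htu : IsUnit ((t : ZMod q)) := by
    obtain ⟨A,B,h⟩ := ht
    refine IsUnit.of_mul_eq_one (A : ZMod q) ?_
    have : ((A*t + B*q : ℤ) : ZMod q) = 1 := by rw [h]; norm_cast
    push_cast at this
    simpa [ZMod.natCast_self, mul_comm] using this
  have hrel' : ∀ j, ((s' (σ j) : ZMod q)) = (t : ZMod q) * (ε j : ZMod q) * (s j : ZMod q) := by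
    intro j
    have := (ZMod.intCast_eq_intCast_iff _ _ _).mpr (hrel j)
    push_cast at this
    exact this
  rw [← ZMod.intCast_zmod_eq_zero_iff_dvd, ← ZMod.intCast_zmod_eq_zero_iff_dvd]
  push_cast
  have e : ∑ j, ((ε j : ZMod q) * (a j : ZMod q)) * ((s' (σ j) : ZMod q))
      = (t : ZMod q) * ∑ j, (a j : ZMod q) * (s j : ZMod q) := by
    rw [Finset.mul_sum]
    refine Finset.sum_congr rfl fun j _ => ?_
    rw [hrel' j]
    have : ((ε j : ZMod q)) * (ε j : ZMod q) = 1 := by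
      rcases hε j with h|h <;> rw [h] <;> norm_num
    calc (ε j : ZMod q) * (a j : ZMod q) * ((t : ZMod q) * (ε j : ZMod q) * (s j : ZMod q))
        = ((ε j : ZMod q) * (ε j : ZMod q)) * ((a j : ZMod q) * (t : ZMod q) * (s j : ZMod q)) := by ring
      _ = (t : ZMod q) * ((a j : ZMod q) * (s j : ZMod q)) := by rw [this]; ring
  rw [e, ← htu.mul_right_eq_zero]

/-- Two congruence lattices are `‖·‖₁`-isometric iff the parameters are related by a
permutation, signs, and a unit `t` modulo `q`. -/
theorem congLat_oneNormIsometric_iff (q m : ℕ) (hq : 1 ≤ q) (hm : 1 ≤ m)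
    (s s' : Fin m → ℤ)
    (hs : ∀ j, IsCoprime (s j) (q : ℤ)) (hs' : ∀ j, IsCoprime (s' j) (q : ℤ)) :
    OneNormIsometric (congLat q m s) (congLat q m s') ↔
      ∃ (σ : Equiv.Perm (Fin m)) (ε : Fin m → ℤ) (t : ℤ),
        (∀ j, ε j = 1 ∨ ε j = -1) ∧ IsCoprime t (q : ℤ) ∧
        ∀ j, s' (σ j) ≡ t * ε j * s j [ZMOD (q : ℤ)] := by
  constructor
  · rintro ⟨T, hN, hImg⟩
    classical
    set c : Fin m → Fin m → ℝ := fun j => T (Pi.single j (1:ℝ)) with hc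
    -- column sums
    have hc1 : ∀ j, ∑ i, |c j i| = 1 := by
      intro j
      rw [hc]; rw [hN (Pi.single j (1:ℝ))]
      exact aux_single_abs_sum j
    -- disjoint supports
    have hdisj : ∀ j k, j ≠ k → ∀ i, c j i = 0 ∨ c k i = 0 := by
      intro j k hjk
      have hP : ∑ i, |c j i + c k i| = 2 := by
        have := hN (Pi.single j (1:ℝ) + Pi.single k (1:ℝ))
        rw [map_add] at this
        have e2 : ∑ i, |(Pi.single j (1:ℝ) : Fin m → ℝ) i + (Pi.single k (1:ℝ) : Fin m → ℝ) i| = 2 := by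
          have h2 := aux_two_abs_sum j k hjk 1
          norm_num at h2
          exact h2
        simp only [Pi.add_apply] at this ⊢
        rw [this]
        exact e2
      have hM : ∑ i, |c j i - c k i| = 2 := by
        have := hN (Pi.single j (1:ℝ) - Pi.single k (1:ℝ))
        rw [map_sub] at this
        have e2 : ∑ i, |(Pi.single j (1:ℝ) : Fin m → ℝ) i - (Pi.single k (1:ℝ) : Fin m → ℝ) i| = 2 := by
          have h2 := aux_two_abs_sum j k hjk (-1)
          norm_num [sub_eq_add_neg] at h2 ⊢
          exact h2
        simp only [Pi.sub_apply] at this ⊢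
        rw [this]
        exact e2
      have hsum : ∑ i, |(|c j i| - |c k i|)| = 2 := by
        have e : ∑ i, (|c j i + c k i| + |c j i - c k i|)
            = ∑ i, (|c j i| + |c k i| + |(|c j i| - |c k i|)|) := by
          refine Finset.sum_congr rfl fun i _ => aux_abs_add_add_abs_sub _ _
        rw [Finset.sum_add_distrib, hP, hM] at e
        simp only [Finset.sum_add_distrib, hc1 j, hc1 k] at e
        linarith
      have hle : ∀ i ∈ Finset.univ, |(|c j i| - |c k i|)| ≤ |c j i| + |c k i| := by
        intro i _
        calc |(|c j i| - |c k i|)| ≤ |c j i - c k i| := abs_abs_sub_abs_le_abs_sub _ _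
          _ ≤ |c j i| + |c k i| := abs_sub _ _
      have heq := (Finset.sum_eq_sum_iff_of_le hle).mp (by
        rw [hsum, Finset.sum_add_distrib, hc1 j, hc1 k]; norm_num)
      intro i
      exact aux_zero_of_abs_eq _ _ (heq i (Finset.mem_univ i))
    -- each column nonzero somewhere
    have hnz : ∀ j, ∃ i, c j i ≠ 0 := by
      intro j
      by_contra h
      push_neg at h
      have := hc1 j
      simp [h] at this
    set π : Fin m → Fin m := fun j => (hnz j).choose with hπdef
    have hπ : ∀ j, c j (π j) ≠ 0 := fun j => (hnz j).choose_spec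
    have hπinj : Function.Injective π := by
      intro j k hjk
      by_contra hne
      rcases hdisj j k hne (π j) with h|h
      · exact hπ j h
      · rw [hjk] at h; exact hπ k h
    have hπbij : Function.Bijective π := Finite.injective_iff_bijective.mp hπinj
    set σ : Equiv.Perm (Fin m) := Equiv.ofBijective π hπbij with hσdef
    have hσ : ∀ j, σ j = π j := fun j => rfl
    -- support of column j is exactly {π j}
    have hsupp : ∀ j i, i ≠ π j → c j i = 0 := by
      intro j i hi
      obtain ⟨k, hk⟩ := hπbij.2 i
      by_cases hjk : j = k
      · subst hjk; exact absurd hk.symm (by simpa using hi)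
      · rcases hdisj j k hjk i with h|h
        · exact h
        · exact absurd (hk ▸ h) (hπ k)
    have hval : ∀ j, |c j (π j)| = 1 := by
      intro j
      have := hc1 j
      rw [Finset.sum_eq_single (π j)] at this
      · exact this
      · intro i _ hi; rw [hsupp j i hi]; simp
      · simp
    -- integer signs
    set εℤ : Fin m → ℤ := fun j => if 0 < c j (π j) then 1 else -1 with hεdef
    have hpm : ∀ j, εℤ j = 1 ∨ εℤ j = -1 := by
      intro j; by_cases h : 0 < c j (π j) <;> simp [hεdef, h]
    have hcast : ∀ j, ((εℤ j : ℤ) : ℝ) = c j (π j) := by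
      intro j
      rcases (abs_eq (le_of_lt one_pos)).mp (hval j) with h|h
      · have he : εℤ j = 1 := by
          simp only [hεdef]
          rw [if_pos (show (0:ℝ) < c j (π j) by rw [h]; norm_num)]
        rw [he, h]; norm_num
      · have he : εℤ j = -1 := by
          simp only [hεdef]
          rw [if_neg (show ¬ (0:ℝ) < c j (π j) by rw [h]; norm_num)]
        rw [he, h]; norm_num
    have hε2 : ∀ j, εℤ j * εℤ j = 1 := fun j => by rcases hpm j with h|h <;> rw [h] <;> norm_num
    -- action of T on coordinates
    have hT : ∀ (x : Fin m → ℝ) (i : Fin m), T x i = x (σ.symm i) * c (σ.symm i) i := by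
      intro x i
      have hx : x = ∑ j, (Pi.single j (x j) : Fin m → ℝ) := (Finset.univ_sum_single x).symm
      have hTx : T x = ∑ j, x j • c j := by
        conv_lhs => rw [hx]
        rw [map_sum]
        refine Finset.sum_congr rfl fun j _ => ?_
        have hps : (Pi.single j (x j) : Fin m → ℝ) = x j • (Pi.single j (1:ℝ) : Fin m → ℝ) := by
          funext i'
          by_cases hij : i' = j
          · subst hij; simp
          · simp [Pi.single_apply, hij]
        rw [hps, map_smul]
      have hTx2 : T x i = ∑ j, x j * c j i := by
        rw [hTx, Finset.sum_apply]
        exact Finset.sum_congr rfl fun j _ => rfl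
      rw [hTx2, Finset.sum_eq_single (σ.symm i)]
      · intro j _ hj
        have hne : i ≠ π j := by
          intro hi
          apply hj
          have h2 : σ j = i := by rw [hσ j]; exact hi.symm
          exact (by simpa using congrArg σ.symm h2.symm : σ.symm i = j).symm
        rw [hsupp j i hne, mul_zero]
      · simp
    have hππ : ∀ i, π (σ.symm i) = i := fun i => by
      rw [← hσ]; exact Equiv.apply_symm_apply σ i
    -- integer-level map
    set B : (Fin m → ℤ) → (Fin m → ℤ) := fun a i => εℤ (σ.symm i) * a (σ.symm i) with hBdef
    have hTB : ∀ a : Fin m → ℤ,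
        T (fun j => ((a j : ℝ))) = fun i => ((B a i : ℝ)) := by
      intro a; funext i
      rw [hT]
      have : c (σ.symm i) i = ((εℤ (σ.symm i) : ℤ) : ℝ) := by
        rw [hcast]; rw [hππ i]
      rw [this, hBdef]
      push_cast
      ring
    have hBinj : Function.Injective B := by
      intro a a' haa
      funext j
      have := congrFun haa (σ j)
      simp only [hBdef, Equiv.symm_apply_apply] at this
      have hne : εℤ j ≠ 0 := by rcases hpm j with h|h <;> rw [h] <;> norm_num
      exact mul_left_cancel₀ hne this
    have hcastinj : Function.Injective (fun (a : Fin m → ℤ) (j : Fin m) => ((a j : ℝ))) := by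
      intro a a' h
      funext j
      exact Int.cast_injective (α := ℝ) (by simpa using congrFun h j)
    -- membership transfer
    have hmemb : ∀ a : Fin m → ℤ, a ∈ congLat q m s ↔ B a ∈ congLat q m s' := by
      intro a
      constructor
      · intro ha
        have h1 : T (fun j => ((a j : ℝ))) ∈ intCastImg (congLat q m s') := by
          rw [← hImg]
          exact ⟨_, ⟨a, ha, rfl⟩, rfl⟩
        rw [hTB a] at h1
        obtain ⟨b, hb, hbe⟩ := h1
        have : b = B a := hcastinj hbe
        rwa [this] at hb
      · intro hBa
        have h1 : (fun i => ((B a i : ℝ))) ∈ T '' intCastImg (congLat q m s) := by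
          rw [hImg]
          exact ⟨B a, hBa, rfl⟩
        obtain ⟨y, ⟨a', ha', rfl⟩, hy⟩ := h1
        rw [hTB a'] at hy
        have : B a' = B a := hcastinj hy
        rwa [hBinj this] at ha'
    -- divisibility equivalence
    have hdvd : ∀ a : Fin m → ℤ,
        ((q:ℤ) ∣ ∑ j, a j * s j) ↔ (q:ℤ) ∣ ∑ j, a j * (εℤ j * s' (σ j)) := by
      intro a
      rw [show ((q:ℤ) ∣ ∑ j, a j * s j) ↔ a ∈ congLat q m s from Iff.rfl, hmemb a]
      show ((q:ℤ) ∣ ∑ i, B a i * s' i) ↔ _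
      have e : ∑ i, B a i * s' i = ∑ j, a j * (εℤ j * s' (σ j)) := by
        rw [← Equiv.sum_comp σ (fun i => B a i * s' i)]
        refine Finset.sum_congr rfl fun j _ => ?_
        simp only [hBdef, Equiv.symm_apply_apply]
        ring
      rw [e]
    -- apply the arithmetic lemma
    have hv : ∀ j, IsCoprime (εℤ j * s' (σ j)) (q:ℤ) := by
      intro j
      rcases hpm j with h|h
      · rw [h, one_mul]; exact hs' (σ j)
      · rw [h]
        have : (-1 : ℤ) * s' (σ j) = -(s' (σ j)) := by ring
        rw [this]
        exact (hs' (σ j)).neg_left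
    obtain ⟨t, ht, hmod⟩ := aux_mod_unit_of_dvd_iff q m hm s (fun j => εℤ j * s' (σ j)) hs hv hdvd
    refine ⟨σ, εℤ, t, hpm, ht, ?_⟩
    intro j
    have h1 : εℤ j * (εℤ j * s' (σ j)) ≡ εℤ j * (t * s j) [ZMOD (q:ℤ)] :=
      Int.ModEq.mul_left (εℤ j) (hmod j)
    have e1 : εℤ j * (εℤ j * s' (σ j)) = s' (σ j) := by
      rw [← mul_assoc, hε2 j, one_mul]
    have e2 : εℤ j * (t * s j) = t * εℤ j * s j := by ring
    rw [e1, e2] at h1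
    exact h1
  · rintro ⟨σ, ε, t, hε, ht, hrel⟩
    have hε2 : ∀ j, ε j * ε j = 1 := fun j => by rcases hε j with h|h <;> rw [h] <;> norm_num
    have hε2R : ∀ j, (ε j : ℝ) * (ε j : ℝ) = 1 := fun j => by
      rcases hε j with h|h <;> rw [h] <;> norm_num
    refine ⟨{
      toFun := fun x i => (ε (σ.symm i) : ℝ) * x (σ.symm i)
      map_add' := by intro x y; funext i; simp [mul_add]
      map_smul' := by intro cc x; funext i; simp [smul_eq_mul]; ring
      invFun := fun y j => (ε j : ℝ) * y (σ j)
      left_inv := by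
        intro x; funext j
        simp only [Equiv.symm_apply_apply, ← mul_assoc, hε2R j, one_mul]
      right_inv := by
        intro y; funext i
        simp only [Equiv.apply_symm_apply, ← mul_assoc, hε2R (σ.symm i), one_mul] }, ?_, ?_⟩
    · intro x
      simp only [LinearEquiv.coe_mk]
      calc ∑ i, |(ε (σ.symm i) : ℝ) * x (σ.symm i)| = ∑ i, |x (σ.symm i)| := by
            refine Finset.sum_congr rfl fun i _ => ?_
            rw [abs_mul]
            rcases hε (σ.symm i) with h|h <;> rw [h] <;> norm_num
        _ = ∑ j, |x j| := Equiv.sum_comp σ.symm fun j => |x j|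
    · set B : (Fin m → ℤ) → (Fin m → ℤ) := fun a i => ε (σ.symm i) * a (σ.symm i) with hB
      have step1 : ∀ a : Fin m → ℤ,
          (fun i => ((ε (σ.symm i) : ℝ) * ((fun j => ((a j : ℝ))) (σ.symm i))))
            = fun i => ((B a i : ℝ)) := by
        intro a; funext i; simp [hB]
      have key : B '' congLat q m s = congLat q m s' := by
        apply Set.Subset.antisymm
        · rintro _ ⟨a, ha, rfl⟩
          have := (aux_dvd_iff_of_modEq q m s s' σ ε t hε ht hrel a).mp ha
          show (q:ℤ) ∣ ∑ i, B a i * s' i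
          have e : ∑ j, (ε j * a j) * s' (σ j) = ∑ i, B a i * s' i := by
            rw [← Equiv.sum_comp σ (fun i => B a i * s' i)]
            refine Finset.sum_congr rfl fun j _ => ?_
            simp [hB]
          rwa [e] at this
        · intro b hb
          refine ⟨fun j => ε j * b (σ j), ?_, ?_⟩
          · show (q:ℤ) ∣ ∑ j, (ε j * b (σ j)) * s j
            rw [aux_dvd_iff_of_modEq q m s s' σ ε t hε ht hrel]
            have e : ∑ j, (ε j * (ε j * b (σ j))) * s' (σ j) = ∑ i, b i * s' i := by
              rw [← Equiv.sum_comp σ (fun i => b i * s' i)]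
              refine Finset.sum_congr rfl fun j _ => ?_
              rw [← mul_assoc, hε2 j, one_mul]
            rwa [e]
          · funext i
            simp only [hB, Equiv.apply_symm_apply, ← mul_assoc, hε2 (σ.symm i), one_mul]
      show (fun x i => (ε (σ.symm i) : ℝ) * x (σ.symm i)) '' intCastImg (congLat q m s)
          = intCastImg (congLat q m s')
      rw [intCastImg, Set.image_image]
      rw [← key, intCastImg, Set.image_image]
      refine Set.image_congr fun a _ => ?_
      exact step1 a
end

section
/- Let m ≥ 1 and 0 ≤ p ≤ m. For a subset I of {1,…,2m}, define w(I) = (w₁,…,w_m) ∈ ℤ^m by wⱼ = 1 if j ∈ I and j+m ∉ I, wⱼ = −1 if j ∉ I and j+m ∈ I, and wⱼ = 0 otherwise. Then for μ = (a₁,…,a_m) ∈ ℤ^m, the number of subsets I ⊆ {1,…,2m} with |I| = p and w(I) = μ equals C(m−p+2r, r) if |aⱼ| ≤ 1 for all j and p − ‖μ‖₁ = 2r for some nonnegative integer r, and equals 0 otherwise. -/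
/-- The weight of a subset `I` of `{1,…,2m}` (encoded as `Fin m ⊕ Fin m`, where
`inl j` plays the role of `j` and `inr j` the role of `j + m`):
`wⱼ = 1` if `j ∈ I, j+m ∉ I`; `wⱼ = -1` if `j ∉ I, j+m ∈ I`; `wⱼ = 0` otherwise. -/
def extWeight (m : ℕ) (I : Finset (Fin m ⊕ Fin m)) : Fin m → ℤ := fun j =>
  if Sum.inl j ∈ I ∧ Sum.inr j ∉ I then 1
  else if Sum.inl j ∉ I ∧ Sum.inr j ∈ I then -1 else 0

open Finset Sum

/-- Pointwise case analysis of the weight condition. -/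
lemma extWeight_trichotomy {m : ℕ} {a : Fin m → ℤ} {I : Finset (Fin m ⊕ Fin m)}
    (h : extWeight m I = a) (j : Fin m) :
    (a j = 1 ∧ inl j ∈ I ∧ inr j ∉ I) ∨ (a j = -1 ∧ inl j ∉ I ∧ inr j ∈ I) ∨
      (a j = 0 ∧ (inl j ∈ I ↔ inr j ∈ I)) := by
  have h' := congrFun h j
  unfold extWeight at h'
  split_ifs at h' with h1 h2
  · exact Or.inl ⟨h'.symm, h1⟩
  · exact Or.inr (Or.inl ⟨h'.symm, h2⟩)
  · exact Or.inr (Or.inr ⟨h'.symm, by tauto⟩)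

lemma sum_abs_eq_cards {m : ℕ} {a : Fin m → ℤ} (h1 : ∀ j, |a j| ≤ 1) :
    ∑ j, |a j| = ((univ.filter fun j => a j = 1).card : ℤ)
      + ((univ.filter fun j => a j = -1).card : ℤ) := by
  have step : ∀ j, |a j| = (if a j = 1 then (1:ℤ) else 0) + (if a j = -1 then (1:ℤ) else 0) := by
    intro j
    have h2 := abs_le.mp (h1 j)
    have h3 : a j = -1 ∨ a j = 0 ∨ a j = 1 := by omega
    rcases h3 with h | h | h <;> simp [h]
  rw [Finset.sum_congr rfl fun j _ => step j, Finset.sum_add_distrib,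
    Finset.sum_boole, Finset.sum_boole]

/-- The number of `p`-element subsets `I ⊆ {1,…,2m}` with weight `μ = a` equals
`C(m-p+2r, r)` if all `|aⱼ| ≤ 1` and `p - ‖a‖₁ = 2r ≥ 0`, and `0` otherwise. -/
theorem count_exterior_weight (m p : ℕ) (hm : 1 ≤ m) (hp : p ≤ m) (a : Fin m → ℤ) :
    (∀ r : ℕ, (∀ j, |a j| ≤ 1) → (p : ℤ) - ∑ j, |a j| = 2 * r →
      Nat.card {I : Finset (Fin m ⊕ Fin m) // I.card = p ∧ extWeight m I = a}
        = (m - p + 2 * r).choose r) ∧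
    (¬ ((∀ j, |a j| ≤ 1) ∧ ∃ r : ℕ, (p : ℤ) - ∑ j, |a j| = 2 * r) →
      Nat.card {I : Finset (Fin m ⊕ Fin m) // I.card = p ∧ extWeight m I = a}
        = 0) := by
  classical
  set P : Finset (Fin m) := univ.filter (fun j => a j = 1) with hPdef
  set N : Finset (Fin m) := univ.filter (fun j => a j = -1) with hNdef
  set Z : Finset (Fin m) := univ.filter (fun j => a j = 0) with hZdef
  -- basic disjointness / partition facts
  have hPZ : Disjoint P Z := by
    simp only [Finset.disjoint_left, hPdef, hZdef, mem_filter]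
    rintro x ⟨-, h1⟩ ⟨-, h2⟩; omega
  have hNZ : Disjoint N Z := by
    simp only [Finset.disjoint_left, hNdef, hZdef, mem_filter]
    rintro x ⟨-, h1⟩ ⟨-, h2⟩; omega
  have hPN : Disjoint P N := by
    simp only [Finset.disjoint_left, hPdef, hNdef, mem_filter]
    rintro x ⟨-, h1⟩ ⟨-, h2⟩; omega
  -- the key structural description of any I in the fiber
  have key : ∀ I : Finset (Fin m ⊕ Fin m), I.card = p → extWeight m I = a →
      (∀ j, |a j| ≤ 1) ∧ I.toLeft = P ∪ (I.toLeft ∩ I.toRight) ∧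
      I.toRight = N ∪ (I.toLeft ∩ I.toRight) ∧ (I.toLeft ∩ I.toRight) ⊆ Z ∧
      (p : ℤ) - ∑ j, |a j| = 2 * ((I.toLeft ∩ I.toRight).card : ℤ) := by
    intro I hc hw
    have tri := extWeight_trichotomy hw
    have h1 : ∀ j, |a j| ≤ 1 := by
      intro j
      rcases tri j with ⟨h, -⟩ | ⟨h, -⟩ | ⟨h, -⟩ <;> rw [h] <;> norm_num
    have hS : (I.toLeft ∩ I.toRight) ⊆ Z := by
      intro j hj
      simp only [mem_inter, mem_toLeft, mem_toRight] at hj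
      simp only [hZdef, mem_filter, mem_univ, true_and]
      rcases tri j with ⟨-, h, h'⟩ | ⟨-, h, h'⟩ | ⟨h, -⟩ <;> tauto
    have hA : I.toLeft = P ∪ (I.toLeft ∩ I.toRight) := by
      ext j
      simp only [mem_union, mem_inter, mem_toLeft, mem_toRight, hPdef, mem_filter,
        mem_univ, true_and]
      rcases tri j with ⟨h, h', h''⟩ | ⟨h, h', h''⟩ | ⟨h, h'⟩ <;>
        constructor <;> intro hx <;> first
          | tauto
          | (rcases hx with hx | hx <;> [omega; tauto])
    have hB : I.toRight = N ∪ (I.toLeft ∩ I.toRight) := by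
      ext j
      simp only [mem_union, mem_inter, mem_toLeft, mem_toRight, hNdef, mem_filter,
        mem_univ, true_and]
      rcases tri j with ⟨h, h', h''⟩ | ⟨h, h', h''⟩ | ⟨h, h'⟩ <;>
        constructor <;> intro hx <;> first
          | tauto
          | (rcases hx with hx | hx <;> [omega; tauto])
    refine ⟨h1, hA, hB, hS, ?_⟩
    have hcards : p = P.card + N.card + 2 * (I.toLeft ∩ I.toRight).card := by
      have h2 : I.toLeft.card + I.toRight.card = p := by
        rw [Finset.card_toLeft_add_card_toRight, hc]
      have hAc : I.toLeft.card = P.card + (I.toLeft ∩ I.toRight).card := by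
        conv_lhs => rw [hA]
        exact Finset.card_union_of_disjoint (hPZ.mono_right hS)
      have hBc : I.toRight.card = N.card + (I.toLeft ∩ I.toRight).card := by
        conv_lhs => rw [hB]
        exact Finset.card_union_of_disjoint (hNZ.mono_right hS)
      omega
    have hsc := sum_abs_eq_cards h1
    rw [← hPdef, ← hNdef] at hsc
    rw [hsc]
    push_cast [hcards]
    ring
  -- forward construction
  have fwd : ∀ S : Finset (Fin m), S ⊆ Z → (∀ j, |a j| ≤ 1) →
      extWeight m ((P ∪ S).disjSum (N ∪ S)) = a ∧
      ((P ∪ S).disjSum (N ∪ S)).card = P.card + N.card + 2 * S.card := by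
    intro S hSZ h1
    have hjS : ∀ j ∈ S, a j = 0 := by
      intro j hj
      have := hSZ hj
      simp only [hZdef, mem_filter] at this
      exact this.2
    constructor
    · funext j
      have h2 := abs_le.mp (h1 j)
      have h3 : a j = -1 ∨ a j = 0 ∨ a j = 1 := by omega
      unfold extWeight
      simp only [inl_mem_disjSum, inr_mem_disjSum, mem_union, hPdef, hNdef, mem_filter,
        mem_univ, true_and]
      by_cases hjs : j ∈ S
      · have := hjS j hjs
        rcases h3 with h | h | h <;> simp_all
      · rcases h3 with h | h | h <;> simp_all
    · rw [Finset.card_disjSum, Finset.card_union_of_disjoint (hPZ.mono_right hSZ),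
        Finset.card_union_of_disjoint (hNZ.mono_right hSZ)]
      ring
  constructor
  · -- main case
    intro r h1 hsum
    have hsumc := sum_abs_eq_cards h1
    rw [← hPdef, ← hNdef] at hsumc
    have hPNr : (p : ℤ) = P.card + N.card + 2 * r := by rw [hsumc] at hsum; omega
    have hPNr' : p = P.card + N.card + 2 * r := by exact_mod_cast hPNr
    have hZcard : Z.card = m - p + 2 * r := by
      have hpart : P.card + N.card + Z.card = m := by
        have : ∀ j : Fin m, (j ∈ P ∧ j ∉ N ∧ j ∉ Z) ∨ (j ∉ P ∧ j ∈ N ∧ j ∉ Z) ∨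
            (j ∉ P ∧ j ∉ N ∧ j ∈ Z) := by
          intro j
          have h2 := abs_le.mp (h1 j)
          simp only [hPdef, hNdef, hZdef, mem_filter, mem_univ, true_and]
          omega
        have hun : P ∪ N ∪ Z = univ := by
          ext j
          have hj := this j
          simp only [mem_union, mem_univ, iff_true]
          tauto
        have := Finset.card_union_of_disjoint (Finset.disjoint_union_left.mpr ⟨hPZ, hNZ⟩)
        rw [hun, Finset.card_union_of_disjoint hPN] at this
        simpa [Fintype.card_fin] using this.symm
      omega
    rw [Nat.card_eq_fintype_card, Fintype.card_subtype]
    rw [← hZcard, ← Finset.card_powersetCard]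
    refine Finset.card_bij' (fun I _ => I.toLeft ∩ I.toRight)
      (fun S _ => (P ∪ S).disjSum (N ∪ S)) ?_ ?_ ?_ ?_
    · intro I hI
      simp only [mem_filter, mem_univ, true_and] at hI
      obtain ⟨-, -, -, hS, hsum'⟩ := key I hI.1 hI.2
      rw [Finset.mem_powersetCard]
      exact ⟨hS, by omega⟩
    · intro S hS
      rw [Finset.mem_powersetCard] at hS
      obtain ⟨hw, hcard⟩ := fwd S hS.1 h1
      simp only [mem_filter, mem_univ, true_and]
      exact ⟨by omega, hw⟩
    · intro I hI
      simp only [mem_filter, mem_univ, true_and] at hI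
      obtain ⟨-, hA, hB, -, -⟩ := key I hI.1 hI.2
      rw [← hA, ← hB, Finset.toLeft_disjSum_toRight]
    · intro S hS
      rw [Finset.mem_powersetCard] at hS
      have hSZ := hS.1
      rw [Finset.toLeft_disjSum, Finset.toRight_disjSum]
      ext j
      simp only [mem_inter, mem_union, hPdef, hNdef, mem_filter, mem_univ, true_and]
      constructor
      · rintro ⟨h2 | h2, h3 | h3⟩
        · exfalso; omega
        · exact h3
        · exact h2
        · exact h2
      · intro h; exact ⟨Or.inr h, Or.inr h⟩
  · -- degenerate case
    intro hno
    rw [Nat.card_eq_fintype_card, Fintype.card_subtype]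
    rw [Finset.card_eq_zero]
    rw [Finset.filter_eq_empty_iff]
    intro I _
    rintro ⟨hc, hw⟩
    obtain ⟨h1, -, -, -, hsum⟩ := key I hc hw
    exact hno ⟨h1, (I.toLeft ∩ I.toRight).card, hsum⟩
end

section
/- Let q, m ≥ 1, let s ∈ ℤ^m, and let 𝓛 = 𝓛(q;s₁,…,s_m) be the associated congruence lattice. Let k ∈ ℕ and write k = αq + r₀ with α ∈ ℕ and 0 ≤ r₀ < q. Then for every integer z with 0 ≤ z ≤ m−1: N_𝓛(k,z) = Σ_{s'=0}^{m−z} 2^{s'} C(z+s', s') Σ_{t=s'}^{α} C(t−s'+m−z−1, m−z−1) N^red_𝓛(k−tq, z+s'). -/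
/-- `N_𝓛(k, z)`: the number of `μ ∈ 𝓛` with `‖μ‖₁ = k` and exactly `z` zero coordinates. -/
noncomputable def NL (q m : ℕ) (s : Fin m → ℤ) (k z : ℕ) : ℕ :=
  Nat.card {a : Fin m → ℤ // a ∈ congLat q m s ∧ (∑ j, (a j).natAbs) = k ∧
    (Finset.univ.filter fun j => a j = 0).card = z}

/-- `N^red_𝓛(k, z)`: the number of `q`-reduced `μ ∈ 𝓛` (all `|aⱼ| < q`) with `‖μ‖₁ = k`
and exactly `z` zero coordinates. -/
noncomputable def NLred (q m : ℕ) (s : Fin m → ℤ) (k z : ℕ) : ℕ :=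
  Nat.card {a : Fin m → ℤ // a ∈ congLat q m s ∧ (∀ j, (a j).natAbs < q) ∧
    (∑ j, (a j).natAbs) = k ∧ (Finset.univ.filter fun j => a j = 0).card = z}


open Finset

section helpers
variable (q : ℕ)

/-- reduced part of an integer mod q, keeping sign -/
def redP (x : ℤ) : ℤ := x.sign * ((x.natAbs % q : ℕ) : ℤ)
/-- quotient part -/
def quoP (x : ℤ) : ℕ := x.natAbs / q
/-- signed quotient part -/
def dP (x : ℤ) : ℤ := x.sign * ((quoP q x : ℕ) : ℤ)

variable {q}

lemma natAbs_redP (x : ℤ) : (redP q x).natAbs = x.natAbs % q := by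
  rcases eq_or_ne x 0 with rfl | hx
  · simp [redP]
  · simp only [redP, Int.natAbs_mul, Int.natAbs_sign, if_neg hx, one_mul, Int.natAbs_natCast]

lemma natAbs_dP (x : ℤ) : (dP q x).natAbs = quoP q x := by
  rcases eq_or_ne x 0 with rfl | hx
  · simp [dP, quoP]
  · simp only [dP, Int.natAbs_mul, Int.natAbs_sign, if_neg hx, one_mul, Int.natAbs_natCast]

lemma natAbs_redP_lt (hq : 1 ≤ q) (x : ℤ) : (redP q x).natAbs < q := by
  rw [natAbs_redP]; exact Nat.mod_lt _ hq

lemma decomp_eq (x : ℤ) : x = redP q x + q * dP q x := by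
  have h1 : x.sign * (x.natAbs : ℤ) = x := Int.sign_mul_natAbs x
  have h2 : (x.natAbs : ℤ) = ((x.natAbs % q : ℕ) : ℤ) + (q : ℤ) * ((x.natAbs / q : ℕ) : ℤ) := by
    exact_mod_cast (Nat.mod_add_div x.natAbs q).symm
  calc x = x.sign * (x.natAbs : ℤ) := h1.symm
    _ = redP q x + q * dP q x := by rw [h2]; unfold redP dP quoP; ring

lemma redP_mul_dP_nonneg (x : ℤ) : 0 ≤ redP q x * dP q x := by
  have h : redP q x * dP q x
      = (x.sign * x.sign) * (((x.natAbs % q : ℕ) : ℤ) * ((quoP q x : ℕ) : ℤ)) := by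
    unfold redP dP; ring
  rw [h]
  exact mul_nonneg (mul_self_nonneg _)
    (mul_nonneg (Int.natCast_nonneg _) (Int.natCast_nonneg _))

lemma mul_nonneg_cases {v d : ℤ} (h : 0 ≤ v * d) : (0 ≤ v ∧ 0 ≤ d) ∨ (v ≤ 0 ∧ d ≤ 0) := by
  rcases mul_nonneg_iff.mp h with ⟨h1, h2⟩ | ⟨h1, h2⟩
  · exact Or.inl ⟨h1, h2⟩
  · exact Or.inr ⟨h1, h2⟩

lemma key_natAbs {v d : ℤ} (h : 0 ≤ v * d) :
    (v + q * d).natAbs = v.natAbs + q * d.natAbs := by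
  rcases mul_nonneg_cases h with ⟨h1, h2⟩ | ⟨h1, h2⟩
  · have hqd : (0:ℤ) ≤ q * d := mul_nonneg (Int.natCast_nonneg q) h2
    rw [Int.natAbs_add_of_nonneg h1 hqd, Int.natAbs_mul]
    simp
  · have e1 : (v + q * d).natAbs = (-(v + q*d)).natAbs := (Int.natAbs_neg _).symm
    have e2 : -(v + q*d) = (-v) + q * (-d) := by ring
    rw [e1, e2, Int.natAbs_add_of_nonneg (by omega)
      (mul_nonneg (Int.natCast_nonneg q) (by omega)), Int.natAbs_mul]
    simp

lemma key_zero_iff (hq : 1 ≤ q) {v d : ℤ} (h : 0 ≤ v * d) :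
    v + q * d = 0 ↔ v = 0 ∧ d = 0 := by
  constructor
  · intro h0
    have := key_natAbs (q := q) h
    rw [h0] at this
    simp only [Int.natAbs_zero] at this
    constructor <;> [skip; skip] <;>
      · rw [← Int.natAbs_eq_zero]; nlinarith [Nat.zero_le (v.natAbs), Nat.zero_le (d.natAbs)]
  · rintro ⟨rfl, rfl⟩; ring

lemma key_redP (hq : 1 ≤ q) {v d : ℤ} (hv : v.natAbs < q) (h : 0 ≤ v * d) :
    redP q (v + q * d) = v := by
  have hab : (v + q * d).natAbs = v.natAbs + q * d.natAbs := key_natAbs h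
  have hmod : (v + q * d).natAbs % q = v.natAbs := by
    rw [hab, Nat.add_mul_mod_self_left, Nat.mod_eq_of_lt hv]
  rcases eq_or_ne v 0 with rfl | hv0
  · unfold redP; rw [hmod]; simp
  · have hsign : (v + q * d).sign = v.sign := by
      rcases mul_nonneg_cases h with ⟨h1, h2⟩ | ⟨h1, h2⟩
      · have hvpos : 0 < v := lt_of_le_of_ne h1 (Ne.symm hv0)
        have : (0:ℤ) ≤ q * d := mul_nonneg (Int.natCast_nonneg q) h2
        rw [Int.sign_eq_one_of_pos (by omega), Int.sign_eq_one_of_pos hvpos]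
      · have hvneg : v < 0 := lt_of_le_of_ne h1 hv0
        have : (q:ℤ) * d ≤ 0 := mul_nonpos_of_nonneg_of_nonpos (Int.natCast_nonneg q) h2
        rw [Int.sign_eq_neg_one_of_neg (by omega), Int.sign_eq_neg_one_of_neg hvneg]
    unfold redP
    rw [hmod, hsign, Int.sign_mul_natAbs]

lemma key_quoP (hq : 1 ≤ q) {v d : ℤ} (hv : v.natAbs < q) (h : 0 ≤ v * d) :
    quoP q (v + q * d) = d.natAbs := by
  unfold quoP; rw [key_natAbs h]
  rw [Nat.add_mul_div_left _ _ (by omega : 0 < q), Nat.div_eq_of_lt hv, Nat.zero_add]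

lemma zero_iff_redP_dP {q : ℕ} (x : ℤ) : x = 0 ↔ redP q x = 0 ∧ dP q x = 0 := by
  constructor
  · rintro rfl; constructor <;> simp [redP, dP, quoP]
  · rintro ⟨h1, h2⟩
    have h3 := decomp_eq (q := q) x
    rw [h1, h2] at h3
    simpa using h3

lemma key_dP (hq : 1 ≤ q) {v d : ℤ} (hv : v.natAbs < q) (h : 0 ≤ v * d) :
    dP q (v + q * d) = d := by
  have hab : (v + q * d).natAbs = v.natAbs + q * d.natAbs := key_natAbs h
  have hdiv : quoP q (v + q * d) = d.natAbs := key_quoP hq hv h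
  rcases eq_or_ne d 0 with rfl | hd0
  · unfold dP; rw [hdiv]; simp
  · have hsign : (v + q * d).sign = d.sign := by
      rcases mul_nonneg_cases h with ⟨h1, h2⟩ | ⟨h1, h2⟩
      · have hdpos : 0 < d := lt_of_le_of_ne h2 (Ne.symm hd0)
        have : (q:ℤ) * 1 ≤ q * d := mul_le_mul_of_nonneg_left (by omega) (Int.natCast_nonneg q)
        have hq' : (1:ℤ) ≤ (q:ℤ) := by exact_mod_cast hq
        rw [Int.sign_eq_one_of_pos (by omega), Int.sign_eq_one_of_pos hdpos]
      · have hdneg : d < 0 := lt_of_le_of_ne h2 hd0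
        have : (q:ℤ) * d ≤ q * (-1) := mul_le_mul_of_nonneg_left (by omega) (Int.natCast_nonneg q)
        have hq' : (1:ℤ) ≤ (q:ℤ) := by exact_mod_cast hq
        rw [Int.sign_eq_neg_one_of_neg (by omega), Int.sign_eq_neg_one_of_neg hdneg]
    unfold dP
    rw [hdiv, hsign, Int.sign_mul_natAbs]

/-- `v.sign * |d| = d` when `v ≠ 0` and signs are compatible. -/
lemma sign_mul_natAbs_eq {v d : ℤ} (hv0 : v ≠ 0) (h : 0 ≤ v * d) :
    v.sign * (d.natAbs : ℤ) = d := by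
  rcases eq_or_ne d 0 with rfl | hd0
  · simp
  · have hsign : v.sign = d.sign := by
      rcases mul_nonneg_cases h with ⟨h1, h2⟩ | ⟨h1, h2⟩
      · rw [Int.sign_eq_one_of_pos (lt_of_le_of_ne h1 (Ne.symm hv0)),
          Int.sign_eq_one_of_pos (lt_of_le_of_ne h2 (Ne.symm hd0))]
      · rw [Int.sign_eq_neg_one_of_neg (lt_of_le_of_ne h1 hv0),
          Int.sign_eq_neg_one_of_neg (lt_of_le_of_ne h2 hd0)]
    rw [hsign, Int.sign_mul_natAbs]

lemma mul_sign_nonneg (v : ℤ) (n : ℕ) : 0 ≤ v * (v.sign * (n:ℤ)) := by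
  have h1 : v * (v.sign * (n:ℤ)) = (v * v.sign) * n := by ring
  have h2 : 0 ≤ v * v.sign := by
    rcases lt_trichotomy v 0 with h | h | h
    · rw [Int.sign_eq_neg_one_of_neg h]; omega
    · simp [h]
    · rw [Int.sign_eq_one_of_pos h]; omega
  rw [h1]
  exact mul_nonneg h2 (Int.natCast_nonneg _)

end helpers

section counting
open Finset

lemma natCard_subtype {X : Type*} (F : Finset X) (P : X → Prop) (h : ∀ x, P x ↔ x ∈ F) :
    Nat.card {x // P x} = F.card := by
  rw [Nat.card_congr (Equiv.subtypeEquivRight h), Nat.card_eq_finsetCard]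

/-- Stars and bars. -/
lemma natCard_sum_eq (ι : Type*) [Fintype ι] [DecidableEq ι] (r : ℕ) :
    Nat.card {g : ι → ℕ // ∑ i, g i = r} = Nat.multichoose (Fintype.card ι) r := by
  have h : ∀ g : ι → ℕ, (∑ i, g i = r) ↔ g ∈ Finset.piAntidiag Finset.univ r := by
    intro g; rw [Finset.mem_piAntidiag]; simp
  rw [natCard_subtype _ _ h, ← Finset.map_sym_eq_piAntidiag Finset.univ r, Finset.card_map,
    Finset.sym_univ, Finset.card_univ]
  exact Sym.card_sym_eq_multichoose ι r

end counting

section core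
open Finset

variable {q m : ℕ} {ν : Fin m → ℤ}

lemma card_filter_eq_of_equiv {α β : Type*} [Fintype α] [Fintype β]
    (p : α → Prop) (p' : β → Prop) [DecidablePred p] [DecidablePred p']
    (e : {x // p x} ≃ {y // p' y}) :
    (univ.filter p).card = (univ.filter p').card := by
  rw [← Fintype.card_subtype, ← Fintype.card_subtype]
  exact Fintype.card_congr e

lemma split_sum {α : Type*} [Fintype α] (f : α → ℕ) (p : α → Prop) [DecidablePred p] :
    ∑ j, f j = (∑ i : {x // p x}, f i.1) + ∑ i : {x // ¬ p x}, f i.1 := by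
  rw [← Finset.sum_filter_add_sum_filter_not univ p f]
  congr 1 <;> exact Finset.sum_subtype _ (by simp) _

/-- combine a function on the zero set and a magnitude function on the support -/
def mix (ν : Fin m → ℤ) (e : {j // ν j = 0} → ℤ) (f : {j // ¬ ν j = 0} → ℕ) : Fin m → ℤ :=
  fun j => if h : ν j = 0 then e ⟨j, h⟩ else (ν j).sign * ((f ⟨j, h⟩ : ℕ) : ℤ)

variable {e : {j // ν j = 0} → ℤ} {f : {j // ¬ ν j = 0} → ℕ}

lemma mix_pos {j} (h : ν j = 0) : mix ν e f j = e ⟨j, h⟩ := dif_pos h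

lemma mix_neg {j} (h : ¬ ν j = 0) : mix ν e f j = (ν j).sign * ((f ⟨j, h⟩ : ℕ) : ℤ) := dif_neg h

lemma mix_A (i : {j // ν j = 0}) : mix ν e f i.1 = e i := by
  rw [mix_pos i.2, Subtype.coe_eta]

lemma mix_B_natAbs (i : {j // ¬ ν j = 0}) : (mix ν e f i.1).natAbs = f i := by
  rw [mix_neg i.2, Subtype.coe_eta, Int.natAbs_mul, Int.natAbs_sign, if_neg i.2, one_mul,
    Int.natAbs_natCast]

lemma core_step12 (hq : 1 ≤ q) (z t : ℕ) (hred : ∀ j, (ν j).natAbs < q) :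
    Nat.card {a : Fin m → ℤ // (∀ j, redP q (a j) = ν j) ∧
      (univ.filter fun j => a j = 0).card = z ∧ (∑ j, quoP q (a j)) = t}
    = Nat.card {p : ({j // ν j = 0} → ℤ) × ({j // ¬ ν j = 0} → ℕ) //
        (univ.filter fun i : {j // ν j = 0} => p.1 i = 0).card = z ∧
        (∑ i, (p.1 i).natAbs) + (∑ i, p.2 i) = t} := by
  have E1 : {a : Fin m → ℤ // (∀ j, redP q (a j) = ν j) ∧
      (univ.filter fun j => a j = 0).card = z ∧ (∑ j, quoP q (a j)) = t}
      ≃ {d : Fin m → ℤ // (∀ j, 0 ≤ ν j * d j) ∧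
        (univ.filter fun j => ν j = 0 ∧ d j = 0).card = z ∧ (∑ j, (d j).natAbs) = t} :=
    { toFun := fun x => ⟨fun j => dP q (x.1 j), by
        obtain ⟨h1, h2, h3⟩ := x.2
        refine ⟨fun j => ?_, ?_, ?_⟩
        · rw [← h1 j]; exact redP_mul_dP_nonneg _
        · exact (card_filter_eq_of_equiv _ _ (Equiv.subtypeEquivRight (fun j => by
            rw [← h1 j]; exact (zero_iff_redP_dP _).symm))).trans h2
        · exact (Fintype.sum_congr _ _ (fun j => natAbs_dP _)).trans h3⟩
      invFun := fun y => ⟨fun j => ν j + q * y.1 j, by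
        obtain ⟨g1, g2, g3⟩ := y.2
        refine ⟨fun j => key_redP hq (hred j) (g1 j), ?_, ?_⟩
        · exact (card_filter_eq_of_equiv _ _ (Equiv.subtypeEquivRight
            (fun j => key_zero_iff hq (g1 j)))).trans g2
        · exact (Fintype.sum_congr _ _ (fun j => key_quoP hq (hred j) (g1 j))).trans g3⟩
      left_inv := fun x => Subtype.ext (funext fun j => by
        show ν j + q * dP q (x.1 j) = x.1 j
        rw [← x.2.1 j]; exact (decomp_eq _).symm)
      right_inv := fun y => Subtype.ext (funext fun j => by
        show dP q (ν j + q * y.1 j) = y.1 j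
        exact key_dP hq (hred j) (y.2.1 j)) }
  have E2 : {d : Fin m → ℤ // (∀ j, 0 ≤ ν j * d j) ∧
        (univ.filter fun j => ν j = 0 ∧ d j = 0).card = z ∧ (∑ j, (d j).natAbs) = t}
      ≃ {p : ({j // ν j = 0} → ℤ) × ({j // ¬ ν j = 0} → ℕ) //
        (univ.filter fun i : {j // ν j = 0} => p.1 i = 0).card = z ∧
        (∑ i, (p.1 i).natAbs) + (∑ i, p.2 i) = t} :=
    { toFun := fun x => ⟨(fun i => x.1 i.1, fun i => (x.1 i.1).natAbs), by
        refine ⟨?_, ?_⟩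
        · exact (card_filter_eq_of_equiv _ _
            (Equiv.subtypeSubtypeEquivSubtypeInter (fun j => ν j = 0)
              (fun j => x.1 j = 0))).trans x.2.2.1
        · exact (split_sum (fun j => (x.1 j).natAbs) (fun j => ν j = 0)).symm.trans x.2.2.2⟩
      invFun := fun y => ⟨mix ν y.1.1 y.1.2, by
        refine ⟨fun j => ?_, ?_, ?_⟩
        · by_cases h : ν j = 0
          · rw [mix_pos h, h, zero_mul]
          · rw [mix_neg h]; exact mul_sign_nonneg _ _
        · refine (card_filter_eq_of_equiv _
            (fun i : {j // ν j = 0} => y.1.1 i = 0) ?_).trans y.2.1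
          exact ((Equiv.subtypeSubtypeEquivSubtypeInter (fun j => ν j = 0)
            (fun j => mix ν y.1.1 y.1.2 j = 0)).symm.trans
            (Equiv.subtypeEquivRight (fun i => by rw [mix_A])))
        · refine (split_sum (fun j => (mix ν y.1.1 y.1.2 j).natAbs)
            (fun j => ν j = 0)).trans ?_
          rw [Fintype.sum_congr _ (fun i : {j // ν j = 0} => (y.1.1 i).natAbs)
              (fun i => by rw [mix_A]),
            Fintype.sum_congr _ (fun i : {j // ¬ ν j = 0} => y.1.2 i)
              (fun i => mix_B_natAbs i)]
          exact y.2.2⟩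
      left_inv := fun x => Subtype.ext (funext fun j => by
        show mix ν (fun i => x.1 i.1) (fun i => (x.1 i.1).natAbs) j = x.1 j
        by_cases h : ν j = 0
        · rw [mix_pos h]
        · rw [mix_neg h]; exact sign_mul_natAbs_eq h (x.2.1 j))
      right_inv := fun y => Subtype.ext (Prod.ext (funext fun i => mix_A i)
        (funext fun i => mix_B_natAbs i)) }
  exact Nat.card_congr (E1.trans E2)

end core

section fiber
open Finset

lemma sum_pred_add {ι : Type*} [Fintype ι] (u : ι → ℕ) (hu : ∀ i, u i ≠ 0) :
    (∑ i, (u i - 1)) + Fintype.card ι = ∑ i, u i := by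
  have h1 : ∑ i, ((u i - 1) + 1) = (∑ i, (u i - 1)) + ∑ _i : ι, 1 := Finset.sum_add_distrib
  have h2 : ∑ _i : ι, (1:ℕ) = Fintype.card ι := by
    rw [Finset.sum_const, smul_eq_mul, mul_one, Finset.card_univ]
  have h3 : ∑ i, ((u i - 1) + 1) = ∑ i, u i :=
    Finset.sum_congr rfl (fun i _ => by have := hu i; omega)
  omega

variable {A B : Type*} [Fintype A] [DecidableEq A] [Fintype B]

/-- build a signed function on `A` supported on `S` from a sign pattern and magnitudes -/
def bld (S : Finset A) (ε : ↥S → Bool) (gg : ↥S → ℕ) : A → ℤ :=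
  fun i => if h : i ∈ S then (if ε ⟨i, h⟩ then 1 else -1) * ((gg ⟨i, h⟩ + 1 : ℕ) : ℤ) else 0

variable {S : Finset A} {ε : ↥S → Bool} {gg : ↥S → ℕ}

lemma bld_mem {i : A} (h : i ∈ S) :
    bld S ε gg i = (if ε ⟨i, h⟩ then 1 else -1) * ((gg ⟨i, h⟩ + 1 : ℕ) : ℤ) := dif_pos h

lemma bld_nmem {i : A} (h : i ∉ S) : bld S ε gg i = 0 := dif_neg h

lemma bld_coe (i : ↥S) : bld S ε gg i.1 = (if ε i then 1 else -1) * ((gg i + 1 : ℕ) : ℤ) := by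
  rw [bld_mem i.2, Subtype.coe_eta]

lemma bld_natAbs (i : ↥S) : (bld S ε gg i.1).natAbs = gg i + 1 := by
  rw [bld_coe, Int.natAbs_mul]
  cases h : ε i <;> simp <;> omega

lemma bld_ne (i : ↥S) : bld S ε gg i.1 ≠ 0 := by
  intro h0
  have h := bld_natAbs (ε := ε) (gg := gg) i
  rw [h0] at h
  simp at h

lemma bld_supp (i : A) : ¬ bld S ε gg i = 0 ↔ i ∈ S := by
  constructor
  · intro h; by_contra hn; exact h (bld_nmem hn)
  · intro h; exact bld_ne ⟨i, h⟩

lemma count_fiber (z s' t : ℕ) (hA : Fintype.card A = z + s') (hst : s' ≤ t)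
    (S : Finset A) (hS : S.card = s') :
    Nat.card {p : (A → ℤ) × (B → ℕ) //
      ((univ.filter fun i : A => p.1 i = 0).card = z ∧
        (∑ i, (p.1 i).natAbs) + (∑ i, p.2 i) = t)
      ∧ univ.filter (fun i : A => ¬ p.1 i = 0) = S}
    = 2 ^ s' * Nat.multichoose (s' + Fintype.card B) (t - s') := by
  classical
  have E3 : {p : (A → ℤ) × (B → ℕ) //
      ((univ.filter fun i : A => p.1 i = 0).card = z ∧
        (∑ i, (p.1 i).natAbs) + (∑ i, p.2 i) = t)
      ∧ univ.filter (fun i : A => ¬ p.1 i = 0) = S}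
      ≃ (↥S → Bool) × {g : (↥S ⊕ B) → ℕ // ∑ x, g x = t - s'} :=
    { toFun := fun x => (fun i => decide (0 < x.1.1 i.1),
        ⟨Sum.elim (fun i => (x.1.1 i.1).natAbs - 1) x.1.2, by
          obtain ⟨⟨hz, hsum⟩, hsupp⟩ := x.2
          have he : ∀ i : ↥S, x.1.1 i.1 ≠ 0 := by
            intro i
            have hi2 : (i : A) ∈ univ.filter (fun j => ¬ x.1.1 j = 0) := by
              rw [hsupp]; exact i.2
            exact (mem_filter.mp hi2).2
          rw [Fintype.sum_sum_type]
          simp only [Sum.elim_inl, Sum.elim_inr]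
          have h1 : (∑ i : ↥S, ((x.1.1 i.1).natAbs - 1)) + Fintype.card ↥S
              = ∑ i : ↥S, (x.1.1 i.1).natAbs :=
            sum_pred_add _ (fun i => Int.natAbs_ne_zero.mpr (he i))
          have hcard : Fintype.card ↥S = s' := by rw [Fintype.card_coe, hS]
          have h2 : ∑ i : ↥S, (x.1.1 i.1).natAbs = ∑ i : A, (x.1.1 i).natAbs := by
            rw [Finset.sum_coe_sort S (fun i => (x.1.1 i).natAbs)]
            refine Finset.sum_subset (subset_univ S) (fun i _ hi => ?_)
            have hz0 : x.1.1 i = 0 := by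
              by_contra hne
              exact hi (hsupp ▸ mem_filter.mpr ⟨mem_univ i, hne⟩)
            rw [hz0]; rfl
          omega⟩)
      invFun := fun w => ⟨(bld S w.1 (fun i => w.2.1 (Sum.inl i)), fun b => w.2.1 (Sum.inr b)), by
        obtain ⟨ε, g, hg⟩ := w
        refine ⟨⟨?_, ?_⟩, ?_⟩
        · have hfz : univ.filter (fun i => bld S ε (fun i => g (Sum.inl i)) i = 0) = Sᶜ := by
            ext i
            simp only [mem_filter, mem_univ, true_and, mem_compl]
            constructor
            · intro h hi; exact bld_ne ⟨i, hi⟩ h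
            · intro h; exact bld_nmem h
          rw [hfz, card_compl, hA, hS]
          omega
        · show (∑ i : A, (bld S ε (fun i => g (Sum.inl i)) i).natAbs)
              + (∑ b : B, g (Sum.inr b)) = t
          have h2 : ∑ i : ↥S, (bld S ε (fun i => g (Sum.inl i)) i.1).natAbs
              = ∑ i : A, (bld S ε (fun i => g (Sum.inl i)) i).natAbs := by
            rw [Finset.sum_coe_sort S (fun i => (bld S ε (fun i => g (Sum.inl i)) i).natAbs)]
            refine Finset.sum_subset (subset_univ S) (fun i _ hi => ?_)
            rw [bld_nmem hi]; rfl
          have h3 : ∑ i : ↥S, (bld S ε (fun i => g (Sum.inl i)) i.1).natAbs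
              = (∑ i : ↥S, g (Sum.inl i)) + s' := by
            rw [Fintype.sum_congr _ _ (fun i => bld_natAbs i), Finset.sum_add_distrib]
            congr 1
            rw [Finset.sum_const, smul_eq_mul, mul_one, Finset.card_univ, Fintype.card_coe, hS]
          have h4 : (∑ i : ↥S, g (Sum.inl i)) + (∑ b : B, g (Sum.inr b)) = t - s' := by
            rw [← Fintype.sum_sum_type]; exact hg
          omega
        · ext i
          simp only [mem_filter, mem_univ, true_and]
          exact bld_supp i⟩
      left_inv := fun x => by
        obtain ⟨⟨e, f⟩, ⟨hz, hsum⟩, hsupp⟩ := x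
        refine Subtype.ext (Prod.ext (funext fun i => ?_) rfl)
        show bld S (fun i' => decide (0 < e i'.1)) (fun i' => (e i'.1).natAbs - 1) i = e i
        by_cases h : i ∈ S
        · have hne : e i ≠ 0 := by
            rw [← hsupp] at h
            exact (mem_filter.mp h).2
          rw [bld_mem h]
          have hc : ((e i).natAbs - 1 + 1 : ℕ) = (e i).natAbs :=
            Nat.sub_add_cancel (Nat.one_le_iff_ne_zero.mpr (Int.natAbs_ne_zero.mpr hne))
          show (if decide (0 < e i) then (1:ℤ) else -1) * (((e i).natAbs - 1 + 1 : ℕ) : ℤ) = e i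
          rw [hc]
          by_cases hpos : 0 < e i
          · rw [if_pos (decide_eq_true hpos)]
            omega
          · rw [if_neg (by simpa using hpos)]
            omega
        · have hz0 : e i = 0 := by
            by_contra hne
            exact h (hsupp ▸ mem_filter.mpr ⟨mem_univ i, hne⟩)
          rw [bld_nmem h, hz0]
      right_inv := fun w => by
        obtain ⟨ε, g, hg⟩ := w
        refine Prod.ext (funext fun i => ?_) (Subtype.ext (funext fun x => ?_))
        · show decide (0 < bld S ε (fun i' => g (Sum.inl i')) i.1) = ε i
          rw [bld_coe]
          beta_reduce
          cases hε : ε i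
          · rw [if_neg Bool.false_ne_true]
            refine decide_eq_false ?_
            have h5 : (0:ℤ) < ((g (Sum.inl i) + 1 : ℕ) : ℤ) := by positivity
            omega
          · rw [if_pos rfl]
            refine decide_eq_true ?_
            have h5 : (0:ℤ) < ((g (Sum.inl i) + 1 : ℕ) : ℤ) := by positivity
            omega
        · cases x with
          | inl i =>
            show (bld S ε (fun i' => g (Sum.inl i')) i.1).natAbs - 1 = g (Sum.inl i)
            rw [bld_natAbs]
            omega
          | inr b => rfl }
  rw [Nat.card_congr E3, Nat.card_prod]
  congr 1
  · rw [Nat.card_eq_fintype_card, Fintype.card_fun, Fintype.card_coe, hS, Fintype.card_bool]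
  · rw [natCard_sum_eq, Fintype.card_sum, Fintype.card_coe, hS]

end fiber

section T2
open Finset

lemma count_T2 {A B : Type*} [Fintype A] [DecidableEq A] [Fintype B] [DecidableEq B]
    (z s' t : ℕ) (hA : Fintype.card A = z + s') (hst : s' ≤ t) :
    Nat.card {p : (A → ℤ) × (B → ℕ) //
        (univ.filter fun i : A => p.1 i = 0).card = z ∧
        (∑ i, (p.1 i).natAbs) + (∑ i, p.2 i) = t}
    = (z + s').choose s' * (2 ^ s' * Nat.multichoose (s' + Fintype.card B) (t - s')) := by
  set Ω2 : Finset ((A → ℤ) × (B → ℕ)) :=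
    ((Fintype.piFinset fun _ : A => Finset.Icc (-(t:ℤ)) t) ×ˢ
      Fintype.piFinset fun _ : B => Finset.range (t+1)).filter
      (fun p => (univ.filter fun i : A => p.1 i = 0).card = z ∧
        (∑ i, (p.1 i).natAbs) + (∑ i, p.2 i) = t) with hΩ2
  have hmem : ∀ p : (A → ℤ) × (B → ℕ),
      ((univ.filter fun i : A => p.1 i = 0).card = z ∧
        (∑ i, (p.1 i).natAbs) + (∑ i, p.2 i) = t) ↔ p ∈ Ω2 := by
    intro p
    rw [hΩ2, mem_filter, Finset.mem_product, Fintype.mem_piFinset, Fintype.mem_piFinset]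
    constructor
    · intro h
      refine ⟨⟨fun i => ?_, fun b => ?_⟩, h⟩
      · have h1 : (p.1 i).natAbs ≤ ∑ i, (p.1 i).natAbs :=
          Finset.single_le_sum (f := fun i => (p.1 i).natAbs) (fun _ _ => Nat.zero_le _)
            (mem_univ i)
        rw [Finset.mem_Icc]
        omega
      · have h1 : p.2 b ≤ ∑ i, p.2 i :=
          Finset.single_le_sum (f := fun i => p.2 i) (fun _ _ => Nat.zero_le _) (mem_univ b)
        rw [Finset.mem_range]
        omega
    · exact fun h => h.2
  rw [natCard_subtype Ω2 _ hmem]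
  have hmap : ∀ p ∈ Ω2, univ.filter (fun i : A => ¬ p.1 i = 0) ∈ Finset.powersetCard s' univ := by
    intro p hp
    rw [Finset.mem_powersetCard]
    refine ⟨subset_univ _, ?_⟩
    have hcond := (hmem p).mpr hp
    have h2 : univ.filter (fun i : A => ¬ p.1 i = 0)
        = univ \ univ.filter (fun i : A => p.1 i = 0) := Finset.filter_not _ _
    rw [h2, Finset.card_sdiff_of_subset (Finset.filter_subset _ _), Finset.card_univ, hA, hcond.1]
    omega
  rw [Finset.card_eq_sum_card_fiberwise hmap]
  have hfib : ∀ S ∈ Finset.powersetCard s' univ,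
      (Ω2.filter (fun p => univ.filter (fun i : A => ¬ p.1 i = 0) = S)).card
      = 2 ^ s' * Nat.multichoose (s' + Fintype.card B) (t - s') := by
    intro S hS
    have hScard : S.card = s' := (Finset.mem_powersetCard.mp hS).2
    rw [← count_fiber z s' t hA hst S hScard]
    refine (natCard_subtype _ _ (fun p => ?_)).symm
    rw [mem_filter]
    constructor
    · rintro ⟨h1, h2⟩; exact ⟨(hmem p).mp h1, h2⟩
    · rintro ⟨h1, h2⟩; exact ⟨(hmem p).mpr h1, h2⟩
  rw [Finset.sum_congr rfl hfib, Finset.sum_const, smul_eq_mul,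
    Finset.card_powersetCard, Finset.card_univ, hA]

end T2

section corefinal
open Finset

lemma core_count {q m : ℕ} (hq : 1 ≤ q) (ν : Fin m → ℤ) (z s' t : ℕ)
    (hred : ∀ j, (ν j).natAbs < q)
    (hw : (univ.filter fun j => ν j = 0).card = z + s')
    (hzm : z < m) (hst : s' ≤ t) :
    Nat.card {a : Fin m → ℤ // (∀ j, redP q (a j) = ν j) ∧
      (univ.filter fun j => a j = 0).card = z ∧ (∑ j, quoP q (a j)) = t}
    = 2 ^ s' * (z + s').choose s' * (t - s' + m - z - 1).choose (m - z - 1) := by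
  have hA : Fintype.card {j // ν j = 0} = z + s' := by
    rw [Fintype.card_subtype]; exact hw
  have hzs : z + s' ≤ m := by
    rw [← hw]
    exact le_trans (Finset.card_filter_le _ _) (by rw [Finset.card_univ, Fintype.card_fin])
  have hB : Fintype.card {j // ¬ ν j = 0} = m - (z + s') := by
    rw [Fintype.card_subtype, Finset.filter_not, Finset.card_sdiff_of_subset (Finset.filter_subset _ _),
      Finset.card_univ, Fintype.card_fin, hw]
  rw [core_step12 hq z t hred, count_T2 z s' t hA hst, hB]
  have e0 : s' + (m - (z + s')) = m - z := by omega
  rw [e0]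
  have e1 : Nat.multichoose (m - z) (t - s') = (t - s' + m - z - 1).choose (m - z - 1) := by
    rw [Nat.multichoose_eq]
    have h1 : m - z + (t - s') - 1 = (m - z - 1) + (t - s') := by omega
    have h2 : t - s' + m - z - 1 = (m - z - 1) + (t - s') := by omega
    rw [h1, h2]
    have h4 := Nat.choose_symm (Nat.le_add_left (t - s') (m - z - 1))
    rw [Nat.add_sub_cancel] at h4
    exact h4.symm
  rw [e1]
  ring

end corefinal

section main
open Finset


/-- The counting formula expressing `N_𝓛(k,z)` in terms of the reduced counts. -/
theorem NL_eq_sum_NLred (q m : ℕ) (hq : 1 ≤ q) (hm : 1 ≤ m) (s : Fin m → ℤ)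
    (k α r₀ : ℕ) (hk : k = α * q + r₀) (hr₀ : r₀ < q) (z : ℕ) (hz : z ≤ m - 1) :
    NL q m s k z =
      ∑ s' ∈ Finset.range (m - z + 1), 2 ^ s' * (z + s').choose s' *
        ∑ t ∈ Finset.Icc s' α,
          (t - s' + m - z - 1).choose (m - z - 1) * NLred q m s (k - t * q) (z + s') := by
  classical
  have hzm : z < m := by omega
  -- the finite set of lattice points counted by NL
  set ΩA : Finset (Fin m → ℤ) :=
    (Fintype.piFinset fun _ => Finset.Icc (-(k:ℤ)) k).filter
      (fun a => ((q:ℤ) ∣ ∑ j, a j * s j) ∧ (∑ j, (a j).natAbs) = k ∧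
        (univ.filter fun j => a j = 0).card = z) with hΩA
  have hmemA : ∀ a : Fin m → ℤ,
      (a ∈ congLat q m s ∧ (∑ j, (a j).natAbs) = k ∧
        (univ.filter fun j => a j = 0).card = z) ↔ a ∈ ΩA := by
    intro a
    rw [hΩA, mem_filter, Fintype.mem_piFinset]
    constructor
    · rintro ⟨h1, h2, h3⟩
      refine ⟨fun j => ?_, h1, h2, h3⟩
      have hb : (a j).natAbs ≤ ∑ j, (a j).natAbs :=
        Finset.single_le_sum (f := fun j => (a j).natAbs) (fun _ _ => Nat.zero_le _) (mem_univ j)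
      rw [mem_Icc]
      omega
    · rintro ⟨_, h1, h2, h3⟩
      exact ⟨h1, h2, h3⟩
  have hNL : NL q m s k z = ΩA.card := by
    rw [NL]
    exact natCard_subtype _ _ hmemA
  -- the finite sets of reduced lattice points
  have hNLred : ∀ k' z', NLred q m s k' z' =
      ((Fintype.piFinset fun _ : Fin m => Finset.Icc (-(k':ℤ)) k').filter
        (fun ν => ((q:ℤ) ∣ ∑ j, ν j * s j) ∧ (∀ j, (ν j).natAbs < q) ∧
          (∑ j, (ν j).natAbs) = k' ∧ (univ.filter fun j => ν j = 0).card = z')).card := by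
    intro k' z'
    rw [NLred]
    refine natCard_subtype _ _ (fun a => ?_)
    rw [mem_filter, Fintype.mem_piFinset]
    constructor
    · rintro ⟨h1, h2, h3, h4⟩
      refine ⟨fun j => ?_, h1, h2, h3, h4⟩
      have hb : (a j).natAbs ≤ ∑ j, (a j).natAbs :=
        Finset.single_le_sum (f := fun j => (a j).natAbs) (fun _ _ => Nat.zero_le _) (mem_univ j)
      rw [mem_Icc]
      omega
    · rintro ⟨_, h1, h2, h3, h4⟩
      exact ⟨h1, h2, h3, h4⟩
  rw [hNL]
  -- basic facts
  have fact1 : ∀ a : Fin m → ℤ, (univ.filter fun j => a j = 0).card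
      ≤ (univ.filter fun j => redP q (a j) = 0).card := by
    intro a
    refine Finset.card_le_card (fun j hj => ?_)
    rw [mem_filter] at hj ⊢
    refine ⟨hj.1, ?_⟩
    rw [hj.2]
    simp [redP]
  have factT : ∀ a : Fin m → ℤ, (∑ j, (a j).natAbs) = k → (∑ j, quoP q (a j)) ≤ α := by
    intro a ha
    have h1 : ∀ j, q * quoP q (a j) ≤ (a j).natAbs := by
      intro j
      rw [quoP, mul_comm]
      exact Nat.div_mul_le_self _ _
    have h2 : q * (∑ j, quoP q (a j)) ≤ ∑ j, (a j).natAbs := by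
      rw [Finset.mul_sum]
      exact Finset.sum_le_sum (fun j _ => h1 j)
    by_contra hgt
    have h3 : α + 1 ≤ ∑ j, quoP q (a j) := by omega
    have h4 : q * (α + 1) ≤ q * (∑ j, quoP q (a j)) := Nat.mul_le_mul_left q h3
    have h5 : q * (α + 1) = α * q + q := by ring
    omega
  -- the double fibration
  have hmap : ∀ a ∈ ΩA, (((univ.filter fun j => redP q (a j) = 0).card - z,
      ∑ j, quoP q (a j)) : ℕ × ℕ) ∈ Finset.range (m - z + 1) ×ˢ Finset.range (α + 1) := by
    intro a ha
    obtain ⟨_, h2, h3⟩ := (hmemA a).mpr ha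
    rw [Finset.mem_product, mem_range, mem_range]
    constructor
    · have : (univ.filter fun j => redP q (a j) = 0).card ≤ m := by
        refine le_trans (Finset.card_filter_le _ _) ?_
        rw [Finset.card_univ, Fintype.card_fin]
      omega
    · have := factT a h2
      omega
  rw [Finset.card_eq_sum_card_fiberwise hmap, Finset.sum_product]
  refine Finset.sum_congr rfl (fun s' _ => ?_)
  have key : ∀ t ∈ Finset.range (α + 1),
      (ΩA.filter fun a => (((univ.filter fun j => redP q (a j) = 0).card - z,
        ∑ j, quoP q (a j)) : ℕ × ℕ) = (s', t)).card
      = if s' ≤ t then 2 ^ s' * (z + s').choose s' *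
          ((t - s' + m - z - 1).choose (m - z - 1) * NLred q m s (k - t * q) (z + s')) else 0 := by
    intro t ht
    rw [mem_range] at ht
    by_cases hst : s' ≤ t
    · rw [if_pos hst]
      set ΩR : Finset (Fin m → ℤ) :=
        (Fintype.piFinset fun _ : Fin m => Finset.Icc (-((k - t * q : ℕ):ℤ)) ((k - t * q : ℕ):ℤ)).filter
          (fun ν => ((q:ℤ) ∣ ∑ j, ν j * s j) ∧ (∀ j, (ν j).natAbs < q) ∧
            (∑ j, (ν j).natAbs) = k - t * q ∧
            (univ.filter fun j => ν j = 0).card = z + s') with hΩR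
      have hmap2 : ∀ a ∈ ΩA.filter (fun a => (((univ.filter fun j => redP q (a j) = 0).card - z,
          ∑ j, quoP q (a j)) : ℕ × ℕ) = (s', t)),
          (fun j => redP q (a j)) ∈ ΩR := by
        intro a ha
        rw [mem_filter] at ha
        obtain ⟨haA, hkf⟩ := ha
        obtain ⟨hdvd, h2, h3⟩ := (hmemA a).mpr haA
        rw [Prod.mk.injEq] at hkf
        obtain ⟨hW, hT⟩ := hkf
        have hWz : z ≤ (univ.filter fun j => redP q (a j) = 0).card := h3 ▸ fact1 a
        have hsum_split : ∑ j, (a j).natAbs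
            = q * (∑ j, quoP q (a j)) + ∑ j, (redP q (a j)).natAbs := by
          rw [Finset.mul_sum, ← Finset.sum_add_distrib]
          refine Finset.sum_congr rfl (fun j _ => ?_)
          rw [natAbs_redP, quoP]
          exact (Nat.div_add_mod _ q).symm
        rw [hT] at hsum_split
        have hcm : t * q = q * t := mul_comm t q
        have hred_sum : ∑ j, (redP q (a j)).natAbs = k - t * q := by omega
        rw [hΩR, mem_filter, Fintype.mem_piFinset]
        refine ⟨fun j => ?_, ?_, fun j => natAbs_redP_lt hq _, hred_sum, ?_⟩
        · have hb : (redP q (a j)).natAbs ≤ ∑ j, (redP q (a j)).natAbs :=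
            Finset.single_le_sum (f := fun j => (redP q (a j)).natAbs)
              (fun _ _ => Nat.zero_le _) (mem_univ j)
          rw [mem_Icc]
          omega
        · show (q:ℤ) ∣ ∑ j, redP q (a j) * s j
          have hsub : ∀ j, redP q (a j) = a j - q * dP q (a j) := by
            intro j
            have := decomp_eq (q := q) (a j)
            linarith
          rw [Finset.sum_congr rfl (fun j _ => by rw [hsub j, sub_mul]),
            Finset.sum_sub_distrib]
          refine dvd_sub hdvd ?_
          rw [Finset.sum_congr rfl (fun j (_ : j ∈ univ) => mul_assoc (q:ℤ) (dP q (a j)) (s j)),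
            ← Finset.mul_sum]
          exact Dvd.intro _ rfl
        · show (univ.filter fun j => redP q (a j) = 0).card = z + s'
          omega
      rw [Finset.card_eq_sum_card_fiberwise hmap2]
      have hfib2 : ∀ ν ∈ ΩR,
          ((ΩA.filter (fun a => (((univ.filter fun j => redP q (a j) = 0).card - z,
            ∑ j, quoP q (a j)) : ℕ × ℕ) = (s', t))).filter
              (fun a => (fun j => redP q (a j)) = ν)).card
          = 2 ^ s' * (z + s').choose s' * (t - s' + m - z - 1).choose (m - z - 1) := by
        intro ν hν
        rw [hΩR, mem_filter, Fintype.mem_piFinset] at hν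
        obtain ⟨hbound, hνdvd, hνred, hνsum, hνzero⟩ := hν
        have hiff : ∀ a : Fin m → ℤ,
            ((∀ j, redP q (a j) = ν j) ∧ (univ.filter fun j => a j = 0).card = z ∧
              (∑ j, quoP q (a j)) = t)
            ↔ a ∈ (ΩA.filter (fun a => (((univ.filter fun j => redP q (a j) = 0).card - z,
              ∑ j, quoP q (a j)) : ℕ × ℕ) = (s', t))).filter
                (fun a => (fun j => redP q (a j)) = ν) := by
          intro a
          rw [mem_filter, mem_filter]
          constructor
          · rintro ⟨h1, h2, h3⟩
            have hWa : (univ.filter fun j => redP q (a j) = 0)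
                = (univ.filter fun j => ν j = 0) :=
              Finset.filter_congr (fun j _ => by rw [h1 j])
            have haj : ∀ j, a j = ν j + q * dP q (a j) := by
              intro j
              have hd := decomp_eq (q := q) (a j)
              rw [h1 j] at hd
              exact hd
            have hsum_split : ∑ j, (a j).natAbs
                = q * (∑ j, quoP q (a j)) + ∑ j, (ν j).natAbs := by
              rw [Finset.mul_sum, ← Finset.sum_add_distrib]
              refine Finset.sum_congr rfl (fun j _ => ?_)
              rw [← h1 j, natAbs_redP, quoP]
              exact (Nat.div_add_mod _ q).symm
            have htq : t * q ≤ k := by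
              have h4 : t * q ≤ α * q := Nat.mul_le_mul_right q (by omega)
              omega
            have hcm : t * q = q * t := mul_comm t q
            rw [h3] at hsum_split
            have hsk : ∑ j, (a j).natAbs = k := by omega
            refine ⟨⟨(hmemA a).mp ⟨?_, hsk, h2⟩, ?_⟩, funext h1⟩
            · show (q:ℤ) ∣ ∑ j, a j * s j
              rw [Finset.sum_congr rfl (fun j (_ : j ∈ univ) => by rw [haj j, add_mul]),
                Finset.sum_add_distrib]
              refine dvd_add hνdvd ?_
              rw [Finset.sum_congr rfl
                  (fun j (_ : j ∈ univ) => mul_assoc (q:ℤ) (dP q (a j)) (s j)),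
                ← Finset.mul_sum]
              exact Dvd.intro _ rfl
            · rw [Prod.mk.injEq]
              refine ⟨?_, h3⟩
              rw [hWa, hνzero]
              omega
          · intro hmemF
            obtain ⟨⟨haA, hkf⟩, hredf⟩ := hmemF
            have h1 : ∀ j, redP q (a j) = ν j := fun j => congrFun hredf j
            obtain ⟨_, h2, h3⟩ := (hmemA a).mpr haA
            rw [Prod.mk.injEq] at hkf
            exact ⟨h1, h3, hkf.2⟩
        calc ((ΩA.filter (fun a => (((univ.filter fun j => redP q (a j) = 0).card - z,
              ∑ j, quoP q (a j)) : ℕ × ℕ) = (s', t))).filter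
                (fun a => (fun j => redP q (a j)) = ν)).card
            = Nat.card {a : Fin m → ℤ // (∀ j, redP q (a j) = ν j) ∧
                (univ.filter fun j => a j = 0).card = z ∧ (∑ j, quoP q (a j)) = t} :=
              (natCard_subtype _ _ hiff).symm
          _ = 2 ^ s' * (z + s').choose s' * (t - s' + m - z - 1).choose (m - z - 1) :=
              core_count hq ν z s' t hνred hνzero hzm hst
      rw [Finset.sum_congr rfl hfib2, Finset.sum_const, smul_eq_mul]
      rw [hNLred (k - t * q) (z + s'), ← hΩR]
      ring
    · rw [if_neg hst]
      rw [Finset.card_eq_zero, Finset.filter_eq_empty_iff]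
      intro a ha hkf
      obtain ⟨_, h2, h3⟩ := (hmemA a).mpr ha
      rw [Prod.mk.injEq] at hkf
      obtain ⟨hW, hT⟩ := hkf
      have hWz : z ≤ (univ.filter fun j => redP q (a j) = 0).card := h3 ▸ fact1 a
      -- count of coordinates with redP = 0 but a ≠ 0
      have hsplit : ((univ.filter fun j => redP q (a j) = 0).filter fun j => a j = 0).card
          + ((univ.filter fun j => redP q (a j) = 0).filter fun j => ¬ a j = 0).card
          = (univ.filter fun j => redP q (a j) = 0).card :=
        Finset.card_filter_add_card_filter_not _
      have heq1 : (univ.filter fun j => redP q (a j) = 0).filter (fun j => a j = 0)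
          = univ.filter fun j => a j = 0 := by
        rw [Finset.filter_filter]
        refine Finset.filter_congr (fun j _ => ?_)
        constructor
        · exact fun h => h.2
        · intro h
          refine ⟨?_, h⟩
          rw [h]; simp [redP]
      have hU : ∀ j ∈ (univ.filter fun j => redP q (a j) = 0).filter fun j => ¬ a j = 0,
          1 ≤ quoP q (a j) := by
        intro j hj
        rw [Finset.filter_filter, mem_filter] at hj
        obtain ⟨-, hr0, hne⟩ := hj
        have hmod : (a j).natAbs % q = 0 := by
          have := natAbs_redP (q := q) (a j)
          rw [hr0] at this
          simpa using this.symm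
        have hdvd : q ∣ (a j).natAbs := Nat.dvd_of_mod_eq_zero hmod
        have hpos : 0 < (a j).natAbs := Int.natAbs_pos.mpr hne
        have hge : q ≤ (a j).natAbs := Nat.le_of_dvd hpos hdvd
        rw [quoP]
        exact (Nat.one_le_div_iff (by omega)).mpr hge
      have hsub : ((univ.filter fun j => redP q (a j) = 0).filter fun j => ¬ a j = 0).card
          ≤ ∑ j, quoP q (a j) := by
        calc ((univ.filter fun j => redP q (a j) = 0).filter fun j => ¬ a j = 0).card
            = ∑ j ∈ (univ.filter fun j => redP q (a j) = 0).filter fun j => ¬ a j = 0, 1 := by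
              rw [Finset.card_eq_sum_ones]
          _ ≤ ∑ j ∈ (univ.filter fun j => redP q (a j) = 0).filter fun j => ¬ a j = 0,
                quoP q (a j) := Finset.sum_le_sum hU
          _ ≤ ∑ j, quoP q (a j) := Finset.sum_le_sum_of_subset (fun j _ => mem_univ j)
      have heq1c := congrArg Finset.card heq1
      omega
  rw [Finset.sum_congr rfl key, ← Finset.sum_filter]
  have hIcc : (Finset.range (α + 1)).filter (fun t => s' ≤ t) = Finset.Icc s' α := by
    ext t
    rw [mem_filter, mem_range, mem_Icc]
    omega
  rw [hIcc, Finset.mul_sum]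

end main
end

section
/- Let q, m ≥ 1 and let 𝓛 = 𝓛(q;s₁,…,s_m) and 𝓛' = 𝓛(q;s'₁,…,s'_m) be two congruence lattices in ℤ^m for the same modulus q. Then N_𝓛(k,z) = N_{𝓛'}(k,z) for every k ∈ ℕ and every 0 ≤ z ≤ m if and only if N^red_𝓛(k,z) = N^red_{𝓛'}(k,z) for every k ∈ ℕ and every 0 ≤ z ≤ m. -/
namespace NLaux

/-- scalar reduction -/
def redZ (q : ℕ) (x : ℤ) : ℤ := x.sign * ((x.natAbs % q : ℕ) : ℤ)

def amZ (q : ℕ) (r c : ℤ) : ℤ := if r = 0 then (q : ℤ) * c else r + r.sign * ((q : ℤ) * c)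

def cmZ (q : ℕ) (x : ℤ) : ℤ :=
  if x.natAbs % q = 0 then x / (q : ℤ) else ((x.natAbs / q : ℕ) : ℤ)

lemma natAbs_redZ (q : ℕ) (x : ℤ) : (redZ q x).natAbs = x.natAbs % q := by
  rcases eq_or_ne x 0 with rfl | hx
  · simp [redZ]
  · rw [redZ, Int.natAbs_mul, Int.natAbs_sign_of_ne_zero hx, one_mul, Int.natAbs_natCast]

lemma redZ_lt (q : ℕ) (hq : 1 ≤ q) (x : ℤ) : (redZ q x).natAbs < q := by
  rw [natAbs_redZ]; exact Nat.mod_lt _ hq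

lemma redZ_eq_zero_iff (q : ℕ) (x : ℤ) : redZ q x = 0 ↔ x.natAbs % q = 0 := by
  rw [← Int.natAbs_eq_zero, natAbs_redZ]

lemma dvd_sub_redZ (q : ℕ) (x : ℤ) : (q : ℤ) ∣ x - redZ q x := by
  have h1 : x - redZ q x = x.sign * (((x.natAbs : ℤ)) - ((x.natAbs % q : ℕ) : ℤ)) := by
    rw [mul_sub, Int.sign_mul_natAbs, redZ]
  rw [h1]
  have h2 : ((x.natAbs : ℤ)) - ((x.natAbs % q : ℕ) : ℤ) = ((x.natAbs - x.natAbs % q : ℕ) : ℤ) := by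
    have := Nat.mod_le x.natAbs q
    omega
  rw [h2]
  refine Dvd.dvd.mul_left (Int.natCast_dvd_natCast.mpr ⟨x.natAbs / q, ?_⟩) _
  have := Nat.div_add_mod x.natAbs q
  omega

lemma redZ_eq_self (q : ℕ) (x : ℤ) (h : x.natAbs < q) : redZ q x = x := by
  rw [redZ, Nat.mod_eq_of_lt h, Int.sign_mul_natAbs]


lemma sign_amZ (q : ℕ) (r c : ℤ) (hq : 1 ≤ q) (hr : r ≠ 0) (hc : 0 ≤ c) :
    (amZ q r c).sign = r.sign := by
  rw [amZ, if_neg hr]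
  have h1 : r + r.sign * ((q : ℤ) * c) = r.sign * ((r.natAbs : ℤ) + (q : ℤ) * c) := by
    rw [mul_add, Int.sign_mul_natAbs]
  rw [h1, Int.sign_mul]
  have hpos : (0 : ℤ) < (r.natAbs : ℤ) + (q : ℤ) * c := by
    have : (0:ℤ) < (r.natAbs : ℤ) := by
      exact_mod_cast Nat.pos_of_ne_zero (fun h => hr (Int.natAbs_eq_zero.mp h))
    nlinarith [mul_nonneg (by exact_mod_cast Nat.zero_le q : (0:ℤ) ≤ (q:ℤ)) hc]
  rw [Int.sign_eq_one_of_pos hpos, mul_one, Int.sign_sign]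

lemma natAbs_amZ (q : ℕ) (r c : ℤ) (hc : r ≠ 0 → 0 ≤ c) :
    (amZ q r c).natAbs = r.natAbs + q * c.natAbs := by
  rcases eq_or_ne r 0 with rfl | hr
  · simp [amZ, Int.natAbs_mul]
  · have hc' := hc hr
    have h1 : amZ q r c = r.sign * ((r.natAbs + q * c.natAbs : ℕ) : ℤ) := by
      rw [amZ, if_neg hr]
      rw [Nat.cast_add, Nat.cast_mul, mul_add, Int.sign_mul_natAbs,
        Int.natAbs_of_nonneg hc']
    rw [h1, Int.natAbs_mul, Int.natAbs_sign_of_ne_zero hr, one_mul, Int.natAbs_natCast]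

lemma amZ_eq_zero_iff (q : ℕ) (hq : 1 ≤ q) (r c : ℤ) (hc : r ≠ 0 → 0 ≤ c) :
    amZ q r c = 0 ↔ r = 0 ∧ c = 0 := by
  rw [← Int.natAbs_eq_zero, natAbs_amZ q r c hc]
  constructor
  · intro h
    have h1 : r.natAbs = 0 := by omega
    have h2 : q * c.natAbs = 0 := by omega
    have h3 : c.natAbs = 0 := by
      rcases Nat.mul_eq_zero.mp h2 with h | h
      · omega
      · exact h
    exact ⟨Int.natAbs_eq_zero.mp h1, Int.natAbs_eq_zero.mp h3⟩
  · rintro ⟨rfl, rfl⟩; simp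

lemma redZ_amZ (q : ℕ) (hq : 1 ≤ q) (r c : ℤ) (hr : r.natAbs < q) (hc : r ≠ 0 → 0 ≤ c) :
    redZ q (amZ q r c) = r := by
  rcases eq_or_ne r 0 with rfl | hr0
  · rw [redZ, natAbs_amZ q 0 c hc]
    simp [Nat.mul_mod_right]
  · rw [redZ, natAbs_amZ q r c hc, sign_amZ q r c hq hr0 (hc hr0)]
    have : (r.natAbs + q * c.natAbs) % q = r.natAbs := by
      rw [Nat.add_mul_mod_self_left, Nat.mod_eq_of_lt hr]
    rw [this, Int.sign_mul_natAbs]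

lemma cmZ_amZ (q : ℕ) (hq : 1 ≤ q) (r c : ℤ) (hr : r.natAbs < q) (hc : r ≠ 0 → 0 ≤ c) :
    cmZ q (amZ q r c) = c := by
  have hq' : (q : ℤ) ≠ 0 := by exact_mod_cast Nat.one_le_iff_ne_zero.mp hq
  rcases eq_or_ne r 0 with rfl | hr0
  · have hA : amZ q 0 c = (q:ℤ) * c := by rw [amZ, if_pos rfl]
    rw [cmZ, hA]
    have hB : ((q:ℤ)*c).natAbs % q = 0 := by
      rw [Int.natAbs_mul, Int.natAbs_natCast, Nat.mul_mod_right]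
    rw [if_pos hB, Int.mul_ediv_cancel_left _ hq']
  · have hrn : r.natAbs ≠ 0 := fun h => hr0 (Int.natAbs_eq_zero.mp h)
    rw [cmZ, natAbs_amZ q r c hc]
    have hmod : (r.natAbs + q * c.natAbs) % q = r.natAbs := by
      rw [Nat.add_mul_mod_self_left, Nat.mod_eq_of_lt hr]
    rw [hmod, if_neg hrn]
    have hdiv : (r.natAbs + q * c.natAbs) / q = c.natAbs := by
      rw [Nat.add_mul_div_left _ _ (Nat.pos_of_ne_zero (by omega)), Nat.div_eq_of_lt hr, zero_add]
    rw [hdiv, Int.natAbs_of_nonneg (hc hr0)]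

lemma amZ_redZ_cmZ (q : ℕ) (hq : 1 ≤ q) (x : ℤ) : amZ q (redZ q x) (cmZ q x) = x := by
  have hq' : (q : ℤ) ≠ 0 := by exact_mod_cast Nat.one_le_iff_ne_zero.mp hq
  by_cases h : x.natAbs % q = 0
  · rw [amZ, if_pos ((redZ_eq_zero_iff q x).mpr h), cmZ, if_pos h]
    refine Int.mul_ediv_cancel' ?_
    exact Int.dvd_natAbs.mp (Int.natCast_dvd_natCast.mpr (Nat.dvd_of_mod_eq_zero h))
  · have hx : x ≠ 0 := by
      intro h0; apply h; rw [h0]; simp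
    have hne : redZ q x ≠ 0 := fun h0 => h ((redZ_eq_zero_iff q x).mp h0)
    rw [amZ, if_neg hne, cmZ, if_neg h]
    have hsign : (redZ q x).sign = x.sign := by
      rw [redZ, Int.sign_mul]
      have hpos : (0:ℤ) < ((x.natAbs % q : ℕ) : ℤ) := by exact_mod_cast Nat.pos_of_ne_zero h
      rw [Int.sign_eq_one_of_pos hpos, mul_one, Int.sign_sign]
    rw [hsign, redZ]
    have : x.sign * ((x.natAbs % q : ℕ) : ℤ) + x.sign * ((q:ℤ) * ((x.natAbs / q : ℕ) : ℤ))
        = x.sign * ((x.natAbs % q + q * (x.natAbs / q) : ℕ) : ℤ) := by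
      push_cast; ring
    rw [this, Nat.mod_add_div, Int.sign_mul_natAbs]


variable {m : ℕ}

def redV (q : ℕ) (a : Fin m → ℤ) : Fin m → ℤ := fun j => redZ q (a j)
def amV (q : ℕ) (ρ c : Fin m → ℤ) : Fin m → ℤ := fun j => amZ q (ρ j) (c j)
def cmV (q : ℕ) (a : Fin m → ℤ) : Fin m → ℤ := fun j => cmZ q (a j)

lemma mem_congLat_iff_redV (q : ℕ) (s : Fin m → ℤ) (a : Fin m → ℤ) :
    a ∈ congLat q m s ↔ redV q a ∈ congLat q m s := by
  have hd : (q:ℤ) ∣ (∑ j, a j * s j) - ∑ j, redV q a j * s j := by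
    rw [← Finset.sum_sub_distrib]
    refine Finset.dvd_sum fun j _ => ?_
    rw [← sub_mul]
    exact Dvd.dvd.mul_right (dvd_sub_redZ q (a j)) _
  simp only [congLat, Set.mem_setOf_eq]
  constructor
  · intro h; have := dvd_sub h hd; simpa using this
  · intro h; have := dvd_add h hd; simpa using this

lemma amV_redV_cmV (q : ℕ) (hq : 1 ≤ q) (a : Fin m → ℤ) : amV q (redV q a) (cmV q a) = a := by
  funext j; exact amZ_redZ_cmZ q hq (a j)

section Pair

variable (q : ℕ) (hq : 1 ≤ q) (ρ c : Fin m → ℤ)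
  (hρ : ∀ j, (ρ j).natAbs < q) (hc : ∀ j, ρ j ≠ 0 → 0 ≤ c j)

include hc in
lemma sum_natAbs_amV :
    (∑ j, (amV q ρ c j).natAbs) = (∑ j, (ρ j).natAbs) + q * ∑ j, (c j).natAbs := by
  rw [Finset.mul_sum, ← Finset.sum_add_distrib]
  exact Finset.sum_congr rfl fun j _ => natAbs_amZ q (ρ j) (c j) (hc j)

include hq hc in
lemma filter_amV :
    (Finset.univ.filter fun j => amV q ρ c j = 0)
      = Finset.univ.filter fun j => ρ j = 0 ∧ c j = 0 := by
  refine Finset.filter_congr fun j _ => ?_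
  exact amZ_eq_zero_iff q hq (ρ j) (c j) (hc j)

include hq hρ hc in
lemma redV_amV : redV q (amV q ρ c) = ρ := by
  funext j; exact redZ_amZ q hq (ρ j) (c j) (hρ j) (hc j)

include hq hρ hc in
lemma cmV_amV : cmV q (amV q ρ c) = c := by
  funext j; exact cmZ_amZ q hq (ρ j) (c j) (hρ j) (hc j)

end Pair

lemma finite_of_bound (P : (Fin m → ℤ) → Prop) (N : ℕ)
    (h : ∀ a, P a → ∀ j, (a j).natAbs ≤ N) : Finite {a : Fin m → ℤ // P a} := by
  refine Finite.of_injective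
    (fun a : {a : Fin m → ℤ // P a} =>
      (fun j => (⟨a.1 j, by
        simp only [Finset.mem_Icc]
        have := h a.1 a.2 j
        omega⟩ : (Finset.Icc (-(N:ℤ)) (N:ℤ)))) : _ → (Fin m → (Finset.Icc (-(N:ℤ)) (N:ℤ))))
    ?_
  intro a b hab
  ext j
  exact congrArg Subtype.val (congrFun hab j)


lemma cmZ_nonneg (q : ℕ) (x : ℤ) (h : ¬ x.natAbs % q = 0) : 0 ≤ cmZ q x := by
  rw [cmZ, if_neg h]; exact Int.natCast_nonneg _

def CcP (q : ℕ) (k z : ℕ) (ρ : Fin m → ℤ) :=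
  {c : Fin m → ℤ // (∀ j, ρ j ≠ 0 → 0 ≤ c j) ∧
    (∑ j, (ρ j).natAbs) + q * (∑ j, (c j).natAbs) = k ∧
    (Finset.univ.filter fun j => ρ j = 0 ∧ c j = 0).card = z}

def CcT (q m k z k' z' : ℕ) :=
  {c : Fin m → ℤ // (∀ j : Fin m, ¬ ((j:ℕ) < z') → 0 ≤ c j) ∧
    k' + q * (∑ j, (c j).natAbs) = k ∧
    (Finset.univ.filter fun j : Fin m => (j:ℕ) < z' ∧ c j = 0).card = z}

noncomputable def F (q m k z k' z' : ℕ) : ℕ := Nat.card (CcT q m k z k' z')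

def fiberEquiv (q : ℕ) (hq : 1 ≤ q) (s : Fin m → ℤ) (k z : ℕ) (ρ : Fin m → ℤ)
    (hmem : ρ ∈ congLat q m s) (hρ : ∀ j, (ρ j).natAbs < q) :
    {a : {a : Fin m → ℤ // a ∈ congLat q m s ∧ (∑ j, (a j).natAbs) = k ∧
        (Finset.univ.filter fun j => a j = 0).card = z} // redV q a.1 = ρ}
      ≃ CcP q k z ρ where
  toFun a := ⟨cmV q a.1.1, by
    obtain ⟨⟨a0, hm0, hk0, hz0⟩, hred⟩ := a
    simp only at hred ⊢
    have hc : ∀ j, ρ j ≠ 0 → 0 ≤ cmV q a0 j := by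
      intro j hne
      apply cmZ_nonneg
      intro h0
      apply hne
      rw [← hred]
      exact (redZ_eq_zero_iff q (a0 j)).mpr h0
    have ha : a0 = amV q ρ (cmV q a0) := by
      conv_lhs => rw [← amV_redV_cmV q hq a0, hred]
    refine ⟨hc, ?_, ?_⟩
    · rw [← hk0]
      conv_rhs => rw [ha]
      exact (sum_natAbs_amV q ρ _ hc).symm
    · have h1 : (Finset.univ.filter fun j => a0 j = 0)
          = Finset.univ.filter fun j => ρ j = 0 ∧ cmV q a0 j = 0 := by
        conv_lhs => rw [ha]
        exact filter_amV q hq ρ (cmV q a0) hc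
      rw [← h1]
      exact hz0⟩
  invFun c := ⟨⟨amV q ρ c.1, by
    obtain ⟨c0, hc, hk0, hz0⟩ := c
    refine ⟨?_, ?_, ?_⟩
    · rw [mem_congLat_iff_redV q s, redV_amV q hq ρ c0 hρ hc]
      exact hmem
    · rw [sum_natAbs_amV q ρ c0 hc]
      exact hk0
    · rw [filter_amV q hq ρ c0 hc]
      exact hz0⟩, by
    obtain ⟨c0, hc, _, _⟩ := c
    exact redV_amV q hq ρ c0 hρ hc⟩
  left_inv a := by
    obtain ⟨⟨a0, hm0, hk0, hz0⟩, hred⟩ := a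
    apply Subtype.ext
    apply Subtype.ext
    show amV q ρ (cmV q a0) = a0
    conv_rhs => rw [← amV_redV_cmV q hq a0, hred]
  right_inv c := by
    apply Subtype.ext
    exact cmV_amV q hq ρ c.1 hρ c.2.1

lemma card_filter_comp_perm (σ : Equiv.Perm (Fin m)) (P : Fin m → Prop) [DecidablePred P] :
    (Finset.univ.filter fun j => P (σ j)).card = (Finset.univ.filter P).card := by
  refine Finset.card_bij (fun j _ => σ j) ?_ ?_ ?_
  · intro a ha
    simp only [Finset.mem_filter, Finset.mem_univ, true_and] at ha ⊢
    exact ha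
  · intro a _ b _ hab
    exact σ.injective hab
  · intro b hb
    refine ⟨σ.symm b, ?_, by simp⟩
    simp only [Finset.mem_filter, Finset.mem_univ, true_and] at hb ⊢
    simpa using hb

lemma exists_perm (p r : Fin m → Prop) [DecidablePred p] [DecidablePred r]
    (h : Fintype.card {j // p j} = Fintype.card {j // r j}) :
    ∃ σ : Equiv.Perm (Fin m), ∀ j, p (σ j) ↔ r j := by
  have h2 : Fintype.card {j // ¬ p j} = Fintype.card {j // ¬ r j} := by
    rw [Fintype.card_subtype_compl, Fintype.card_subtype_compl, h]
  obtain ⟨e1⟩ := Fintype.card_eq.mp h.symm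
  obtain ⟨e2⟩ := Fintype.card_eq.mp h2.symm
  refine ⟨(Equiv.sumCompl r).symm.trans ((e1.sumCongr e2).trans (Equiv.sumCompl p)), fun j => ?_⟩
  by_cases hr : r j
  · rw [Equiv.trans_apply, Equiv.trans_apply, Equiv.sumCompl_symm_apply_of_pos hr]
    simp only [Equiv.sumCongr_apply, Sum.map_inl, Equiv.sumCompl_apply_inl]
    exact iff_of_true (e1 ⟨j, hr⟩).2 hr
  · rw [Equiv.trans_apply, Equiv.trans_apply, Equiv.sumCompl_symm_apply_of_neg hr]
    simp only [Equiv.sumCongr_apply, Sum.map_inr, Equiv.sumCompl_apply_inr]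
    exact iff_of_false (e2 ⟨j, hr⟩).2 hr

lemma card_filter_lt (z' : ℕ) (hz : z' ≤ m) :
    (Finset.univ.filter fun j : Fin m => (j:ℕ) < z').card = z' := by
  classical
  rw [← Fintype.card_subtype]
  have e : {j : Fin m // (j:ℕ) < z'} ≃ Fin z' :=
    ⟨fun x => ⟨x.1.1, x.2⟩, fun y => ⟨⟨y.1, lt_of_lt_of_le y.2 hz⟩, y.2⟩,
      fun x => Subtype.ext (Fin.ext rfl), fun y => rfl⟩
  rw [Fintype.card_congr e, Fintype.card_fin]

def permEquiv (q k z k' z' : ℕ) (ρ : Fin m → ℤ) (σ : Equiv.Perm (Fin m))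
    (hσ : ∀ j, ρ (σ j) = 0 ↔ (j:ℕ) < z') (hk' : (∑ j, (ρ j).natAbs) = k') :
    CcP q k z ρ ≃ CcT q m k z k' z' where
  toFun c := ⟨fun j => c.1 (σ j), by
    classical
    obtain ⟨c0, hc, hk0, hz0⟩ := c
    refine ⟨?_, ?_, ?_⟩
    · intro j hj
      exact hc (σ j) fun h0 => hj ((hσ j).mp h0)
    · rw [Equiv.sum_comp σ (fun j => (c0 j).natAbs), ← hk']
      exact hk0
    · have h1 : (Finset.univ.filter fun j : Fin m => (j:ℕ) < z' ∧ c0 (σ j) = 0)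
          = Finset.univ.filter fun j : Fin m => ρ (σ j) = 0 ∧ c0 (σ j) = 0 := by
        refine Finset.filter_congr fun j _ => ?_
        rw [hσ j]
      rw [h1, card_filter_comp_perm σ (fun j => ρ j = 0 ∧ c0 j = 0)]
      exact hz0⟩
  invFun c := ⟨fun j => c.1 (σ.symm j), by
    classical
    obtain ⟨c0, hc, hk0, hz0⟩ := c
    refine ⟨?_, ?_, ?_⟩
    · intro j hj
      refine hc (σ.symm j) fun h0 => hj ?_
      have h1 := (hσ (σ.symm j)).mpr h0
      rwa [Equiv.apply_symm_apply] at h1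
    · rw [Equiv.sum_comp σ.symm (fun j => (c0 j).natAbs), hk']
      exact hk0
    · have h1 : (Finset.univ.filter fun j : Fin m => ρ j = 0 ∧ c0 (σ.symm j) = 0)
          = Finset.univ.filter fun j : Fin m => ((σ.symm j : Fin m):ℕ) < z' ∧ c0 (σ.symm j) = 0 := by
        refine Finset.filter_congr fun j _ => ?_
        rw [← hσ (σ.symm j), Equiv.apply_symm_apply]
      rw [h1, card_filter_comp_perm σ.symm (fun j => ((j:ℕ) < z' ∧ c0 j = 0))]
      exact hz0⟩
  left_inv c := by
    apply Subtype.ext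
    funext j
    simp
  right_inv c := by
    apply Subtype.ext
    funext j
    simp


lemma nat_card_sigma {ι : Type*} [Fintype ι] (g : ι → Type*) [∀ i, Finite (g i)] :
    Nat.card (Σ i, g i) = ∑ i, Nat.card (g i) := by
  haveI := fun i => Fintype.ofFinite (g i)
  rw [Nat.card_eq_fintype_card, Fintype.card_sigma]
  exact Finset.sum_congr rfl fun i _ => (Nat.card_eq_fintype_card).symm

lemma F_zero (q m k z k' z' : ℕ) (hk : k < k') : F q m k z k' z' = 0 := by
  haveI : IsEmpty (CcT q m k z k' z') := ⟨fun c => by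
    have := c.2.2.1
    omega⟩
  exact Nat.card_of_isEmpty

lemma sum_natAbs_eq_zero {c : Fin m → ℤ} (h : (∑ j, (c j).natAbs) = 0) : c = 0 := by
  funext j
  have := Finset.sum_eq_zero_iff.mp h j (Finset.mem_univ j)
  simpa [Int.natAbs_eq_zero] using this

lemma card_filter_lt_and_zero (z' : ℕ) (hz : z' ≤ m) :
    (Finset.univ.filter fun j : Fin m => (j:ℕ) < z' ∧ (0 : Fin m → ℤ) j = 0).card = z' := by
  have h : (Finset.univ.filter fun j : Fin m => (j:ℕ) < z' ∧ (0 : Fin m → ℤ) j = 0)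
      = Finset.univ.filter fun j : Fin m => (j:ℕ) < z' :=
    Finset.filter_congr fun j _ => by simp
  rw [h]; exact card_filter_lt z' hz

lemma F_diag (q m k z z' : ℕ) (hq : 1 ≤ q) (hz' : z' ≤ m) :
    F q m k z k z' = if z' = z then 1 else 0 := by
  classical
  have hc0 : ∀ c : CcT q m k z k z', c.1 = 0 := by
    intro c
    obtain ⟨c0, _, hk0, _⟩ := c
    have h1 : q * (∑ j, (c0 j).natAbs) = 0 := by omega
    have h2 : (∑ j, (c0 j).natAbs) = 0 := by
      rcases Nat.mul_eq_zero.mp h1 with h | h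
      · omega
      · exact h
    exact sum_natAbs_eq_zero h2
  have hfz : ∀ c : CcT q m k z k z', z' = z := by
    intro c
    obtain ⟨c0, hcc, hk0, hz0⟩ := c
    have hc00 : c0 = 0 := hc0 ⟨c0, hcc, hk0, hz0⟩
    subst hc00
    rw [card_filter_lt_and_zero z' hz'] at hz0
    exact hz0
  by_cases h : z' = z
  · subst h
    rw [if_pos rfl]
    haveI : Unique (CcT q m k z' k z') := {
      default := ⟨0, fun j _ => le_refl 0, by simp, card_filter_lt_and_zero z' hz'⟩
      uniq := fun c => Subtype.ext (hc0 c) }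
    exact Nat.card_unique
  · rw [if_neg h]
    haveI : IsEmpty (CcT q m k z k z') := ⟨fun c => h (hfz c)⟩
    exact Nat.card_of_isEmpty


def AType (q m : ℕ) (s : Fin m → ℤ) (k z : ℕ) :=
  {a : Fin m → ℤ // a ∈ congLat q m s ∧ (∑ j, (a j).natAbs) = k ∧
    (Finset.univ.filter fun j => a j = 0).card = z}

def RType (q m : ℕ) (s : Fin m → ℤ) :=
  {ρ : Fin m → ℤ // ρ ∈ congLat q m s ∧ ∀ j, (ρ j).natAbs < q}

lemma zc_le (a : Fin m → ℤ) : (Finset.univ.filter fun j => a j = 0).card ≤ m := by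
  refine le_trans (Finset.card_filter_le _ _) ?_
  simp

lemma NL_eq_sum (q : ℕ) (hq : 1 ≤ q) (m : ℕ) (s : Fin m → ℤ) (k z : ℕ) :
    NL q m s k z = ∑ p ∈ Finset.range (k+1) ×ˢ Finset.range (m+1),
      NLred q m s p.1 p.2 * F q m k z p.1 p.2 := by
  classical
  haveI hfA : Finite (AType q m s k z) := by
    refine finite_of_bound _ k fun a ha j => ?_
    rw [← ha.2.1]
    simpa using Finset.single_le_sum (f := fun j => (a j).natAbs)
      (fun i _ => Nat.zero_le _) (Finset.mem_univ j)
  haveI hfR : Finite (RType q m s) :=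
    finite_of_bound _ q fun a ha j => le_of_lt (ha.2 j)
  haveI : Fintype (RType q m s) := Fintype.ofFinite _
  let f : AType q m s k z → RType q m s := fun a =>
    ⟨redV q a.1, (mem_congLat_iff_redV q s a.1).mp a.2.1, fun j => redZ_lt q hq (a.1 j)⟩
  have h1 : NL q m s k z = ∑ ρ : RType q m s, Nat.card {a : AType q m s k z // f a = ρ} := by
    rw [show NL q m s k z = Nat.card (AType q m s k z) from rfl,
      ← Nat.card_congr (Equiv.sigmaFiberEquiv f)]
    exact nat_card_sigma _
  have h2 : ∀ ρ : RType q m s, Nat.card {a : AType q m s k z // f a = ρ}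
      = F q m k z (∑ j, (ρ.1 j).natAbs) ((Finset.univ.filter fun j => ρ.1 j = 0).card) := by
    intro ρ
    obtain ⟨ρ0, hmem, hρ⟩ := ρ
    have hz'le : (Finset.univ.filter fun j => ρ0 j = 0).card ≤ m := zc_le ρ0
    obtain ⟨σ, hσ⟩ := exists_perm (fun j => ρ0 j = 0)
      (fun j => (j:ℕ) < (Finset.univ.filter fun j => ρ0 j = 0).card) (by
        rw [Fintype.card_subtype, Fintype.card_subtype, card_filter_lt _ hz'le])
    have e0 : {a : AType q m s k z // f a = ⟨ρ0, hmem, hρ⟩}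
        ≃ {a : {a : Fin m → ℤ // a ∈ congLat q m s ∧ (∑ j, (a j).natAbs) = k ∧
          (Finset.univ.filter fun j => a j = 0).card = z} // redV q a.1 = ρ0} :=
      Equiv.subtypeEquivRight fun a =>
        ⟨fun h => congrArg Subtype.val h, fun h => Subtype.ext h⟩
    exact Nat.card_congr (e0.trans ((fiberEquiv q hq s k z ρ0 hmem hρ).trans
      (permEquiv q k z _ _ ρ0 σ hσ rfl)))
  rw [h1, Finset.sum_congr rfl fun ρ _ => h2 ρ]
  rw [← Finset.sum_filter_add_sum_filter_not Finset.univ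
    (fun ρ : RType q m s => (∑ j, (ρ.1 j).natAbs) ≤ k)]
  have hrest : ∑ ρ ∈ Finset.univ.filter
      (fun ρ : RType q m s => ¬ (∑ j, (ρ.1 j).natAbs) ≤ k),
      F q m k z (∑ j, (ρ.1 j).natAbs) ((Finset.univ.filter fun j => ρ.1 j = 0).card) = 0 := by
    refine Finset.sum_eq_zero fun ρ hρ => ?_
    simp only [Finset.mem_filter, Finset.mem_univ, true_and] at hρ
    exact F_zero _ _ _ _ _ _ (by omega)
  rw [hrest, add_zero]
  rw [← Finset.sum_fiberwise_of_maps_to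
    (g := fun ρ : RType q m s =>
      ((∑ j, (ρ.1 j).natAbs), (Finset.univ.filter fun j => ρ.1 j = 0).card))
    (t := Finset.range (k+1) ×ˢ Finset.range (m+1)) (fun ρ hρ => by
      simp only [Finset.mem_filter, Finset.mem_univ, true_and] at hρ
      simp only [Finset.mem_product, Finset.mem_range]
      exact ⟨by omega, by have := zc_le ρ.1; omega⟩)]
  refine Finset.sum_congr rfl fun p hp => ?_
  have hterm : ∀ ρ ∈ (Finset.univ.filter
      (fun ρ : RType q m s => (∑ j, (ρ.1 j).natAbs) ≤ k)).filter
      (fun ρ => ((∑ j, (ρ.1 j).natAbs), (Finset.univ.filter fun j => ρ.1 j = 0).card) = p),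
      F q m k z (∑ j, (ρ.1 j).natAbs) ((Finset.univ.filter fun j => ρ.1 j = 0).card)
        = F q m k z p.1 p.2 := by
    intro ρ hρ
    simp only [Finset.mem_filter, Prod.ext_iff] at hρ
    rw [hρ.2.1, hρ.2.2]
  rw [Finset.sum_congr rfl hterm, Finset.sum_const, smul_eq_mul]
  congr 1
  rw [Finset.filter_filter]
  simp only [Finset.mem_product, Finset.mem_range] at hp
  have hpred : ∀ ρ : RType q m s,
      ((∑ j, (ρ.1 j).natAbs) ≤ k ∧
        ((∑ j, (ρ.1 j).natAbs), (Finset.univ.filter fun j => ρ.1 j = 0).card) = p)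
      ↔ ((∑ j, (ρ.1 j).natAbs) = p.1 ∧ (Finset.univ.filter fun j => ρ.1 j = 0).card = p.2) := by
    intro ρ
    rw [Prod.ext_iff]
    constructor
    · rintro ⟨_, h1, h2⟩; exact ⟨h1, h2⟩
    · rintro ⟨h1, h2⟩; exact ⟨by omega, h1, h2⟩
  rw [Finset.filter_congr fun ρ _ => hpred ρ]
  have hcard : (Finset.univ.filter fun ρ : RType q m s =>
      (∑ j, (ρ.1 j).natAbs) = p.1 ∧ (Finset.univ.filter fun j => ρ.1 j = 0).card = p.2).card
      = Nat.card {ρ : RType q m s //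
        (∑ j, (ρ.1 j).natAbs) = p.1 ∧ (Finset.univ.filter fun j => ρ.1 j = 0).card = p.2} := by
    rw [Nat.card_eq_fintype_card, Fintype.card_subtype]
  rw [hcard]
  have e : {ρ : RType q m s //
      (∑ j, (ρ.1 j).natAbs) = p.1 ∧ (Finset.univ.filter fun j => ρ.1 j = 0).card = p.2}
      ≃ {a : Fin m → ℤ // a ∈ congLat q m s ∧ (∀ j, (a j).natAbs < q) ∧
        (∑ j, (a j).natAbs) = p.1 ∧ (Finset.univ.filter fun j => a j = 0).card = p.2} :=
    { toFun := fun x => ⟨x.1.1, x.1.2.1, x.1.2.2, x.2.1, x.2.2⟩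
      invFun := fun a => ⟨⟨a.1, a.2.1, a.2.2.1⟩, a.2.2.2.1, a.2.2.2.2⟩
      left_inv := fun x => rfl
      right_inv := fun a => rfl }
  rw [Nat.card_congr e]
  rfl


lemma NL_eq_sum' (q : ℕ) (hq : 1 ≤ q) (m : ℕ) (s : Fin m → ℤ) (k z : ℕ) (hz : z ≤ m) :
    NL q m s k z = (∑ k' ∈ Finset.range k, ∑ z' ∈ Finset.range (m+1),
      NLred q m s k' z' * F q m k z k' z') + NLred q m s k z := by
  rw [NL_eq_sum q hq m s k z, Finset.sum_product, Finset.sum_range_succ]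
  congr 1
  have h1 : ∀ z' ∈ Finset.range (m+1), NLred q m s k z' * F q m k z k z'
      = if z' = z then NLred q m s k z' else 0 := by
    intro z' hz'
    rw [F_diag q m k z z' hq (by simp only [Finset.mem_range] at hz'; omega)]
    by_cases h : z' = z <;> simp [h]
  rw [Finset.sum_congr rfl h1,
    Finset.sum_ite_eq' (Finset.range (m+1)) z (fun z' => NLred q m s k z'),
    if_pos (Finset.mem_range.mpr (by omega))]

end NLaux

/-- Two congruence lattices with the same modulus have the same counts `N(k,z)` for all
`k, z` iff they have the same reduced counts `N^red(k,z)` for all `k, z`. -/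
theorem NL_eq_iff_NLred_eq (q m : ℕ) (hq : 1 ≤ q) (hm : 1 ≤ m) (s s' : Fin m → ℤ) :
    (∀ k z : ℕ, z ≤ m → NL q m s k z = NL q m s' k z) ↔
      (∀ k z : ℕ, z ≤ m → NLred q m s k z = NLred q m s' k z) := by
  constructor
  · intro hN k
    induction k using Nat.strong_induction_on with
    | _ k ih =>
      intro z hz
      have h1 := NLaux.NL_eq_sum' q hq m s k z hz
      have h2 := NLaux.NL_eq_sum' q hq m s' k z hz
      have hsum : (∑ k' ∈ Finset.range k, ∑ z' ∈ Finset.range (m+1),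
          NLred q m s k' z' * NLaux.F q m k z k' z')
          = ∑ k' ∈ Finset.range k, ∑ z' ∈ Finset.range (m+1),
            NLred q m s' k' z' * NLaux.F q m k z k' z' := by
        refine Finset.sum_congr rfl fun k' hk' => Finset.sum_congr rfl fun z' hz' => ?_
        rw [ih k' (Finset.mem_range.mp hk') z'
          (by simp only [Finset.mem_range] at hz'; omega)]
      have h3 := hN k z hz
      omega
  · intro hR k z hz
    rw [NLaux.NL_eq_sum q hq m s k z, NLaux.NL_eq_sum q hq m s' k z]
    refine Finset.sum_congr rfl fun p hp => ?_
    simp only [Finset.mem_product, Finset.mem_range] at hp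
    rw [hR p.1 p.2 (by omega)]
end

section
/- Let r, t be positive integers, and let 𝓛 = 𝓛(r²t; 1, 1+rt, 1+3rt) and 𝓛' = 𝓛(r²t; 1, 1−rt, 1−3rt) be the associated congruence lattices in ℤ³. Then for every k ∈ ℕ and every z ∈ {1, 2, 3}, N_𝓛(k,z) = N_{𝓛'}(k,z). -/
namespace NLaux

/-- The swap map: if exactly one coordinate is zero, swap the other two appropriately. -/
def g (a : Fin 3 → ℤ) : Fin 3 → ℤ :=
  if a 0 = 0 ∧ a 1 ≠ 0 ∧ a 2 ≠ 0 then ![0, a 2, a 1]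
  else if a 1 = 0 ∧ a 0 ≠ 0 ∧ a 2 ≠ 0 then ![a 2, 0, a 0]
  else if a 2 = 0 ∧ a 0 ≠ 0 ∧ a 1 ≠ 0 then ![a 1, a 0, 0]
  else a

lemma g_invol : Function.Involutive g := by
  intro a
  unfold g
  by_cases h0 : a 0 = 0 <;> by_cases h1 : a 1 = 0 <;> by_cases h2 : a 2 = 0 <;>
    simp [h0, h1, h2] <;> funext i <;> fin_cases i <;> simp [h0, h1, h2]

lemma g_norm (a : Fin 3 → ℤ) : (∑ j, ((g a) j).natAbs) = ∑ j, (a j).natAbs := by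
  unfold g
  split_ifs <;> simp [Fin.sum_univ_three] <;> omega

lemma g_zeros (a : Fin 3 → ℤ) :
    (Finset.univ.filter fun j => g a j = 0).card =
      (Finset.univ.filter fun j => a j = 0).card := by
  unfold g
  split_ifs with h1 h2 h3
  · obtain ⟨e0, e1, e2⟩ := h1
    rw [Finset.card_filter, Finset.card_filter, Fin.sum_univ_three, Fin.sum_univ_three]
    simp [e0, e1, e2]
  · obtain ⟨e1, e0, e2⟩ := h2
    rw [Finset.card_filter, Finset.card_filter, Fin.sum_univ_three, Fin.sum_univ_three]
    simp [e0, e1, e2]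
  · obtain ⟨e2, e0, e1⟩ := h3
    rw [Finset.card_filter, Finset.card_filter, Fin.sum_univ_three, Fin.sum_univ_three]
    simp [e0, e1, e2]
  · rfl

lemma iff_dvd (Q x y v w p q' : ℤ) (h1 : y = x * v + p) (h2 : x = y * w + q')
    (hp : Q ∣ p) (hq : Q ∣ q') : (Q ∣ x ↔ Q ∣ y) := by
  constructor
  · intro h; rw [h1]; exact dvd_add (h.mul_right v) hp
  · intro h; rw [h2]; exact dvd_add (h.mul_right w) hq

lemma mem_key (Q v : ℤ) (hv : Q ∣ v * v) (a : Fin 3 → ℤ)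
    (h : a 0 = 0 ∨ a 1 = 0 ∨ a 2 = 0) :
    (Q ∣ a 0 + a 1 * (1 - v) + a 2 * (1 - 3 * v)) ↔
      (Q ∣ g a 0 + g a 1 * (1 + v) + g a 2 * (1 + 3 * v)) := by
  unfold g
  split_ifs with h1 h2 h3
  · obtain ⟨e0, -, -⟩ := h1
    simp only [Matrix.cons_val_zero, Matrix.cons_val_one, Matrix.head_cons,
      Matrix.cons_val_two, Matrix.tail_cons, e0]
    exact iff_dvd Q _ _ ((1 + v) * (1 + 3 * v)) ((1 - v) * (1 - 3 * v))
      (v * v * (a 1 * (1 + 3 * v) + 9 * a 2 * (1 + v)))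
      (v * v * (9 * a 1 * (1 - v) + a 2 * (1 - 3 * v)))
      (by ring) (by ring) (hv.mul_right _) (hv.mul_right _)
  · obtain ⟨e1, -, -⟩ := h2
    simp only [Matrix.cons_val_zero, Matrix.cons_val_one, Matrix.head_cons,
      Matrix.cons_val_two, Matrix.tail_cons, e1]
    exact iff_dvd Q _ _ (1 + 3 * v) (1 - 3 * v)
      (v * v * (9 * a 2)) (v * v * (9 * a 0))
      (by ring) (by ring) (hv.mul_right _) (hv.mul_right _)
  · obtain ⟨e2, -, -⟩ := h3
    simp only [Matrix.cons_val_zero, Matrix.cons_val_one, Matrix.head_cons,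
      Matrix.cons_val_two, Matrix.tail_cons, e2]
    exact iff_dvd Q _ _ (1 + v) (1 - v)
      (v * v * a 1) (v * v * a 0)
      (by ring) (by ring) (hv.mul_right _) (hv.mul_right _)
  · -- at least two zeros
    push_neg at h1 h2 h3
    by_cases e0 : a 0 = 0 <;> by_cases e1 : a 1 = 0 <;> by_cases e2 : a 2 = 0
    · simp [e0, e1, e2]
    · -- a0=a1=0, a2 ≠ 0
      simp only [e0, e1, zero_mul, zero_add, mul_zero, add_zero]
      exact iff_dvd Q _ _ ((1 + 3 * v) * (1 + 3 * v)) ((1 - 3 * v) * (1 - 3 * v))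
        (v * v * (9 * a 2 * (1 + 3 * v))) (v * v * (9 * a 2 * (1 - 3 * v)))
        (by ring) (by ring) (hv.mul_right _) (hv.mul_right _)
    · -- a0=a2=0, a1 ≠ 0
      simp only [e0, e2, zero_mul, zero_add, mul_zero, add_zero]
      exact iff_dvd Q _ _ ((1 + v) * (1 + v)) ((1 - v) * (1 - v))
        (v * v * (a 1 * (1 + v))) (v * v * (a 1 * (1 - v)))
        (by ring) (by ring) (hv.mul_right _) (hv.mul_right _)
    · exact absurd (h1 e0 e1) e2
    · -- a1=a2=0
      simp [e1, e2]
    · exact absurd (h2 e1 e0) e2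
    · exact absurd (h3 e2 e0) e1
    · rcases h with h | h | h
      · exact absurd h e0
      · exact absurd h e1
      · exact absurd h e2


lemma mem_key' (Q v : ℤ) (hv : Q ∣ v * v) (a : Fin 3 → ℤ)
    (h : a 0 = 0 ∨ a 1 = 0 ∨ a 2 = 0) :
    (Q ∣ a 0 + a 1 * (1 + v) + a 2 * (1 + 3 * v)) ↔
      (Q ∣ g a 0 + g a 1 * (1 - v) + g a 2 * (1 - 3 * v)) := by
  have key := mem_key Q (-v) (by rwa [neg_mul_neg]) a h
  have e1 : a 0 + a 1 * (1 - -v) + a 2 * (1 - 3 * -v)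
      = a 0 + a 1 * (1 + v) + a 2 * (1 + 3 * v) := by ring
  have e2 : g a 0 + g a 1 * (1 + -v) + g a 2 * (1 + 3 * -v)
      = g a 0 + g a 1 * (1 - v) + g a 2 * (1 - 3 * v) := by ring
  rwa [e1, e2] at key

lemma exists_zero (a : Fin 3 → ℤ)
    (h : (Finset.univ.filter fun j => a j = 0).card ≠ 0) :
    a 0 = 0 ∨ a 1 = 0 ∨ a 2 = 0 := by
  by_contra hc
  push_neg at hc
  obtain ⟨h0, h1, h2⟩ := hc
  rw [Finset.card_filter, Fin.sum_univ_three] at h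
  simp [h0, h1, h2] at h

end NLaux

/-- For `𝓛 = 𝓛(r²t; 1, 1+rt, 1+3rt)` and `𝓛' = 𝓛(r²t; 1, 1-rt, 1-3rt)` one has
`N_𝓛(k, z) = N_𝓛'(k, z)` for every `k` and every `z ∈ {1, 2, 3}`. -/
theorem NL_eq_of_pos_zeros (r t : ℕ) (hr : 1 ≤ r) (ht : 1 ≤ t) (k z : ℕ)
    (hz : z = 1 ∨ z = 2 ∨ z = 3) :
    NL (r ^ 2 * t) 3 ![(1 : ℤ), 1 + (r : ℤ) * t, 1 + 3 * (r : ℤ) * t] k z =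
      NL (r ^ 2 * t) 3 ![(1 : ℤ), 1 - (r : ℤ) * t, 1 - 3 * (r : ℤ) * t] k z := by
  have hz1 : z ≠ 0 := by rcases hz with h | h | h <;> omega
  have hu : ((r ^ 2 * t : ℕ) : ℤ) ∣ ((r : ℤ) * t) * ((r : ℤ) * t) :=
    ⟨t, by push_cast; ring⟩
  have eP : ∀ a : Fin 3 → ℤ,
      (∑ j, a j * (![(1 : ℤ), 1 + (r : ℤ) * t, 1 + 3 * (r : ℤ) * t]) j)
        = a 0 + a 1 * (1 + (r : ℤ) * t) + a 2 * (1 + 3 * ((r : ℤ) * t)) := by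
    intro a
    rw [Fin.sum_univ_three]
    simp only [Matrix.cons_val_zero, Matrix.cons_val_one, Matrix.head_cons,
      Matrix.cons_val_two, Matrix.tail_cons]
    ring
  have eM : ∀ a : Fin 3 → ℤ,
      (∑ j, a j * (![(1 : ℤ), 1 - (r : ℤ) * t, 1 - 3 * (r : ℤ) * t]) j)
        = a 0 + a 1 * (1 - (r : ℤ) * t) + a 2 * (1 - 3 * ((r : ℤ) * t)) := by
    intro a
    rw [Fin.sum_univ_three]
    simp only [Matrix.cons_val_zero, Matrix.cons_val_one, Matrix.head_cons,
      Matrix.cons_val_two, Matrix.tail_cons]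
    ring
  have memP : ∀ a : Fin 3 → ℤ,
      a ∈ congLat (r ^ 2 * t) 3 ![(1 : ℤ), 1 + (r : ℤ) * t, 1 + 3 * (r : ℤ) * t] ↔
        ((r ^ 2 * t : ℕ) : ℤ) ∣
          a 0 + a 1 * (1 + (r : ℤ) * t) + a 2 * (1 + 3 * ((r : ℤ) * t)) := by
    intro a
    show ((r ^ 2 * t : ℕ) : ℤ) ∣ _ ↔ _
    rw [eP a]
  have memM : ∀ a : Fin 3 → ℤ,
      a ∈ congLat (r ^ 2 * t) 3 ![(1 : ℤ), 1 - (r : ℤ) * t, 1 - 3 * (r : ℤ) * t] ↔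
        ((r ^ 2 * t : ℕ) : ℤ) ∣
          a 0 + a 1 * (1 - (r : ℤ) * t) + a 2 * (1 - 3 * ((r : ℤ) * t)) := by
    intro a
    show ((r ^ 2 * t : ℕ) : ℤ) ∣ _ ↔ _
    rw [eM a]
  apply Nat.card_congr
  refine ⟨fun x => ⟨NLaux.g x.1, ?_⟩, fun x => ⟨NLaux.g x.1, ?_⟩,
    fun x => Subtype.ext (NLaux.g_invol x.1), fun x => Subtype.ext (NLaux.g_invol x.1)⟩
  · obtain ⟨hm, hk, hzc⟩ := x.2
    have hzero := NLaux.exists_zero x.1 (by rw [hzc]; exact hz1)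
    refine ⟨?_, ?_, ?_⟩
    · rw [memM]
      exact (NLaux.mem_key' _ _ hu x.1 hzero).mp ((memP x.1).mp hm)
    · rw [NLaux.g_norm]; exact hk
    · rw [NLaux.g_zeros]; exact hzc
  · obtain ⟨hm, hk, hzc⟩ := x.2
    have hzero := NLaux.exists_zero x.1 (by rw [hzc]; exact hz1)
    refine ⟨?_, ?_, ?_⟩
    · rw [memP]
      exact (NLaux.mem_key _ _ hu x.1 hzero).mp ((memM x.1).mp hm)
    · rw [NLaux.g_norm]; exact hk
    · rw [NLaux.g_zeros]; exact hzc
end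

section
/- Let r, t be positive integers, and let 𝓛 = 𝓛(r²t; 1, 1+rt, 1+3rt) and 𝓛' = 𝓛(r²t; 1, 1−rt, 1−3rt). Then for all integers a, b, c: (a,b,0) ∈ 𝓛 if and only if (b,a,0) ∈ 𝓛'; (a,0,c) ∈ 𝓛 if and only if (c,0,a) ∈ 𝓛'; and (0,b,c) ∈ 𝓛 if and only if (0,c,b) ∈ 𝓛'. -/
/-- The bijections between elements with one zero coordinate of
`𝓛 = 𝓛(r²t; 1, 1+rt, 1+3rt)` and `𝓛' = 𝓛(r²t; 1, 1-rt, 1-3rt)`. -/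
theorem mem_congLat_swap_iff (r t : ℕ) (hr : 1 ≤ r) (ht : 1 ≤ t) (a b c : ℤ) :
    (![a, b, 0] ∈ congLat (r ^ 2 * t) 3 ![(1 : ℤ), 1 + (r : ℤ) * t, 1 + 3 * (r : ℤ) * t] ↔
      ![b, a, 0] ∈ congLat (r ^ 2 * t) 3 ![(1 : ℤ), 1 - (r : ℤ) * t, 1 - 3 * (r : ℤ) * t]) ∧
    (![a, 0, c] ∈ congLat (r ^ 2 * t) 3 ![(1 : ℤ), 1 + (r : ℤ) * t, 1 + 3 * (r : ℤ) * t] ↔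
      ![c, 0, a] ∈ congLat (r ^ 2 * t) 3 ![(1 : ℤ), 1 - (r : ℤ) * t, 1 - 3 * (r : ℤ) * t]) ∧
    (![0, b, c] ∈ congLat (r ^ 2 * t) 3 ![(1 : ℤ), 1 + (r : ℤ) * t, 1 + 3 * (r : ℤ) * t] ↔
      ![0, c, b] ∈ congLat (r ^ 2 * t) 3 ![(1 : ℤ), 1 - (r : ℤ) * t, 1 - 3 * (r : ℤ) * t]) := by
  simp only [congLat, Set.mem_setOf_eq, Fin.sum_univ_three, Matrix.cons_val_zero,
    Matrix.cons_val_one, Matrix.head_cons, Matrix.cons_val_two, Matrix.tail_cons]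
  set R : ℤ := (r : ℤ)
  set T : ℤ := (t : ℤ)
  refine ⟨⟨fun ⟨k, hk⟩ => ⟨(1 - R * T) * k + b * T, (by push_cast at hk ⊢; linear_combination (1 - R * T) * hk)⟩,
           fun ⟨k, hk⟩ => ⟨(1 + R * T) * k + a * T, (by push_cast at hk ⊢; linear_combination (1 + R * T) * hk)⟩⟩,
          ⟨fun ⟨k, hk⟩ => ⟨(1 - 3 * R * T) * k + 9 * c * T, (by push_cast at hk ⊢; linear_combination (1 - 3 * R * T) * hk)⟩,
           fun ⟨k, hk⟩ => ⟨(1 + 3 * R * T) * k + 9 * a * T, (by push_cast at hk ⊢; linear_combination (1 + 3 * R * T) * hk)⟩⟩,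
          ⟨fun ⟨k, hk⟩ => ⟨(1 - 4 * R * T) * k + (4 * b + 12 * c) * T, (by push_cast at hk ⊢; linear_combination (1 - 4 * R * T) * hk)⟩,
           fun ⟨k, hk⟩ => ⟨(1 + 4 * R * T) * k + (12 * b + 4 * c) * T, (by push_cast at hk ⊢; linear_combination (1 + 4 * R * T) * hk)⟩⟩⟩
end

section
/- Let r be a positive integer not divisible by 3 and let ξ ∈ ℤ. Define A(r,ξ) = #{(x,y) ∈ ℤ² : 0 < y < x < r and x + 2y ≡ ξ (mod r)}. If r is odd, then A(r,ξ) = (r−3)/2 if r does not divide ξ, and A(r,ξ) = (r−1)/2 if r divides ξ. If r is even, then A(r,ξ) = r/2 − 1 if ξ is odd, A(r,ξ) = r/2 − 2 if ξ is even and r does not divide ξ, and A(r,ξ) = r/2 − 1 if r divides ξ. -/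
/-- `A(r, ξ)`: the number of integer points `(x, y)` with `0 < y < x < r` and
`x + 2y ≡ ξ (mod r)`. -/
noncomputable def Acount (r : ℕ) (ξ : ℤ) : ℕ :=
  Nat.card {p : ℤ × ℤ // 0 < p.2 ∧ p.2 < p.1 ∧ p.1 < (r : ℤ) ∧
    p.1 + 2 * p.2 ≡ ξ [ZMOD (r : ℤ)]}

/-- For a point in the counted set, the first coordinate is determined by the second. -/
lemma Acount_x_eq (r : ℕ) (ξ x y : ℤ) (hy : 0 < y) (hxy : y < x) (hxr : x < (r : ℤ))
    (hmod : x + 2 * y ≡ ξ [ZMOD (r : ℤ)]) : x = (ξ - 2 * y) % (r : ℤ) := by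
  have h1 : x % (r : ℤ) = x := Int.emod_eq_of_lt (by omega) hxr
  have h2 : x ≡ ξ - 2 * y [ZMOD (r : ℤ)] := by
    have := hmod.sub_right (2 * y)
    simpa using this
  have h3 : x % (r : ℤ) = (ξ - 2 * y) % (r : ℤ) := h2
  omega

/-- `Acount` as the cardinality of an explicit finite set of `y`'s. -/
lemma acount_eq_filter (r : ℕ) (hr : 1 ≤ r) (ξ : ℤ) :
    Acount r ξ =
      (Finset.filter (fun y => y < (ξ - 2 * y) % (r : ℤ)) (Finset.Ioo 0 (r : ℤ))).card := by
  have hr' : (0 : ℤ) < (r : ℤ) := by exact_mod_cast hr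
  set T := Finset.filter (fun y => y < (ξ - 2 * y) % (r : ℤ)) (Finset.Ioo 0 (r : ℤ)) with hT
  have e : {p : ℤ × ℤ // 0 < p.2 ∧ p.2 < p.1 ∧ p.1 < (r : ℤ) ∧
      p.1 + 2 * p.2 ≡ ξ [ZMOD (r : ℤ)]} ≃ {y : ℤ // y ∈ T} :=
    { toFun := fun p => ⟨p.1.2, by
        obtain ⟨⟨x, y⟩, h1, h2, h3, h4⟩ := p
        have hx := Acount_x_eq r ξ x y h1 h2 h3 h4
        simp only [hT, Finset.mem_filter, Finset.mem_Ioo]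
        exact ⟨⟨h1, by omega⟩, by omega⟩⟩
      invFun := fun y => ⟨((ξ - 2 * y.1) % (r : ℤ), y.1), by
        obtain ⟨y, hy⟩ := y
        simp only [hT, Finset.mem_filter, Finset.mem_Ioo] at hy
        obtain ⟨⟨hy1, hy2⟩, hy3⟩ := hy
        refine ⟨hy1, hy3, Int.emod_lt_of_pos _ hr', ?_⟩
        have h2 : (ξ - 2 * y) % (r : ℤ) ≡ ξ - 2 * y [ZMOD (r : ℤ)] :=
          Int.emod_emod_of_dvd _ dvd_rfl
        have := h2.add_right (2 * y)
        simpa using this⟩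
      left_inv := fun p => by
        obtain ⟨⟨x, y⟩, h1, h2, h3, h4⟩ := p
        have hx := Acount_x_eq r ξ x y h1 h2 h3 h4
        simp [← hx]
      right_inv := fun y => rfl }
  rw [Acount, Nat.card_congr e, Nat.card_eq_finsetCard]

/-- Characterization of the condition `y < (ξ - 2y) % r` for `0 < y < r`. -/
lemma cond_iff (r : ℕ) (hr : 1 ≤ r) (ξ y : ℤ) (h1 : 0 < y) (h2 : y < (r : ℤ)) :
    (y < (ξ - 2 * y) % (r : ℤ)) ↔
      (3 * y ≤ ξ % (r : ℤ) - 1) ∨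
      (ξ % (r : ℤ) < 2 * y ∧ 3 * y ≤ ξ % (r : ℤ) + (r : ℤ) - 1) ∨
      (ξ % (r : ℤ) + (r : ℤ) < 2 * y ∧ 3 * y ≤ ξ % (r : ℤ) + 2 * (r : ℤ) - 1) := by
  have hr' : (0 : ℤ) < (r : ℤ) := by exact_mod_cast hr
  set c := ξ % (r : ℤ) with hc
  have hc0 : 0 ≤ c := Int.emod_nonneg _ (by omega)
  have hc1 : c < (r : ℤ) := Int.emod_lt_of_pos _ hr'
  have key : (ξ - 2 * y) % (r : ℤ) = (c - 2 * y) % (r : ℤ) := by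
    have h : c ≡ ξ [ZMOD (r : ℤ)] := Int.emod_emod_of_dvd ξ dvd_rfl
    exact ((h.sub_right (2 * y))).symm
  rw [key]
  rcases le_or_gt 0 (c - 2 * y) with h | h
  · rw [Int.emod_eq_of_lt h (by omega)]
    omega
  rcases le_or_gt 0 (c - 2 * y + (r : ℤ)) with h' | h'
  · have e1 : (c - 2 * y) % (r : ℤ) = c - 2 * y + (r : ℤ) := by
      have e2 : (c - 2 * y + (r : ℤ) * 1) % (r : ℤ) = (c - 2 * y) % (r : ℤ) :=
        Int.add_mul_emod_self_left ..
      rw [← e2]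
      rw [show c - 2 * y + (r : ℤ) * 1 = c - 2 * y + (r : ℤ) by ring]
      exact Int.emod_eq_of_lt h' (by omega)
    rw [e1]
    omega
  · have e1 : (c - 2 * y) % (r : ℤ) = c - 2 * y + 2 * (r : ℤ) := by
      have e2 : (c - 2 * y + (r : ℤ) * 2) % (r : ℤ) = (c - 2 * y) % (r : ℤ) :=
        Int.add_mul_emod_self_left ..
      rw [← e2]
      rw [show c - 2 * y + (r : ℤ) * 2 = c - 2 * y + 2 * (r : ℤ) by ring]
      exact Int.emod_eq_of_lt (by omega) (by omega)
    rw [e1]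
    omega

/-- Closed formula for `Acount` in terms of `c = ξ % r`. -/
lemma acount_formula (r : ℕ) (hr : 1 ≤ r) (ξ : ℤ) :
    Acount r ξ =
      ((ξ % (r : ℤ) - 1) / 3).toNat
      + ((ξ % (r : ℤ) + (r : ℤ) - 1) / 3 - ξ % (r : ℤ) / 2).toNat
      + ((ξ % (r : ℤ) + 2 * (r : ℤ) - 1) / 3 - (ξ % (r : ℤ) + (r : ℤ)) / 2).toNat := by
  have hr' : (0 : ℤ) < (r : ℤ) := by exact_mod_cast hr
  set c := ξ % (r : ℤ) with hc
  have hc0 : 0 ≤ c := Int.emod_nonneg _ (by omega)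
  have hc1 : c < (r : ℤ) := Int.emod_lt_of_pos _ hr'
  rw [acount_eq_filter r hr ξ]
  have hmem : ∀ y : ℤ, (y ∈ Finset.filter (fun y => y < (ξ - 2 * y) % (r : ℤ))
      (Finset.Ioo 0 (r : ℤ))) ↔
      ((0 < y ∧ y ≤ (c - 1) / 3) ∨ (c / 2 < y ∧ y ≤ (c + (r : ℤ) - 1) / 3) ∨
        ((c + (r : ℤ)) / 2 < y ∧ y ≤ (c + 2 * (r : ℤ) - 1) / 3)) := by
    intro y
    simp only [Finset.mem_filter, Finset.mem_Ioo]
    constructor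
    · rintro ⟨⟨hy1, hy2⟩, hy3⟩
      have := (cond_iff r hr ξ y hy1 hy2).mp hy3
      rw [← hc] at this
      omega
    · intro h
      have hy1 : 0 < y := by omega
      have hy2 : y < (r : ℤ) := by omega
      refine ⟨⟨hy1, hy2⟩, (cond_iff r hr ξ y hy1 hy2).mpr ?_⟩
      rw [← hc]
      omega
  have hset : Finset.filter (fun y => y < (ξ - 2 * y) % (r : ℤ)) (Finset.Ioo 0 (r : ℤ)) =
      (Finset.Ioc 0 ((c - 1) / 3) ∪ Finset.Ioc (c / 2) ((c + (r : ℤ) - 1) / 3)) ∪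
        Finset.Ioc ((c + (r : ℤ)) / 2) ((c + 2 * (r : ℤ) - 1) / 3) := by
    ext y
    rw [hmem y]
    simp only [Finset.mem_union, Finset.mem_Ioc]
    tauto
  rw [hset]
  rw [Finset.card_union_of_disjoint, Finset.card_union_of_disjoint]
  · rw [Int.card_Ioc, Int.card_Ioc, Int.card_Ioc]
    omega
  · rw [Finset.disjoint_left]
    intro y hy1 hy2
    simp only [Finset.mem_Ioc] at hy1 hy2
    omega
  · rw [Finset.disjoint_left]
    intro y hy1 hy2
    simp only [Finset.mem_union, Finset.mem_Ioc] at hy1 hy2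
    omega


/-- Sum of three "floor of thirds" at arguments shifted by `r`, `2r`, when `3` does not
divide `r`. -/
theorem three_div_sum (c r : ℤ) (h : ¬((3:ℤ) ∣ r)) :
    (c-1)/3 + (c+r-1)/3 + (c+2*r-1)/3 = c + r - 2 := by
  obtain ⟨a, s, hs0, hs2, hm⟩ : ∃ a s, 0 ≤ s ∧ s < 3 ∧ c - 1 = 3*a + s :=
    ⟨(c-1)/3, (c-1)%3, by omega, by omega, by omega⟩
  obtain ⟨b, t, ht0, ht2, hrr⟩ : ∃ b t, 0 ≤ t ∧ t < 3 ∧ r = 3*b + t :=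
    ⟨r/3, r%3, by omega, by omega, by omega⟩
  have ht1 : t ≠ 0 := by omega
  interval_cases s <;> interval_cases t <;> omega

/-- The value of `A(r, ξ)` for `r` not divisible by `3`. -/
theorem Acount_eq (r : ℕ) (hr : 1 ≤ r) (h3 : ¬ (3 ∣ r)) (ξ : ℤ) :
    (Odd r →
      (¬ ((r : ℤ) ∣ ξ) → Acount r ξ = (r - 3) / 2) ∧
      (((r : ℤ) ∣ ξ) → Acount r ξ = (r - 1) / 2)) ∧
    (Even r →
      (¬ ((r : ℤ) ∣ ξ) → Odd ξ → Acount r ξ = r / 2 - 1) ∧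
      (¬ ((r : ℤ) ∣ ξ) → Even ξ → Acount r ξ = r / 2 - 2) ∧
      (((r : ℤ) ∣ ξ) → Acount r ξ = r / 2 - 1)) := by
  have hr' : (0 : ℤ) < (r : ℤ) := by exact_mod_cast hr
  have hA := acount_formula r hr ξ
  set c := ξ % (r : ℤ) with hc
  have hc0 : 0 ≤ c := Int.emod_nonneg _ (by omega)
  have hc1 : c < (r : ℤ) := Int.emod_lt_of_pos _ hr'
  have hdvd : ((r : ℤ) ∣ ξ) ↔ c = 0 := Int.dvd_iff_emod_eq_zero
  obtain ⟨q, hq⟩ : ∃ q : ℤ, (r : ℤ) * q + c = ξ := ⟨ξ / (r : ℤ), Int.mul_ediv_add_emod ξ (r : ℤ)⟩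
  have h3' : ¬ ((3 : ℤ) ∣ (r : ℤ)) := by exact_mod_cast h3
  have key3 := three_div_sum c (r : ℤ) h3'
  constructor
  · intro hodd
    rw [Nat.odd_iff] at hodd
    constructor
    · intro hnd
      rw [hdvd] at hnd
      omega
    · intro hd
      rw [hdvd] at hd
      omega
  · intro heven
    have h2r : (2:ℤ) ∣ (r:ℤ) := by exact_mod_cast heven.two_dvd
    have hpar : (2:ℤ) ∣ ξ - c := by
      have hrq : ξ - c = (r:ℤ) * q := by linarith [hq]
      rw [hrq]
      exact h2r.mul_right q
    rw [Nat.even_iff] at heven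
    refine ⟨?_, ?_, ?_⟩
    · intro hnd hoddξ
      rw [hdvd] at hnd
      rw [Int.odd_iff] at hoddξ
      omega
    · intro hnd hevenξ
      rw [hdvd] at hnd
      rw [Int.even_iff] at hevenξ
      omega
    · intro hd
      rw [hdvd] at hd
      omega
end

section
/- Let r, t, ω be positive integers with r not dividing ω. Then the number of triples (a,b,c) ∈ ℤ³ with a > 0, b > 0, c > 0, a + b + c = ωrt, and a + (1+rt)b + (1+3rt)c ≡ 0 (mod r²t) equals ωt·A(r,−ω) + C(ωt, 2)·r, where A(r,−ω) = #{(x,y) ∈ ℤ² : 0 < y < x < r and x + 2y ≡ −ω (mod r)} and C(ωt,2) is the binomial coefficient. -/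
namespace CPOaux

/-- The canonical solution of `x ≡ c (mod r)` in `[a, a+r)` satisfies the constraints. -/
lemma sol_spec (r : ℤ) (hr : 0 < r) (a c : ℤ) :
    a ≤ a + (c - a) % r ∧ a + (c - a) % r < a + r ∧ r ∣ (a + (c - a) % r) - c := by
  have h1 := Int.emod_nonneg (c - a) (ne_of_gt hr)
  have h2 := Int.emod_lt_of_pos (c - a) hr
  refine ⟨by omega, by omega, ⟨-((c - a) / r), ?_⟩⟩
  have h3 : (c - a) % r = (c - a) - r * ((c - a) / r) := by rw [Int.emod_def]
  rw [h3]; ring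

/-- Uniqueness of the solution of `x ≡ c (mod r)` in `[a, a+r)`. -/
lemma sol_uniq (r : ℤ) (hr : 0 < r) {a c x y : ℤ}
    (hx1 : a ≤ x) (hx2 : x < a + r) (hx3 : r ∣ x - c)
    (hy1 : a ≤ y) (hy2 : y < a + r) (hy3 : r ∣ y - c) : x = y := by
  obtain ⟨j, hj⟩ : r ∣ x - y := by simpa using dvd_sub hx3 hy3
  have hj0 : j = 0 := by
    rcases lt_trichotomy j 0 with h | h | h
    · have : r * j ≤ r * (-1) := mul_le_mul_of_nonneg_left (by omega) hr.le
      nlinarith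
    · exact h
    · have : r * 1 ≤ r * j := mul_le_mul_of_nonneg_left (by omega) hr.le
      nlinarith
  rw [hj0, mul_zero] at hj; omega

open Classical in
/-- Triangle count: points `0 < y < x < M` with `x + 2y ≡ ξ (mod r)`. -/
noncomputable def T (r : ℕ) (ξ : ℤ) (M : ℤ) : Finset (ℤ × ℤ) :=
  (Finset.Ico 1 M ×ˢ Finset.Ico 1 M).filter
    (fun p => p.2 < p.1 ∧ (r : ℤ) ∣ p.1 + 2 * p.2 - ξ)

lemma mem_T {r : ℕ} {ξ M : ℤ} {p : ℤ × ℤ} :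
    p ∈ T r ξ M ↔ 1 ≤ p.2 ∧ p.2 < p.1 ∧ p.1 < M ∧ (r : ℤ) ∣ p.1 + 2 * p.2 - ξ := by
  simp only [T, Finset.mem_filter, Finset.mem_product, Finset.mem_Ico]
  constructor
  · rintro ⟨⟨⟨hx1, hx2⟩, hy1, hy2⟩, hyx, hd⟩
    exact ⟨hy1, hyx, hx2, hd⟩
  · rintro ⟨h1, h2, h3, hd⟩
    exact ⟨⟨⟨by omega, h3⟩, h1, by omega⟩, h2, hd⟩

open Classical in
/-- Lower strip: `x ∈ [M, M+r)`, `0 < y < M`. -/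
noncomputable def S1 (r : ℕ) (ξ M : ℤ) : Finset (ℤ × ℤ) :=
  (Finset.Ico M (M + r) ×ˢ Finset.Ico 1 M).filter
    (fun p => p.2 < p.1 ∧ (r : ℤ) ∣ p.1 + 2 * p.2 - ξ)

open Classical in
/-- Diagonal cell: `x, y ∈ [M, M+r)`, `y < x`. -/
noncomputable def S2 (r : ℕ) (ξ M : ℤ) : Finset (ℤ × ℤ) :=
  (Finset.Ico M (M + r) ×ˢ Finset.Ico M (M + r)).filter
    (fun p => p.2 < p.1 ∧ (r : ℤ) ∣ p.1 + 2 * p.2 - ξ)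

lemma mem_S1 {r : ℕ} {ξ M : ℤ} {p : ℤ × ℤ} :
    p ∈ S1 r ξ M ↔ (M ≤ p.1 ∧ p.1 < M + r) ∧ (1 ≤ p.2 ∧ p.2 < M) ∧ p.2 < p.1 ∧
      (r : ℤ) ∣ p.1 + 2 * p.2 - ξ := by
  simp only [S1, Finset.mem_filter, Finset.mem_product, Finset.mem_Ico]
  tauto

lemma mem_S2 {r : ℕ} {ξ M : ℤ} {p : ℤ × ℤ} :
    p ∈ S2 r ξ M ↔ (M ≤ p.1 ∧ p.1 < M + r) ∧ (M ≤ p.2 ∧ p.2 < M + r) ∧ p.2 < p.1 ∧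
      (r : ℤ) ∣ p.1 + 2 * p.2 - ξ := by
  simp only [S2, Finset.mem_filter, Finset.mem_product, Finset.mem_Ico]
  tauto

lemma card_S1 (r : ℕ) (hr : 1 ≤ r) (ξ M : ℤ) (hM : 1 ≤ M) :
    (S1 r ξ M).card = (M - 1).toNat := by
  have hrz : (0 : ℤ) < r := by exact_mod_cast hr
  rw [← Int.card_Ico 1 M]
  apply Finset.card_bij' (fun p _ => p.2)
      (fun y _ => (M + (ξ - 2 * y - M) % r, y))
  · intro p hp
    rw [mem_S1] at hp
    simp only [Finset.mem_Ico]
    exact hp.2.1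
  · intro y hy
    simp only [Finset.mem_Ico] at hy
    obtain ⟨h1, h2, h3⟩ := sol_spec (r : ℤ) hrz M (ξ - 2 * y)
    rw [mem_S1]
    refine ⟨⟨h1, h2⟩, ⟨hy.1, hy.2⟩, by omega, ?_⟩
    obtain ⟨k, hk⟩ := h3
    exact ⟨k, by omega⟩
  · intro p hp
    rw [mem_S1] at hp
    obtain ⟨⟨h1, h2⟩, ⟨h3, h4⟩, h5, h6⟩ := hp
    obtain ⟨g1, g2, g3⟩ := sol_spec (r : ℤ) hrz M (ξ - 2 * p.2)
    have : M + (ξ - 2 * p.2 - M) % r = p.1 := by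
      apply sol_uniq (r : ℤ) hrz g1 g2 g3 h1 h2
      obtain ⟨k, hk⟩ := h6
      exact ⟨k, by omega⟩
    rw [this]
  · intro y hy
    rfl

lemma card_S2_zero (r : ℕ) (hr : 1 ≤ r) (ξ : ℤ) (hξ : ¬ (r : ℤ) ∣ ξ) :
    (S2 r ξ 0).card = (T r ξ r).card + 1 := by
  have hrz : (0 : ℤ) < r := by exact_mod_cast hr
  have hins : S2 r ξ 0 = insert (ξ % r, 0) (T r ξ (r : ℤ)) := by
    ext p
    rw [mem_S2, Finset.mem_insert, mem_T]
    have e1 := Int.emod_nonneg ξ (ne_of_gt hrz)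
    have e2 := Int.emod_lt_of_pos ξ hrz
    have e0 : ξ % r ≠ 0 := fun h => hξ (Int.dvd_of_emod_eq_zero h)
    have ed : (r : ℤ) ∣ (ξ % r) + 2 * 0 - ξ := by
      refine ⟨-(ξ / r), ?_⟩
      rw [Int.emod_def]; ring
    constructor
    · rintro ⟨⟨h1, h2⟩, ⟨h3, h4⟩, h5, h6⟩
      rcases eq_or_lt_of_le h3 with h | h
      · left
        have hx : p.1 = ξ % r := by
          apply sol_uniq (r : ℤ) hrz (a := 0) (c := ξ) h1 (by omega) ?_ (by omega) (by omega) ?_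
          · obtain ⟨k, hk⟩ := h6; exact ⟨k, by omega⟩
          · obtain ⟨k, hk⟩ := ed; exact ⟨k, by omega⟩
        have : p = (p.1, p.2) := rfl
        rw [this, hx, ← h]
      · right; exact ⟨h, h5, by omega, h6⟩
    · rintro (h | ⟨h1, h2, h3, h4⟩)
      · rw [h]
        refine ⟨⟨by omega, by omega⟩, ⟨le_refl _, by omega⟩, by omega, ed⟩
      · exact ⟨⟨by omega, by omega⟩, ⟨by omega, by omega⟩, h2, h4⟩
  rw [hins, Finset.card_insert_of_notMem]
  rw [mem_T]
  push_neg
  intro h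
  omega

lemma card_S2 (r : ℕ) (hr : 1 ≤ r) (ξ : ℤ) (hξ : ¬ (r : ℤ) ∣ ξ) (M : ℤ)
    (hMr : (r : ℤ) ∣ M) :
    (S2 r ξ M).card = (T r ξ r).card + 1 := by
  rw [← card_S2_zero r hr ξ hξ]
  apply Finset.card_bij' (fun p _ => (p.1 - M, p.2 - M)) (fun p _ => (p.1 + M, p.2 + M))
  · intro p hp
    rw [mem_S2] at hp ⊢
    obtain ⟨⟨h1, h2⟩, ⟨h3, h4⟩, h5, h6⟩ := hp
    refine ⟨⟨by omega, by omega⟩, ⟨by omega, by omega⟩, by omega, ?_⟩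
    obtain ⟨k, hk⟩ := h6
    obtain ⟨m, hm⟩ := hMr
    exact ⟨k - 3 * m, by push_cast; nlinarith [hk, hm]⟩
  · intro p hp
    rw [mem_S2] at hp ⊢
    obtain ⟨⟨h1, h2⟩, ⟨h3, h4⟩, h5, h6⟩ := hp
    refine ⟨⟨by omega, by omega⟩, ⟨by omega, by omega⟩, by omega, ?_⟩
    obtain ⟨k, hk⟩ := h6
    obtain ⟨m, hm⟩ := hMr
    exact ⟨k + 3 * m, by push_cast; nlinarith [hk, hm]⟩
  · intro p _; simp
  · intro p _; simp

lemma card_T_step (r : ℕ) (hr : 1 ≤ r) (ξ : ℤ) (hξ : ¬ (r : ℤ) ∣ ξ) (M : ℤ)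
    (hM : 1 ≤ M) (hMr : (r : ℤ) ∣ M) :
    (T r ξ (M + r)).card = (T r ξ M).card + ((M - 1).toNat + ((T r ξ r).card + 1)) := by
  classical
  have hsplit : T r ξ (M + r) = (T r ξ M ∪ S1 r ξ M) ∪ S2 r ξ M := by
    ext p
    simp only [Finset.mem_union, mem_T, mem_S1, mem_S2]
    by_cases hD : (r : ℤ) ∣ p.1 + 2 * p.2 - ξ <;> simp only [hD] <;> [skip; tauto]
    simp only [and_true]
    omega
  have d1 : Disjoint (T r ξ M) (S1 r ξ M) := by
    rw [Finset.disjoint_left]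
    intro p h1 h2
    rw [mem_T] at h1; rw [mem_S1] at h2
    omega
  have d2 : Disjoint (T r ξ M ∪ S1 r ξ M) (S2 r ξ M) := by
    rw [Finset.disjoint_left]
    intro p h1 h2
    rw [Finset.mem_union, mem_T, mem_S1] at h1; rw [mem_S2] at h2
    omega
  rw [hsplit, Finset.card_union_of_disjoint d2, Finset.card_union_of_disjoint d1,
    card_S1 r hr ξ M hM, card_S2 r hr ξ hξ M hMr]
  ring

lemma card_T_mul (r : ℕ) (hr : 1 ≤ r) (ξ : ℤ) (hξ : ¬ (r : ℤ) ∣ ξ) (m : ℕ) :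
    (T r ξ ((m : ℤ) * r)).card = m * (T r ξ r).card + m.choose 2 * r := by
  induction m with
  | zero => simp [T]
  | succ n ih =>
    rcases Nat.eq_zero_or_pos n with hn | hn
    · subst hn
      simp
    · have hM : (1 : ℤ) ≤ (n : ℤ) * r := by
        have h1 : (1:ℤ) ≤ (n:ℤ) := by exact_mod_cast hn
        have h2 : (1:ℤ) ≤ (r:ℤ) := by exact_mod_cast hr
        nlinarith
      have hstep := card_T_step r hr ξ hξ ((n : ℤ) * r) hM ⟨n, by ring⟩
      have hcast : ((n + 1 : ℕ) : ℤ) * r = (n : ℤ) * r + r := by push_cast; ring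
      rw [hcast, hstep, ih]
      have htn : ((n : ℤ) * r - 1).toNat = n * r - 1 := by
        have : ((n : ℤ) * r) = ((n * r : ℕ) : ℤ) := by push_cast; ring
        rw [this]
        omega
      rw [htn]
      have hc : (n + 1).choose 2 = n.choose 2 + n := by
        rw [Nat.choose_succ_succ]
        simp [Nat.choose_one_right, Nat.add_comm]
      rw [hc]
      have hnr : 1 ≤ n * r := Nat.one_le_iff_ne_zero.mpr (by positivity)
      ring_nf
      omega

lemma Acount_eq (r : ℕ) (ξ : ℤ) : Acount r ξ = (T r ξ (r : ℤ)).card := by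
  rw [Acount]
  rw [Nat.card_congr (Equiv.subtypeEquivRight (q := fun p => p ∈ T r ξ (r : ℤ)) ?_)]
  · rw [Nat.card_eq_fintype_card, Fintype.card_coe]
  · intro p
    simp only [mem_T]
    have hmod : (p.1 + 2 * p.2 ≡ ξ [ZMOD (r : ℤ)]) ↔ (r : ℤ) ∣ p.1 + 2 * p.2 - ξ := by
      rw [Int.modEq_iff_dvd, dvd_sub_comm]
    rw [hmod]
    constructor
    · rintro ⟨h1, h2, h3, h4⟩; exact ⟨by omega, h2, h3, h4⟩
    · rintro ⟨h1, h2, h3, h4⟩; exact ⟨by omega, h2, h3, h4⟩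

end CPOaux

/-- The number of lattice points of `𝓛(r²t; 1, 1+rt, 1+3rt)` of one-norm `ωrt` in the
open positive octant equals `ωt·A(r,−ω) + C(ωt,2)·r`, when `r ∤ ω`. -/
theorem count_positive_octant (r t ω : ℕ) (hr : 1 ≤ r) (ht : 1 ≤ t) (hω : 1 ≤ ω)
    (hrω : ¬ (r ∣ ω)) :
    Nat.card {v : ℤ × ℤ × ℤ // 0 < v.1 ∧ 0 < v.2.1 ∧ 0 < v.2.2 ∧
        v.1 + v.2.1 + v.2.2 = (ω : ℤ) * r * t ∧
        ((r : ℤ) ^ 2 * t) ∣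
          v.1 + (1 + (r : ℤ) * t) * v.2.1 + (1 + 3 * (r : ℤ) * t) * v.2.2}
      = ω * t * Acount r (-(ω : ℤ)) + (ω * t).choose 2 * r := by
  classical
  set ξ : ℤ := -(ω : ℤ) with hξdef
  set M : ℤ := (ω : ℤ) * r * t with hMdef
  have hrt : ((r : ℤ) * t) ≠ 0 := by
    have h1 : (0:ℤ) < r := by exact_mod_cast hr
    have h2 : (0:ℤ) < t := by exact_mod_cast ht
    positivity
  have key : ∀ a b c : ℤ, a + b + c = M →
      (((r : ℤ) ^ 2 * t) ∣ a + (1 + (r : ℤ) * t) * b + (1 + 3 * (r : ℤ) * t) * c ↔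
        (r : ℤ) ∣ (b + c) + 2 * c - ξ) := by
    intro a b c hsum
    have h1 : a + (1 + (r : ℤ) * t) * b + (1 + 3 * (r : ℤ) * t) * c
        = ((r : ℤ) * t) * ((b + c) + 2 * c - ξ) := by
      rw [hξdef]
      linear_combination hsum
    have h2 : ((r : ℤ) ^ 2 * t) = ((r : ℤ) * t) * r := by ring
    rw [h1, h2, mul_dvd_mul_iff_left hrt]
  have e : {v : ℤ × ℤ × ℤ // 0 < v.1 ∧ 0 < v.2.1 ∧ 0 < v.2.2 ∧
        v.1 + v.2.1 + v.2.2 = (ω : ℤ) * r * t ∧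
        ((r : ℤ) ^ 2 * t) ∣
          v.1 + (1 + (r : ℤ) * t) * v.2.1 + (1 + 3 * (r : ℤ) * t) * v.2.2} ≃
      {p : ℤ × ℤ // p ∈ CPOaux.T r ξ M} := by
    refine ⟨fun v => ⟨(v.1.2.1 + v.1.2.2, v.1.2.2), ?_⟩,
      fun p => ⟨(M - p.1.1, p.1.1 - p.1.2, p.1.2), ?_⟩, ?_, ?_⟩
    · obtain ⟨⟨a, b, c⟩, h1, h2, h3, h4, h5⟩ := v
      dsimp only at h1 h2 h3 h4 h5 ⊢
      rw [CPOaux.mem_T]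
      refine ⟨by omega, by omega, by omega, ?_⟩
      exact (key a b c h4).mp h5
    · obtain ⟨⟨x, y⟩, hp⟩ := p
      dsimp only
      rw [CPOaux.mem_T] at hp
      obtain ⟨h1, h2, h3, h4⟩ := hp
      refine ⟨by omega, by omega, by omega, by ring, ?_⟩
      have hsum : (M - x) + (x - y) + y = M := by ring
      refine (key (M - x) (x - y) y hsum).mpr ?_
      obtain ⟨k, hk⟩ := h4
      exact ⟨k, by omega⟩
    · rintro ⟨⟨a, b, c⟩, h1, h2, h3, h4, h5⟩
      dsimp only at h1 h2 h3 h4 h5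
      apply Subtype.ext
      dsimp only
      rw [Prod.mk.injEq, Prod.mk.injEq]
      exact ⟨by omega, by ring, rfl⟩
    · rintro ⟨⟨x, y⟩, hp⟩
      apply Subtype.ext
      dsimp only
      rw [Prod.mk.injEq]
      exact ⟨by ring, rfl⟩
  rw [Nat.card_congr e, Nat.card_eq_fintype_card, Fintype.card_coe]
  have hMcast : M = ((ω * t : ℕ) : ℤ) * r := by rw [hMdef]; push_cast; ring
  have hξnd : ¬ (r : ℤ) ∣ ξ := by
    rw [hξdef, dvd_neg]
    exact fun h => hrω (by exact_mod_cast h)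
  rw [hMcast, CPOaux.card_T_mul r hr ξ hξnd (ω * t), CPOaux.Acount_eq]
end

section
/- Let m ≥ 3, let r ≥ m+3 and t ≥ 1 be integers, and set q = r²t. Then the congruence lattices 𝓛(q; 1, 1+2rt, 1+3rt, …, 1+mrt) and 𝓛(q; 1, 1−2rt, 1−3rt, …, 1−mrt) in ℤ^m (with parameter tuples (1+krt)_{k∈{0,2,3,…,m}} and (1−krt)_{k∈{0,2,3,…,m}}) are not ‖·‖₁-isometric. -/

private lemma abs_pair_le (a b : ℝ) : |a + b| + |a - b| ≤ 2 * |a| + 2 * |b| := by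
  have h1 := le_abs_self a; have h2 := neg_abs_le a
  have h3 := le_abs_self b; have h4 := neg_abs_le b
  rcases abs_cases (a + b) with ⟨e1, _⟩ | ⟨e1, _⟩ <;>
    rcases abs_cases (a - b) with ⟨e2, _⟩ | ⟨e2, _⟩ <;> linarith

private lemma abs_pair_lt (a b : ℝ) (ha : a ≠ 0) (hb : b ≠ 0) :
    |a + b| + |a - b| < 2 * |a| + 2 * |b| := by
  have ha' := abs_pos.mpr ha
  have hb' := abs_pos.mpr hb
  have h1 := le_abs_self a; have h2 := neg_abs_le a
  have h3 := le_abs_self b; have h4 := neg_abs_le b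
  rcases abs_cases (a + b) with ⟨e1, _⟩ | ⟨e1, _⟩ <;>
    rcases abs_cases (a - b) with ⟨e2, _⟩ | ⟨e2, _⟩ <;> linarith

private lemma exists_signed_perm {m : ℕ} (T : (Fin m → ℝ) ≃ₗ[ℝ] (Fin m → ℝ))
    (hT : ∀ x : Fin m → ℝ, ∑ j, |T x j| = ∑ j, |x j|) :
    ∃ (σ : Fin m → Fin m) (c : Fin m → ℝ), Function.Injective σ ∧
      (∀ i, c i = 1 ∨ c i = -1) ∧
      (∀ i, T (fun j => if i = j then 1 else 0) = fun k => c i * (if k = σ i then 1 else 0)) := by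
  classical
  set e : Fin m → (Fin m → ℝ) := fun i j => if i = j then 1 else 0 with he
  have hsum1 : ∀ i : Fin m, ∑ j, |e i j| = 1 := by
    intro i
    have h : ∀ j, |e i j| = if i = j then (1:ℝ) else 0 := by
      intro j; simp only [he]; split <;> simp
    rw [Finset.sum_congr rfl fun j _ => h j]
    simp
  have hdisj : ∀ i i' : Fin m, i ≠ i' → ∀ k, T (e i) k = 0 ∨ T (e i') k = 0 := by
    intro i i' hne k
    by_contra hcon
    push_neg at hcon
    have hsum_add : ∑ j, |e i j + e i' j| = 2 := by
      have h : ∀ j, |e i j + e i' j| =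
          (if i = j then (1:ℝ) else 0) + (if i' = j then 1 else 0) := by
        intro j
        simp only [he]
        by_cases h1 : i = j <;> by_cases h2 : i' = j <;> simp [h1, h2]
      rw [Finset.sum_congr rfl fun j _ => h j, Finset.sum_add_distrib]
      simp
      norm_num
    have hsum_sub : ∑ j, |e i j - e i' j| = 2 := by
      have h : ∀ j, |e i j - e i' j| =
          (if i = j then (1:ℝ) else 0) + (if i' = j then 1 else 0) := by
        intro j
        simp only [he]
        by_cases h1 : i = j <;> by_cases h2 : i' = j <;> simp [h1, h2]
        exact absurd (h1.trans h2.symm) hne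
      rw [Finset.sum_congr rfl fun j _ => h j, Finset.sum_add_distrib]
      simp
      norm_num
    have E1 : ∑ k, (|T (e i) k + T (e i') k| + |T (e i) k - T (e i') k|) = 4 := by
      rw [Finset.sum_add_distrib]
      have a1 : ∑ k, |T (e i) k + T (e i') k| = 2 := by
        have h := hT (e i + e i')
        rw [map_add] at h
        simpa [hsum_add] using h
      have a2 : ∑ k, |T (e i) k - T (e i') k| = 2 := by
        have h := hT (e i - e i')
        rw [map_sub] at h
        simpa [hsum_sub] using h
      rw [a1, a2]; norm_num
    have E2 : ∑ k, (2 * |T (e i) k| + 2 * |T (e i') k|) = 4 := by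
      rw [Finset.sum_add_distrib, ← Finset.mul_sum, ← Finset.mul_sum, hT, hT, hsum1, hsum1]
      norm_num
    have hlt : ∑ k, (|T (e i) k + T (e i') k| + |T (e i) k - T (e i') k|) <
        ∑ k, (2 * |T (e i) k| + 2 * |T (e i') k|) := by
      apply Finset.sum_lt_sum (fun k _ => abs_pair_le _ _)
      exact ⟨k, Finset.mem_univ k, abs_pair_lt _ _ hcon.1 hcon.2⟩
    rw [E1, E2] at hlt
    exact lt_irrefl _ hlt
  have hne0 : ∀ i, ∃ k, T (e i) k ≠ 0 := by
    intro i
    by_contra h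
    push_neg at h
    have h1 := hT (e i)
    rw [hsum1 i] at h1
    simp [h] at h1
  choose σ hσ using hne0
  have hinj : Function.Injective σ := by
    intro i i' h
    by_contra hne
    rcases hdisj i i' hne (σ i) with h0 | h0
    · exact hσ i h0
    · rw [h] at h0; exact hσ i' h0
  have hzero : ∀ i k, k ≠ σ i → T (e i) k = 0 := by
    intro i k hk
    have hsurj : Function.Surjective σ := Finite.injective_iff_surjective.mp hinj
    obtain ⟨i', rfl⟩ := hsurj k
    have hne : i ≠ i' := fun h => hk (by rw [h])
    rcases hdisj i i' hne (σ i') with h0 | h0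
    · exact h0
    · exact absurd h0 (hσ i')
  refine ⟨σ, fun i => T (e i) (σ i), hinj, ?_, ?_⟩
  · intro i
    have h1 : ∑ k, |T (e i) k| = 1 := by rw [hT, hsum1]
    have h2 : ∑ k, |T (e i) k| = |T (e i) (σ i)| := by
      apply Finset.sum_eq_single_of_mem (σ i) (Finset.mem_univ _)
      intro k _ hk
      rw [hzero i k hk, abs_zero]
    exact (abs_eq (by norm_num : (0:ℝ) ≤ 1)).mp (h2.symm.trans h1)
  · intro i
    funext k
    by_cases hk : k = σ i
    · subst hk; simp; rfl
    · rw [hzero i k hk]; simp [hk]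
private lemma sum_single_mul {m : ℕ} (j : Fin m) (x : ℤ) (f : Fin m → ℤ) :
    ∑ i, (if i = j then x else 0) * f i = x * f j := by
  have h : ∀ i, (if i = j then x else 0) * f i = if i = j then x * f i else 0 :=
    fun i => by split_ifs <;> ring
  rw [Finset.sum_congr rfl fun i _ => h i, Finset.sum_ite_eq' Finset.univ j fun i => x * f i]
  simp

-- membership transfer
private lemma transfer {m q : ℕ} (s s' : Fin m → ℤ)
    (T : (Fin m → ℝ) ≃ₗ[ℝ] (Fin m → ℝ))
    (σ : Fin m → Fin m) (c : Fin m → ℝ) (εz : Fin m → ℤ)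
    (hcz : ∀ i, ((εz i : ℤ) : ℝ) = c i)
    (hTe : ∀ i, T (fun j => if i = j then 1 else 0) = fun k => c i * (if k = σ i then 1 else 0))
    (himg : T '' (intCastImg (congLat q m s)) = intCastImg (congLat q m s'))
    (a : Fin m → ℤ) (ha : a ∈ congLat q m s) :
    (q : ℤ) ∣ ∑ i, a i * εz i * s' (σ i) := by
  classical
  have hx : (fun j => ((a j : ℝ))) ∈ intCastImg (congLat q m s) := ⟨a, ha, rfl⟩
  have hx' : T (fun j => ((a j : ℝ))) ∈ intCastImg (congLat q m s') := by
    rw [← himg]; exact ⟨_, hx, rfl⟩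
  obtain ⟨b, hb, hbeq⟩ := hx'
  have hTx : ∀ k, T (fun j => ((a j : ℝ))) k
      = ∑ i, (a i : ℝ) * (c i * (if k = σ i then 1 else 0)) := by
    intro k
    have h1 : (fun j => ((a j : ℝ)))
        = ∑ i, (a i : ℝ) • (fun j => if i = j then (1:ℝ) else 0) := pi_eq_sum_univ _
    rw [h1, map_sum]
    simp only [map_smul]
    rw [Finset.sum_apply]
    refine Finset.sum_congr rfl fun i _ => ?_
    rw [hTe i]
    simp
  have hbk : ∀ k, b k = ∑ i, a i * εz i * (if k = σ i then 1 else 0) := by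
    intro k
    have hcast : ((b k : ℤ) : ℝ)
        = ((∑ i, a i * εz i * (if k = σ i then 1 else 0) : ℤ) : ℝ) := by
      have h0 : ((b k : ℤ) : ℝ) = T (fun j => ((a j : ℝ))) k := congrFun hbeq k
      rw [h0, hTx k]
      push_cast
      refine Finset.sum_congr rfl fun i _ => ?_
      rw [← hcz i]
      split_ifs <;> push_cast <;> ring
    exact_mod_cast hcast
  have hb' : (q : ℤ) ∣ ∑ k, b k * s' k := hb
  have heq : ∑ k, b k * s' k = ∑ i, a i * εz i * s' (σ i) := by
    rw [Finset.sum_congr rfl fun k _ => by rw [hbk k, Finset.sum_mul]]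
    rw [Finset.sum_comm]
    refine Finset.sum_congr rfl fun i _ => ?_
    have h : ∀ k, a i * εz i * (if k = σ i then 1 else 0) * s' k
        = if k = σ i then a i * εz i * s' k else 0 := fun k => by split_ifs <;> ring
    rw [Finset.sum_congr rfl fun k _ => h k,
      Finset.sum_ite_eq' Finset.univ (σ i) fun k => a i * εz i * s' k]
    simp
  rwa [heq] at hb'
private lemma cancel_rt {R Tt X : ℤ} (hR : 0 < R) (hT : 0 < Tt)
    (h : R ^ 2 * Tt ∣ X * (R * Tt)) : R ∣ X := by
  obtain ⟨Y, hY⟩ := h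
  refine ⟨Y, ?_⟩
  have hne : R * Tt ≠ 0 := by positivity
  apply mul_right_cancel₀ hne
  rw [hY]; ring

private lemma signs_and_congr {R Tt A B C e0 ej : ℤ}
    (hR : 6 ≤ R) (hT : 1 ≤ Tt)
    (he0 : e0 = 1 ∨ e0 = -1) (hej : ej = 1 ∨ ej = -1)
    (h : R ^ 2 * Tt ∣ ej * (1 - A * R * Tt) - (1 + B * R * Tt) * (e0 * (1 - C * R * Tt))) :
    R ∣ C - B - A := by
  have hR0 : (0:ℤ) < R := by omega
  have hT0 : (0:ℤ) < Tt := by omega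
  have hq : R * Tt ∣ R ^ 2 * Tt := ⟨R, by ring⟩
  rcases hej with hj | hj <;> rcases he0 with h0 | h0 <;> rw [hj, h0] at h
  · have h1 : (1:ℤ) * (1 - A * R * Tt) - (1 + B * R * Tt) * (1 * (1 - C * R * Tt))
        = (C - B - A) * (R * Tt) + (B * C * Tt) * (R ^ 2 * Tt) := by ring
    rw [h1] at h
    have h2 : R ^ 2 * Tt ∣ (C - B - A) * (R * Tt) := by
      simpa using h.sub (dvd_mul_left (R ^ 2 * Tt) (B * C * Tt))
    exact cancel_rt hR0 hT0 h2
  · -- ej = 1, e0 = -1 : impossible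
    exfalso
    have h1 : (1:ℤ) * (1 - A * R * Tt) - (1 + B * R * Tt) * ((-1) * (1 - C * R * Tt))
        = 2 + (B - C - A - B * C * Tt * R) * (R * Tt) := by ring
    rw [h1] at h
    have hd : R * Tt ∣ 2 := by
      simpa using (hq.trans h).sub (dvd_mul_left (R * Tt) (B - C - A - B * C * Tt * R))
    have hle : R * Tt ≤ 2 := Int.le_of_dvd (by norm_num) hd
    nlinarith
  · -- ej = -1, e0 = 1 : impossible
    exfalso
    have h1 : (-1:ℤ) * (1 - A * R * Tt) - (1 + B * R * Tt) * (1 * (1 - C * R * Tt))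
        = -2 + (A - B + C + B * C * Tt * R) * (R * Tt) := by ring
    rw [h1] at h
    have hd : R * Tt ∣ -2 := by
      simpa using (hq.trans h).sub (dvd_mul_left (R * Tt) (A - B + C + B * C * Tt * R))
    have hd2 : R * Tt ∣ 2 := dvd_neg.mp hd
    have hle : R * Tt ≤ 2 := Int.le_of_dvd (by norm_num) hd2
    nlinarith
  · have h1 : (-1:ℤ) * (1 - A * R * Tt) - (1 + B * R * Tt) * ((-1) * (1 - C * R * Tt))
        = (B + A - C) * (R * Tt) + (-(B * C * Tt)) * (R ^ 2 * Tt) := by ring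
    rw [h1] at h
    have h2 : R ^ 2 * Tt ∣ (B + A - C) * (R * Tt) := by
      simpa using h.sub (dvd_mul_left (R ^ 2 * Tt) (-(B * C * Tt)))
    have h3 := cancel_rt hR0 hT0 h2
    have h4 : C - B - A = -(B + A - C) := by ring
    rw [h4]
    exact dvd_neg.mpr h3
/-- For `m ≥ 3` and `r ≥ m + 3`, the congruence lattices
`𝓛(r²t; 1, 1+2rt, 1+3rt, …, 1+mrt)` and `𝓛(r²t; 1, 1-2rt, 1-3rt, …, 1-mrt)` are
not `‖·‖₁`-isometric. -/
theorem congLat_powers_not_isometric (m r t : ℕ) (hm : 3 ≤ m) (hr : m + 3 ≤ r)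
    (ht : 1 ≤ t) :
    ¬ OneNormIsometric
        (congLat (r ^ 2 * t) m
          (fun j => 1 + (if (j : ℕ) = 0 then 0 else ((j : ℕ) : ℤ) + 1) * r * t))
        (congLat (r ^ 2 * t) m
          (fun j => 1 - (if (j : ℕ) = 0 then 0 else ((j : ℕ) : ℤ) + 1) * r * t)) := by
  classical
  haveI : NeZero m := ⟨by omega⟩
  rintro ⟨T, hT, himg⟩
  obtain ⟨σ, c, hinj, hc, hTe⟩ := exists_signed_perm T hT
  set εz : Fin m → ℤ := fun i => if c i = 1 then 1 else -1 with hεzdef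
  have hcz : ∀ i, ((εz i : ℤ) : ℝ) = c i := by
    intro i; rcases hc i with h | h <;> simp [hεzdef, h] <;> norm_num
  have hεz2 : ∀ i, εz i = 1 ∨ εz i = -1 := by
    intro i; rcases hc i with h | h <;> simp [hεzdef, h] <;> norm_num
  set s : Fin m → ℤ := fun j => 1 + (if (j : ℕ) = 0 then 0 else ((j : ℕ) : ℤ) + 1) * r * t
    with hsdef
  set s' : Fin m → ℤ := fun j => 1 - (if (j : ℕ) = 0 then 0 else ((j : ℕ) : ℤ) + 1) * r * t
    with hs'def
  have himg' : T '' intCastImg (congLat (r ^ 2 * t) m s)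
      = intCastImg (congLat (r ^ 2 * t) m s') := himg
  set Kf : Fin m → ℤ := fun x => if (x : ℕ) = 0 then 0 else ((x : ℕ) : ℤ) + 1 with hKfdef
  have hseq : ∀ x, s x = 1 + Kf x * r * t := fun x => rfl
  have hs'eq : ∀ x, s' x = 1 - Kf x * r * t := fun x => rfl
  have hs0 : s 0 = 1 := by
    have h0 : ((0 : Fin m) : ℕ) = 0 := rfl
    simp [hsdef, h0]
  have star : ∀ j : Fin m,
      ((r ^ 2 * t : ℕ) : ℤ) ∣ εz j * s' (σ j) - s j * (εz 0 * s' (σ 0)) := by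
    intro j
    have ha : (fun i => (if i = j then (1:ℤ) else 0) + (if i = 0 then -(s j) else 0))
        ∈ congLat (r ^ 2 * t) m s := by
      show ((r ^ 2 * t : ℕ) : ℤ) ∣
        ∑ i, ((if i = j then (1:ℤ) else 0) + (if i = 0 then -(s j) else 0)) * s i
      have hcalc : ∑ i, ((if i = j then (1:ℤ) else 0) + (if i = 0 then -(s j) else 0)) * s i
          = 1 * s j + (-(s j)) * s 0 := by
        rw [Finset.sum_congr rfl fun i _ => add_mul _ _ _, Finset.sum_add_distrib,
          sum_single_mul j 1 s, sum_single_mul 0 (-(s j)) s]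
      rw [hcalc, hs0]
      simp
    have hkey := transfer s s' T σ c εz hcz hTe himg' _ ha
    have hcalc2 : ∑ i, ((if i = j then (1:ℤ) else 0) + (if i = 0 then -(s j) else 0))
          * εz i * s' (σ i)
        = εz j * s' (σ j) + (-(s j)) * (εz 0 * s' (σ 0)) := by
      have h1 : ∀ i : Fin m, ((if i = j then (1:ℤ) else 0) + (if i = 0 then -(s j) else 0))
            * εz i * s' (σ i)
          = (if i = j then (1:ℤ) else 0) * (εz i * s' (σ i))
            + (if i = 0 then -(s j) else 0) * (εz i * s' (σ i)) := fun i => by ring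
      rw [Finset.sum_congr rfl fun i _ => h1 i, Finset.sum_add_distrib,
        sum_single_mul j 1 (fun i => εz i * s' (σ i)),
        sum_single_mul 0 (-(s j)) (fun i => εz i * s' (σ i))]
      ring
    rw [hcalc2] at hkey
    have h2 : εz j * s' (σ j) + (-(s j)) * (εz 0 * s' (σ 0))
        = εz j * s' (σ j) - s j * (εz 0 * s' (σ 0)) := by ring
    rwa [h2] at hkey
  have hdvd : ∀ j : Fin m, (r : ℤ) ∣ Kf (σ 0) - Kf j - Kf (σ j) := by
    intro j
    have h := star j
    have hq : ((r ^ 2 * t : ℕ) : ℤ) = (r : ℤ) ^ 2 * (t : ℤ) := by push_cast; ring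
    rw [hq, hseq, hs'eq, hs'eq] at h
    exact signs_and_congr (by exact_mod_cast (by omega : 6 ≤ r))
      (by exact_mod_cast ht) (hεz2 0) (hεz2 j) h
  -- Combinatorial contradiction
  have hKbound : ∀ x : Fin m, Kf x = 0 ∨ (2 ≤ Kf x ∧ Kf x ≤ m) := by
    intro x
    by_cases hx : (x : ℕ) = 0
    · left; simp only [hKfdef]; exact if_pos hx
    · right
      have hlt : (x : ℕ) < m := x.isLt
      have hv : Kf x = ((x : ℕ) : ℤ) + 1 := by simp only [hKfdef]; exact if_neg hx
      rw [hv]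
      omega
  have hrz : (m : ℤ) + 3 ≤ (r : ℤ) := by exact_mod_cast hr
  by_cases h0 : (σ 0 : ℕ) = 0
  · have hc0 : Kf (σ 0) = 0 := by simp only [hKfdef]; exact if_pos h0
    set j : Fin m := ⟨1, by omega⟩ with hjdef
    have hKj : Kf j = 2 := by norm_num [hKfdef, hjdef]
    have hσj : (σ j : ℕ) ≠ 0 := by
      intro hcon
      have heq : σ j = σ 0 := by
        apply Fin.ext
        rw [hcon, h0]
      have hj0 : j = 0 := hinj heq
      have : (1 : ℕ) = 0 := by
        have := congrArg Fin.val hj0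
        simpa [hjdef] using this
      omega
    have hKσj : 2 ≤ Kf (σ j) ∧ Kf (σ j) ≤ m := by
      rcases hKbound (σ j) with h | h
      · exfalso
        simp only [hKfdef, if_neg hσj] at h
        omega
      · exact h
    have hd := hdvd j
    rw [hc0, hKj] at hd
    have hle := Int.le_of_dvd (by omega) (dvd_neg.mpr hd)
    omega
  · have hc0 : Kf (σ 0) = ((σ 0 : ℕ) : ℤ) + 1 := by simp only [hKfdef]; exact if_neg h0
    by_cases h1 : (σ 0 : ℕ) = 1
    · set j : Fin m := ⟨2, by omega⟩ with hjdef
      have hKj : Kf j = 3 := by norm_num [hKfdef, hjdef]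
      have hd := hdvd j
      rw [hc0, h1, hKj] at hd
      rcases hKbound (σ j) with h | h
      · have hle := Int.le_of_dvd (by omega) (dvd_neg.mpr hd)
        omega
      · have hle := Int.le_of_dvd (by omega) (dvd_neg.mpr hd)
        omega
    · have h2 : 2 ≤ (σ 0 : ℕ) := by omega
      set j : Fin m := ⟨(σ 0 : ℕ) - 1, by have := (σ 0).isLt; omega⟩ with hjdef
      have hKj : Kf j = ((σ 0 : ℕ) : ℤ) := by
        have hj1 : (j : ℕ) = (σ 0 : ℕ) - 1 := rfl
        simp only [hKfdef, hj1]
        rw [if_neg (by omega)]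
        omega
      have hd := hdvd j
      rw [hc0, hKj] at hd
      have hd' : (r : ℤ) ∣ 1 - Kf (σ j) := by
        have heq : ((σ 0 : ℕ) : ℤ) + 1 - ((σ 0 : ℕ) : ℤ) - Kf (σ j) = 1 - Kf (σ j) := by ring
        rwa [heq] at hd
      rcases hKbound (σ j) with h | h
      · rw [h] at hd'
        have hle := Int.le_of_dvd (by omega) hd'
        omega
      · have hle := Int.le_of_dvd (by omega) (dvd_neg.mpr hd')
        omega
end

section
/- Let r ≥ 6 and t ≥ 1 be integers. Then the congruence lattices 𝓛(r²t; 1, 1+rt, 1+3rt) and 𝓛(r²t; 1, 1−rt, 1−3rt) in ℤ³ are not ‖·‖₁-isometric. -/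
lemma abs_identity (a b : ℝ) : |a+b| + |a-b| = |a| + |b| + |(|a|-|b|)| := by
  rcases abs_cases a with ⟨h1,h1'⟩|⟨h1,h1'⟩ <;>
  rcases abs_cases b with ⟨h2,h2'⟩|⟨h2,h2'⟩ <;>
  rcases abs_cases (a+b) with ⟨h3,h3'⟩|⟨h3,h3'⟩ <;>
  rcases abs_cases (a-b) with ⟨h4,h4'⟩|⟨h4,h4'⟩ <;>
  rcases abs_cases (|a|-|b|) with ⟨h5,h5'⟩|⟨h5,h5'⟩ <;>
  linarith

lemma zer (a b : ℝ) (h : |(|a|-|b|)| = |a| + |b|) : a = 0 ∨ b = 0 := by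
  rcases abs_cases (|a|-|b|) with ⟨h5,h5'⟩|⟨h5,h5'⟩
  · right; have : |b| = 0 := by linarith [abs_nonneg a, abs_nonneg b]
    exact abs_eq_zero.mp this
  · left; have : |a| = 0 := by linarith [abs_nonneg a, abs_nonneg b]
    exact abs_eq_zero.mp this

lemma absle (a b : ℝ) : |(|a|-|b|)| ≤ |a| + |b| := by
  rcases abs_cases (|a|-|b|) with ⟨h5,h5'⟩|⟨h5,h5'⟩ <;> linarith [abs_nonneg a, abs_nonneg b]


lemma disj (a b : Fin 3 → ℝ) (ha : ∑ i, |a i| = 1) (hb : ∑ i, |b i| = 1)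
    (hab : ∑ i, |a i + b i| = 2) (hab' : ∑ i, |a i - b i| = 2) :
    ∀ i, a i = 0 ∨ b i = 0 := by
  have key : ∀ i, |(|a i|-|b i|)| = |a i| + |b i| := by
    simp only [Fin.sum_univ_three] at ha hb hab hab'
    have e0 := abs_identity (a 0) (b 0)
    have e1 := abs_identity (a 1) (b 1)
    have e2 := abs_identity (a 2) (b 2)
    have l0 := absle (a 0) (b 0)
    have l1 := absle (a 1) (b 1)
    have l2 := absle (a 2) (b 2)
    intro i
    fin_cases i <;> [skip; skip; skip] <;> simp <;> linarith
  intro i; exact zer _ _ (key i)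


lemma basis_sum (j : Fin 3) : ∑ k, |(if j = k then (1:ℝ) else 0)| = 1 := by
  fin_cases j <;> simp [Fin.sum_univ_three]

lemma basis_sum_add (j k : Fin 3) (h : j ≠ k) :
    ∑ i, |(if j = i then (1:ℝ) else 0) + (if k = i then (1:ℝ) else 0)| = 2 := by
  fin_cases j <;> fin_cases k <;> simp_all [Fin.sum_univ_three] <;> norm_num

lemma basis_sum_sub (j k : Fin 3) (h : j ≠ k) :
    ∑ i, |(if j = i then (1:ℝ) else 0) - (if k = i then (1:ℝ) else 0)| = 2 := by
  fin_cases j <;> fin_cases k <;> simp_all [Fin.sum_univ_three] <;> norm_num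

lemma signed_perm (T : (Fin 3 → ℝ) ≃ₗ[ℝ] (Fin 3 → ℝ))
    (hT : ∀ x : Fin 3 → ℝ, ∑ j, |T x j| = ∑ j, |x j|) :
    ∃ σ : Equiv.Perm (Fin 3), ∃ ε : Fin 3 → ℝ,
      (∀ i, ε i = 1 ∨ ε i = -1) ∧ ∀ x : Fin 3 → ℝ, ∀ i, T x i = ε i * x (σ i) := by
  set e : Fin 3 → Fin 3 → ℝ := fun j k => if j = k then 1 else 0 with he
  set C : Fin 3 → Fin 3 → ℝ := fun j => T (e j) with hCdef
  have hexp : ∀ (x : Fin 3 → ℝ) i, T x i = ∑ j, x j * C j i := by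
    intro x i
    have hx : x = ∑ j, x j • e j := pi_eq_sum_univ x
    calc T x i = T (∑ j, x j • e j) i := by rw [← hx]
    _ = (∑ j, x j • T (e j)) i := by rw [map_sum]; simp
    _ = ∑ j, x j * C j i := by simp [Finset.sum_apply]; rfl
  have hcol : ∀ j, ∑ i, |C j i| = 1 := by
    intro j
    have := hT (e j)
    rwa [basis_sum j] at this
  have hdisj : ∀ j k, j ≠ k → ∀ i, C j i = 0 ∨ C k i = 0 := by
    intro j k hjk
    apply disj _ _ (hcol j) (hcol k)
    · have h1 := hT (e j + e k)
      have h2 : ∑ i, |(e j + e k) i| = 2 := by simpa [he] using basis_sum_add j k hjk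
      rw [h2] at h1
      simpa [map_add] using h1
    · have h1 := hT (e j - e k)
      have h2 : ∑ i, |(e j - e k) i| = 2 := by simpa [he] using basis_sum_sub j k hjk
      rw [h2] at h1
      simpa [map_sub] using h1
  have hnz : ∀ j, ∃ i, C j i ≠ 0 := by
    intro j
    by_contra h
    push_neg at h
    have := hcol j
    simp [h] at this
  classical
  set g : Fin 3 → Fin 3 := fun j => (hnz j).choose with hgdef
  have hg : ∀ j, C j (g j) ≠ 0 := fun j => (hnz j).choose_spec
  have ginj : Function.Injective g := by
    intro j k hjk
    by_contra hne
    rcases hdisj j k hne (g j) with h | h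
    · exact hg j h
    · rw [hjk] at h; exact hg k h
  have gbij : Function.Bijective g := Finite.injective_iff_bijective.mp ginj
  set σ' : Equiv.Perm (Fin 3) := Equiv.ofBijective g gbij with hσ'
  have hC0 : ∀ j i, i ≠ g j → C j i = 0 := by
    intro j i hi
    obtain ⟨k, hk⟩ := gbij.2 i
    have hkj : k ≠ j := fun h => hi (h ▸ hk.symm)
    rcases hdisj k j hkj i with h | h
    · exact absurd (hk ▸ h) (hg k)
    · exact h
  refine ⟨σ'.symm, fun i => C (σ'.symm i) i, ?_, ?_⟩
  · intro i
    have habs : |C (σ'.symm i) i| = 1 := by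
      have h1 := hcol (σ'.symm i)
      have h2 : ∑ i', |C (σ'.symm i) i'| = |C (σ'.symm i) i| := by
        apply Finset.sum_eq_single
        · intro i' _ hi'
          have : i' ≠ g (σ'.symm i) := by
            have : g (σ'.symm i) = i := σ'.apply_symm_apply i
            rw [this]; exact hi'
          rw [hC0 _ _ this, abs_zero]
        · intro h; exact absurd (Finset.mem_univ i) h
      rw [h2] at h1
      exact h1
    rcases (abs_eq (by norm_num : (0:ℝ) ≤ 1)).mp habs with h | h
    · exact Or.inl h
    · exact Or.inr h
  · intro x i
    rw [hexp x i]
    rw [Finset.sum_eq_single (σ'.symm i)]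
    · ring
    · intro j _ hj
      have : i ≠ g j := by
        intro h
        exact hj ((Equiv.symm_apply_eq σ').mpr h).symm
      rw [hC0 _ _ this, mul_zero]
    · intro h; exact absurd (Finset.mem_univ _) h

lemma keyF (r t c d e E : ℤ) (hr : 6 ≤ r) (ht : 1 ≤ t)
    (hE : E = c + d*(r*t) + r^2*t*e) (h : r^2*t ∣ E)
    (hc : |c| ≤ 2) (hd : |d| ≤ 5) (hcd : c ≠ 0 ∨ d ≠ 0) : False := by
  have hrt : 6 ≤ r*t := by nlinarith
  have hrt0 : r*t ≠ 0 := by intro h0; omega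
  have h2 : r*t ∣ E := dvd_trans ⟨r, by ring⟩ h
  have hc0 : c = 0 := by
    have h3 : E - (r*t)*(d + r*e) = c := by rw [hE]; ring
    have h4 : r*t ∣ c := by rw [← h3]; exact dvd_sub h2 (dvd_mul_right _ _)
    by_contra hne
    have := Int.le_of_dvd (abs_pos.mpr hne) ((dvd_abs _ _).mpr h4)
    have : |c| ≤ 2 := hc
    omega
  have hd0 : d = 0 := by
    subst hc0
    have h5 : r^2*t ∣ d*(r*t) := by
      have h6 : E - r^2*t*e = d*(r*t) := by rw [hE]; ring
      rw [← h6]; exact dvd_sub h (dvd_mul_right _ _)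
    obtain ⟨k, hk⟩ := h5
    have h7 : d * (r*t) = (r*k) * (r*t) := by rw [hk]; ring
    have h8 : d = r*k := mul_right_cancel₀ hrt0 h7
    by_contra hne
    have hk0 : k ≠ 0 := by rintro rfl; simp at h8; exact hne h8
    have hk1 : 1 ≤ |k| := Int.one_le_abs hk0
    have har : |r| = r := abs_of_nonneg (by omega)
    have : 6 ≤ |d| := by rw [h8, abs_mul, har]; nlinarith
    omega
  rcases hcd with h | h
  · exact h hc0
  · exact h hd0

lemma partC (r t : ℤ) (hr : 6 ≤ r) (ht : 1 ≤ t) (b0 b1 b2 d0 d1 d2 : ℤ)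
    (hb : (b0=0 ∧ b1=1 ∧ b2=3) ∨ (b0=0 ∧ b1=3 ∧ b2=1) ∨ (b0=1 ∧ b1=0 ∧ b2=3) ∨
          (b0=1 ∧ b1=3 ∧ b2=0) ∨ (b0=3 ∧ b1=0 ∧ b2=1) ∨ (b0=3 ∧ b1=1 ∧ b2=0))
    (h0 : d0 = 1 ∨ d0 = -1) (h1 : d1 = 1 ∨ d1 = -1) (h2 : d2 = 1 ∨ d2 = -1)
    (hA : r^2*t ∣ d1*(1-b1*(r*t)) - (1+r*t)*(d0*(1-b0*(r*t))))
    (hB : r^2*t ∣ d2*(1-b2*(r*t)) - (1+3*(r*t))*(d0*(1-b0*(r*t)))) : False := by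
  rcases hb with ⟨rfl,rfl,rfl⟩|⟨rfl,rfl,rfl⟩|⟨rfl,rfl,rfl⟩|⟨rfl,rfl,rfl⟩|⟨rfl,rfl,rfl⟩|⟨rfl,rfl,rfl⟩ <;>
  rcases h0 with rfl|rfl <;> rcases h1 with rfl|rfl <;> rcases h2 with rfl|rfl
  · exact keyF r t (0) (-2) (0*t) _ hr ht (by ring) hA (by norm_num) (by norm_num) (by norm_num)
  · exact keyF r t (0) (-2) (0*t) _ hr ht (by ring) hA (by norm_num) (by norm_num) (by norm_num)
  · exact keyF r t (-2) (0) (0*t) _ hr ht (by ring) hA (by norm_num) (by norm_num) (by norm_num)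
  · exact keyF r t (-2) (0) (0*t) _ hr ht (by ring) hA (by norm_num) (by norm_num) (by norm_num)
  · exact keyF r t (2) (0) (0*t) _ hr ht (by ring) hA (by norm_num) (by norm_num) (by norm_num)
  · exact keyF r t (2) (0) (0*t) _ hr ht (by ring) hA (by norm_num) (by norm_num) (by norm_num)
  · exact keyF r t (0) (2) (0*t) _ hr ht (by ring) hA (by norm_num) (by norm_num) (by norm_num)
  · exact keyF r t (0) (2) (0*t) _ hr ht (by ring) hA (by norm_num) (by norm_num) (by norm_num)
  · exact keyF r t (0) (-4) (0*t) _ hr ht (by ring) hA (by norm_num) (by norm_num) (by norm_num)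
  · exact keyF r t (0) (-4) (0*t) _ hr ht (by ring) hA (by norm_num) (by norm_num) (by norm_num)
  · exact keyF r t (-2) (2) (0*t) _ hr ht (by ring) hA (by norm_num) (by norm_num) (by norm_num)
  · exact keyF r t (-2) (2) (0*t) _ hr ht (by ring) hA (by norm_num) (by norm_num) (by norm_num)
  · exact keyF r t (2) (-2) (0*t) _ hr ht (by ring) hA (by norm_num) (by norm_num) (by norm_num)
  · exact keyF r t (2) (-2) (0*t) _ hr ht (by ring) hA (by norm_num) (by norm_num) (by norm_num)
  · exact keyF r t (0) (4) (0*t) _ hr ht (by ring) hA (by norm_num) (by norm_num) (by norm_num)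
  · exact keyF r t (0) (4) (0*t) _ hr ht (by ring) hA (by norm_num) (by norm_num) (by norm_num)
  · exact keyF r t (0) (-5) (3*t) _ hr ht (by ring) hB (by norm_num) (by norm_num) (by norm_num)
  · exact keyF r t (-2) (1) (3*t) _ hr ht (by ring) hB (by norm_num) (by norm_num) (by norm_num)
  · exact keyF r t (-2) (0) (1*t) _ hr ht (by ring) hA (by norm_num) (by norm_num) (by norm_num)
  · exact keyF r t (-2) (0) (1*t) _ hr ht (by ring) hA (by norm_num) (by norm_num) (by norm_num)
  · exact keyF r t (2) (0) (-1*t) _ hr ht (by ring) hA (by norm_num) (by norm_num) (by norm_num)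
  · exact keyF r t (2) (0) (-1*t) _ hr ht (by ring) hA (by norm_num) (by norm_num) (by norm_num)
  · exact keyF r t (2) (-1) (-3*t) _ hr ht (by ring) hB (by norm_num) (by norm_num) (by norm_num)
  · exact keyF r t (0) (5) (-3*t) _ hr ht (by ring) hB (by norm_num) (by norm_num) (by norm_num)
  · exact keyF r t (0) (-3) (1*t) _ hr ht (by ring) hA (by norm_num) (by norm_num) (by norm_num)
  · exact keyF r t (0) (-3) (1*t) _ hr ht (by ring) hA (by norm_num) (by norm_num) (by norm_num)
  · exact keyF r t (-2) (3) (1*t) _ hr ht (by ring) hA (by norm_num) (by norm_num) (by norm_num)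
  · exact keyF r t (-2) (3) (1*t) _ hr ht (by ring) hA (by norm_num) (by norm_num) (by norm_num)
  · exact keyF r t (2) (-3) (-1*t) _ hr ht (by ring) hA (by norm_num) (by norm_num) (by norm_num)
  · exact keyF r t (2) (-3) (-1*t) _ hr ht (by ring) hA (by norm_num) (by norm_num) (by norm_num)
  · exact keyF r t (0) (3) (-1*t) _ hr ht (by ring) hA (by norm_num) (by norm_num) (by norm_num)
  · exact keyF r t (0) (3) (-1*t) _ hr ht (by ring) hA (by norm_num) (by norm_num) (by norm_num)
  · exact keyF r t (0) (2) (3*t) _ hr ht (by ring) hA (by norm_num) (by norm_num) (by norm_num)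
  · exact keyF r t (0) (2) (3*t) _ hr ht (by ring) hA (by norm_num) (by norm_num) (by norm_num)
  · exact keyF r t (-2) (2) (3*t) _ hr ht (by ring) hA (by norm_num) (by norm_num) (by norm_num)
  · exact keyF r t (-2) (2) (3*t) _ hr ht (by ring) hA (by norm_num) (by norm_num) (by norm_num)
  · exact keyF r t (2) (-2) (-3*t) _ hr ht (by ring) hA (by norm_num) (by norm_num) (by norm_num)
  · exact keyF r t (2) (-2) (-3*t) _ hr ht (by ring) hA (by norm_num) (by norm_num) (by norm_num)
  · exact keyF r t (0) (-2) (-3*t) _ hr ht (by ring) hA (by norm_num) (by norm_num) (by norm_num)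
  · exact keyF r t (0) (-2) (-3*t) _ hr ht (by ring) hA (by norm_num) (by norm_num) (by norm_num)
  · exact keyF r t (0) (1) (3*t) _ hr ht (by ring) hA (by norm_num) (by norm_num) (by norm_num)
  · exact keyF r t (0) (1) (3*t) _ hr ht (by ring) hA (by norm_num) (by norm_num) (by norm_num)
  · exact keyF r t (-2) (3) (3*t) _ hr ht (by ring) hA (by norm_num) (by norm_num) (by norm_num)
  · exact keyF r t (-2) (3) (3*t) _ hr ht (by ring) hA (by norm_num) (by norm_num) (by norm_num)
  · exact keyF r t (2) (-3) (-3*t) _ hr ht (by ring) hA (by norm_num) (by norm_num) (by norm_num)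
  · exact keyF r t (2) (-3) (-3*t) _ hr ht (by ring) hA (by norm_num) (by norm_num) (by norm_num)
  · exact keyF r t (0) (-1) (-3*t) _ hr ht (by ring) hA (by norm_num) (by norm_num) (by norm_num)
  · exact keyF r t (0) (-1) (-3*t) _ hr ht (by ring) hA (by norm_num) (by norm_num) (by norm_num)


/-- For `r ≥ 6`, the congruence lattices `𝓛(r²t; 1, 1+rt, 1+3rt)` and
`𝓛(r²t; 1, 1-rt, 1-3rt)` are not `‖·‖₁`-isometric. -/
theorem congLat_pair_not_isometric (r t : ℕ) (hr : 6 ≤ r) (ht : 1 ≤ t) :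
    ¬ OneNormIsometric
        (congLat (r ^ 2 * t) 3 ![(1 : ℤ), 1 + (r : ℤ) * t, 1 + 3 * (r : ℤ) * t])
        (congLat (r ^ 2 * t) 3 ![(1 : ℤ), 1 - (r : ℤ) * t, 1 - 3 * (r : ℤ) * t]) := by
  classical
  set s : Fin 3 → ℤ := ![(1 : ℤ), 1 + (r : ℤ) * t, 1 + 3 * (r : ℤ) * t] with hs
  set s' : Fin 3 → ℤ := ![(1 : ℤ), 1 - (r : ℤ) * t, 1 - 3 * (r : ℤ) * t] with hs'def
  set bf : Fin 3 → ℤ := ![0, 1, 3] with hbf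
  rintro ⟨T, hT, himg⟩
  obtain ⟨σ, ε, hε, hTform⟩ := signed_perm T hT
  set ε' : Fin 3 → ℤ := fun i => if ε i = 1 then 1 else -1 with hε'def
  have hε'cast : ∀ i, ((ε' i : ℤ) : ℝ) = ε i := by
    intro i; rcases hε i with h | h <;> norm_num [hε'def, h]
  have hd : ∀ i, ε' i = 1 ∨ ε' i = -1 := by
    intro i; by_cases h : ε i = 1 <;> simp [hε'def, h]
  have hq : ((r ^ 2 * t : ℕ) : ℤ) = (r:ℤ)^2 * (t:ℤ) := by push_cast; ring
  have hs'eq : ∀ k, s' k = 1 - bf k * ((r:ℤ)*(t:ℤ)) := by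
    intro k; fin_cases k <;> simp [hs'def, hbf] <;> ring
  set τ : Fin 3 → Fin 3 := fun j => σ.symm j with hτ
  -- membership transfer
  have transfer : ∀ a : Fin 3 → ℤ, a ∈ congLat (r^2*t) 3 s →
      (fun i => ε' i * a (σ i)) ∈ congLat (r^2*t) 3 s' := by
    intro a ha
    have hmem : (fun j => ((a j : ℤ) : ℝ)) ∈ intCastImg (congLat (r^2*t) 3 s) := ⟨a, ha, rfl⟩
    have h2 : T (fun j => ((a j : ℤ) : ℝ)) ∈ intCastImg (congLat (r^2*t) 3 s') := by
      rw [← himg]; exact Set.mem_image_of_mem _ hmem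
    obtain ⟨b, hb, hcast⟩ := h2
    have hbeq : b = fun i => ε' i * a (σ i) := by
      funext i
      have h3 : ((b i : ℤ) : ℝ) = ε i * ((a (σ i) : ℤ) : ℝ) := by
        have h4 := congrFun hcast i
        simp only at h4
        rw [hTform] at h4
        exact h4
      have h5 : ((b i : ℤ) : ℝ) = (((ε' i * a (σ i) : ℤ)) : ℝ) := by
        push_cast
        rw [hε'cast]
        exact h3
      exact_mod_cast h5
    rwa [hbeq] at hb
  -- reindexed divisibility
  have key : ∀ a : Fin 3 → ℤ, a ∈ congLat (r^2*t) 3 s →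
      ((r:ℤ)^2 * t) ∣ ∑ j, a j * (ε' (τ j) * (1 - bf (τ j) * ((r:ℤ)*t))) := by
    intro a ha
    have h6 := transfer a ha
    have h7 : ((r^2*t : ℕ) : ℤ) ∣ ∑ i, (ε' i * a (σ i)) * s' i := h6
    rw [hq] at h7
    have h8 : ∑ i, (ε' i * a (σ i)) * s' i
        = ∑ j, a j * (ε' (τ j) * (1 - bf (τ j) * ((r:ℤ)*t))) := by
      rw [← Equiv.sum_comp σ (fun j => a j * (ε' (τ j) * (1 - bf (τ j) * ((r:ℤ)*t))))]
      apply Finset.sum_congr rfl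
      intro i _
      simp only [hτ, Equiv.symm_apply_apply]
      rw [← hs'eq i]
      ring
    rwa [h8] at h7
  -- apply to two test vectors
  have ha1 : (![-(1 + (r:ℤ)*t), 1, 0] : Fin 3 → ℤ) ∈ congLat (r^2*t) 3 s := by
    show ((r^2*t : ℕ) : ℤ) ∣ _
    have : ∑ j, (![-(1 + (r:ℤ)*t), 1, 0] : Fin 3 → ℤ) j * s j = 0 := by
      simp [Fin.sum_univ_three, hs]
    rw [this]
    exact dvd_zero _
  have ha2 : (![-(1 + 3*(r:ℤ)*t), 0, 1] : Fin 3 → ℤ) ∈ congLat (r^2*t) 3 s := by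
    show ((r^2*t : ℕ) : ℤ) ∣ _
    have : ∑ j, (![-(1 + 3*(r:ℤ)*t), 0, 1] : Fin 3 → ℤ) j * s j = 0 := by
      simp [Fin.sum_univ_three, hs]
    rw [this]
    exact dvd_zero _
  have hA0 := key _ ha1
  have hB0 := key _ ha2
  have hA : ((r:ℤ)^2*t) ∣ ε' (τ 1) * (1 - bf (τ 1)*((r:ℤ)*t))
      - (1 + (r:ℤ)*t) * (ε' (τ 0) * (1 - bf (τ 0)*((r:ℤ)*t))) := by
    have heq : ∑ j, (![-(1 + (r:ℤ)*t), 1, 0] : Fin 3 → ℤ) j * (ε' (τ j) * (1 - bf (τ j) * ((r:ℤ)*t)))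
        = ε' (τ 1) * (1 - bf (τ 1)*((r:ℤ)*t))
          - (1 + (r:ℤ)*t) * (ε' (τ 0) * (1 - bf (τ 0)*((r:ℤ)*t))) := by
      simp [Fin.sum_univ_three]; ring
    rwa [heq] at hA0
  have hB : ((r:ℤ)^2*t) ∣ ε' (τ 2) * (1 - bf (τ 2)*((r:ℤ)*t))
      - (1 + 3*((r:ℤ)*t)) * (ε' (τ 0) * (1 - bf (τ 0)*((r:ℤ)*t))) := by
    have heq : ∑ j, (![-(1 + 3*(r:ℤ)*t), 0, 1] : Fin 3 → ℤ) j * (ε' (τ j) * (1 - bf (τ j) * ((r:ℤ)*t)))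
        = ε' (τ 2) * (1 - bf (τ 2)*((r:ℤ)*t))
          - (1 + 3*((r:ℤ)*t)) * (ε' (τ 0) * (1 - bf (τ 0)*((r:ℤ)*t))) := by
      simp [Fin.sum_univ_three]; ring
    rwa [heq] at hB0
  have h3cases : ∀ i : Fin 3, i = 0 ∨ i = 1 ∨ i = 2 := by decide
  have hτinj : Function.Injective τ := fun a b h => σ.symm.injective h
  have hbperm : (bf (τ 0) = 0 ∧ bf (τ 1) = 1 ∧ bf (τ 2) = 3) ∨
      (bf (τ 0) = 0 ∧ bf (τ 1) = 3 ∧ bf (τ 2) = 1) ∨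
      (bf (τ 0) = 1 ∧ bf (τ 1) = 0 ∧ bf (τ 2) = 3) ∨
      (bf (τ 0) = 1 ∧ bf (τ 1) = 3 ∧ bf (τ 2) = 0) ∨
      (bf (τ 0) = 3 ∧ bf (τ 1) = 0 ∧ bf (τ 2) = 1) ∨
      (bf (τ 0) = 3 ∧ bf (τ 1) = 1 ∧ bf (τ 2) = 0) := by
    rcases h3cases (τ 0) with h0|h0|h0 <;> rcases h3cases (τ 1) with h1|h1|h1 <;>
      rcases h3cases (τ 2) with h2|h2|h2 <;>
      first
        | exact absurd (hτinj (h0.trans h1.symm)) (by decide)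
        | exact absurd (hτinj (h0.trans h2.symm)) (by decide)
        | exact absurd (hτinj (h1.trans h2.symm)) (by decide)
        | (rw [h0, h1, h2]; norm_num [hbf] <;> rfl)
  exact partC (r:ℤ) (t:ℤ) (by exact_mod_cast hr) (by exact_mod_cast ht)
    (bf (τ 0)) (bf (τ 1)) (bf (τ 2)) (ε' (τ 0)) (ε' (τ 1)) (ε' (τ 2))
    hbperm (hd (τ 0)) (hd (τ 1)) (hd (τ 2)) hA hB
end

section
/- Let r and t be positive integers with r not divisible by 3. Then there exists an integer d such that d³ ≡ 1 + rt (mod r²t); that is, 1 + rt is a cube in the ring ℤ/r²tℤ. -/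
/-- For `r` not divisible by `3`, `1 + rt` is a cube modulo `r²t`. -/
theorem one_add_rt_is_cube (r t : ℕ) (hr : 1 ≤ r) (ht : 1 ≤ t) (h3 : ¬ (3 ∣ r)) :
    ∃ d : ℤ, d ^ 3 ≡ 1 + (r : ℤ) * t [ZMOD ((r : ℤ) ^ 2 * t)] := by
  have h2 : r % 3 = 1 ∨ r % 3 = 2 := by omega
  have hk : ∃ k m : ℤ, 3 * k - 1 = (r : ℤ) * m := by
    have hd := Nat.div_add_mod r 3
    rcases h2 with h2 | h2
    · exact ⟨-(r / 3 : ℕ), -1, by push_cast; omega⟩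
    · exact ⟨(r / 3 : ℕ) + 1, 1, by push_cast; omega⟩
  obtain ⟨k, m, hm⟩ := hk
  refine ⟨1 + k * r * t, (Int.modEq_iff_dvd.mpr ?_).symm⟩
  exact ⟨m + 3 * k ^ 2 * t + k ^ 3 * r * t ^ 2, by linear_combination ((r : ℤ) * t) * hm⟩
end
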